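/- arXiv:1106.1056 — 11 statements merged into one kernel-verified Lean document; each statement's English description precedes it below -/
import Mathlib

section
/- Let P and P' be orthogonal projections onto subspaces E and E' of R^p. Then the sequence of iterates (P P')^n converges, as n → ∞, to the orthogonal projection R onto the intersection E ∩ E'. -/
open Filter

section Aux

variable {p : ℕ}

private lemma aux_proj_le (F : Submodule ℝ (EuclideanSpace ℝ (Fin p)))
    (x : EuclideanSpace ℝ (Fin p)) :
    ‖((Submodule.orthogonalProjectionOnto F x : F) : EuclideanSpace ℝ (Fin p))‖ ≤ ‖x‖ := by
  have h := Submodule.norm_sq_eq_add_norm_sq_projection x F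
  have h1 : ‖((Submodule.orthogonalProjectionOnto F x : F) : EuclideanSpace ℝ (Fin p))‖
      = ‖Submodule.orthogonalProjectionOnto F x‖ := rfl
  nlinarith [norm_nonneg ((Submodule.orthogonalProjectionOnto F x : F) : EuclideanSpace ℝ (Fin p)),
    norm_nonneg x, sq_nonneg ‖Submodule.orthogonalProjectionOnto Fᗮ x‖]

private lemma aux_proj_lt (F : Submodule ℝ (EuclideanSpace ℝ (Fin p)))
    {x : EuclideanSpace ℝ (Fin p)} (hx : x ∉ F) :
    ‖((Submodule.orthogonalProjectionOnto F x : F) : EuclideanSpace ℝ (Fin p))‖ < ‖x‖ := by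
  rcases lt_or_eq_of_le (aux_proj_le F x) with h | h
  · exact h
  · exfalso
    have hp := Submodule.norm_sq_eq_add_norm_sq_projection x F
    have h1 : ‖((Submodule.orthogonalProjectionOnto F x : F) : EuclideanSpace ℝ (Fin p))‖
        = ‖Submodule.orthogonalProjectionOnto F x‖ := rfl
    have h' : ‖Submodule.orthogonalProjectionOnto F x‖ = ‖x‖ := by rw [← h1]; exact h
    have h2' : ‖Submodule.orthogonalProjectionOnto Fᗮ x‖ ^ 2 = 0 := by rw [h'] at hp; linarith
    have h2 : ‖Submodule.orthogonalProjectionOnto Fᗮ x‖ = 0 := pow_eq_zero_iff two_ne_zero |>.mp h2'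
    have h3 : ((Submodule.orthogonalProjectionOnto Fᗮ x : Fᗮ) : EuclideanSpace ℝ (Fin p)) = 0 := by
      have : ‖((Submodule.orthogonalProjectionOnto Fᗮ x : Fᗮ) : EuclideanSpace ℝ (Fin p))‖ = 0 := h2
      simpa using this
    rw [Submodule.coe_orthogonalProjectionOnto_apply, Submodule.starProjection_orthogonal_val, sub_eq_zero] at h3
    exact hx (h3 ▸ Submodule.starProjection_apply_mem F x)

end Aux

/-- The iterates `(P P')ⁿ` of the composition of two orthogonal projections converge to the
orthogonal projection onto the intersection of the two subspaces. -/
theorem alternating_projections_tendsto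
    (p : ℕ) (E E' : Submodule ℝ (EuclideanSpace ℝ (Fin p))) :
    Tendsto
      (fun n : ℕ =>
        ((E.subtypeL ∘L E.orthogonalProjectionOnto) ∘L
          (E'.subtypeL ∘L E'.orthogonalProjectionOnto)) ^ n)
      atTop
      (nhds ((E ⊓ E').subtypeL ∘L (E ⊓ E').orthogonalProjectionOnto)) := by
  set P : EuclideanSpace ℝ (Fin p) →L[ℝ] EuclideanSpace ℝ (Fin p) := E.subtypeL ∘L Submodule.orthogonalProjectionOnto E with hPdef
  set Q : EuclideanSpace ℝ (Fin p) →L[ℝ] EuclideanSpace ℝ (Fin p) := E'.subtypeL ∘L Submodule.orthogonalProjectionOnto E' with hQdef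
  set R : EuclideanSpace ℝ (Fin p) →L[ℝ] EuclideanSpace ℝ (Fin p) := (E ⊓ E').subtypeL ∘L Submodule.orthogonalProjectionOnto (E ⊓ E') with hRdef
  have hPapp : ∀ x : EuclideanSpace ℝ (Fin p), P x = ((Submodule.orthogonalProjectionOnto E x : E) : EuclideanSpace ℝ (Fin p)) := fun x => rfl
  have hQapp : ∀ x : EuclideanSpace ℝ (Fin p), Q x = ((Submodule.orthogonalProjectionOnto E' x : E') : EuclideanSpace ℝ (Fin p)) := fun x => rfl
  have hRapp : ∀ x : EuclideanSpace ℝ (Fin p), R x = (Submodule.orthogonalProjectionOnto (E ⊓ E') x : EuclideanSpace ℝ (Fin p)) := fun x => rfl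
  have hPfix : ∀ x : EuclideanSpace ℝ (Fin p), x ∈ E → P x = x := fun x hx => by
    rw [hPapp]; exact Submodule.starProjection_eq_self_iff.mpr hx
  have hQfix : ∀ x : EuclideanSpace ℝ (Fin p), x ∈ E' → Q x = x := fun x hx => by
    rw [hQapp]; exact Submodule.starProjection_eq_self_iff.mpr hx
  have hRfix : ∀ x : EuclideanSpace ℝ (Fin p), x ∈ E ⊓ E' → R x = x := fun x hx => by
    rw [hRapp]; exact Submodule.starProjection_eq_self_iff.mpr hx
  have hRmem : ∀ x : EuclideanSpace ℝ (Fin p), R x ∈ E ⊓ E' := fun x => (Submodule.orthogonalProjectionOnto (E ⊓ E') x).2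
  -- algebraic identities
  have hPR : P * R = R :=
    ContinuousLinearMap.ext fun x => hPfix (R x) (hRmem x).1
  have hQR : Q * R = R :=
    ContinuousLinearMap.ext fun x => hQfix (R x) (hRmem x).2
  have hRR : R * R = R :=
    ContinuousLinearMap.ext fun x => hRfix (R x) (hRmem x)
  have hTR : (P * Q) * R = R := by
    rw [mul_assoc, hQR, hPR]
  have hstarP : star P = P := (isSelfAdjoint_starProjection E).star_eq
  have hstarQ : star Q = Q := (isSelfAdjoint_starProjection E').star_eq
  have hstarR : star R = R := (isSelfAdjoint_starProjection (E ⊓ E')).star_eq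
  have hRT : R * (P * Q) = R := by
    have h1 : star (R * (P * Q)) = R := by
      rw [star_mul, star_mul, hstarP, hstarQ, hstarR, mul_assoc, hPR, hQR]
    calc R * (P * Q) = star (star (R * (P * Q))) := (star_star _).symm
      _ = star R := by rw [h1]
      _ = R := hstarR
  have hTnR : ∀ n : ℕ, (P * Q) ^ n * R = R := by
    intro n
    induction n with
    | zero => simp
    | succ n ih => rw [pow_succ, mul_assoc, hTR, ih]
  set S : EuclideanSpace ℝ (Fin p) →L[ℝ] EuclideanSpace ℝ (Fin p) := P * Q - R with hSdef
  have hSpow : ∀ n : ℕ, S ^ (n + 1) = (P * Q) ^ (n + 1) - R := by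
    intro n
    induction n with
    | zero => simp [hSdef]
    | succ n ih =>
      rw [pow_succ, ih, hSdef, sub_mul, mul_sub, mul_sub, hTnR, hRT, hRR, ← pow_succ]
      abel
  -- pointwise strict contraction on nonzero vectors
  have hSlt : ∀ x : EuclideanSpace ℝ (Fin p), x ≠ 0 → ‖S x‖ < ‖x‖ := by
    intro x hx
    set y : EuclideanSpace ℝ (Fin p) := x - R x with hydef
    have hyorth : y ∈ (E ⊓ E')ᗮ := by
      rw [hydef, hRapp]
      exact Submodule.sub_starProjection_mem_orthogonal x
    have hSx : S x = P (Q y) := by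
      have h1 : ((P * Q) * R) x = R x := by rw [hTR]
      have : S x = (P * Q) x - (P * Q) (R x) := by
        simp only [hSdef, ContinuousLinearMap.sub_apply]
        rw [show (P * Q) (R x) = ((P * Q) * R) x from rfl, hTR]
      rw [this, ← map_sub, ← hydef]
      rfl
    have hyx : ‖y‖ ≤ ‖x‖ := by
      have hp := Submodule.norm_sq_eq_add_norm_sq_projection x (E ⊓ E')
      have h2 : (Submodule.orthogonalProjectionOnto (E ⊓ E')ᗮ x : EuclideanSpace ℝ (Fin p)) = y := by
        rw [Submodule.coe_orthogonalProjectionOnto_apply, Submodule.starProjection_orthogonal_val, hydef, hRapp, Submodule.starProjection_apply]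
      have h3 : ‖Submodule.orthogonalProjectionOnto (E ⊓ E')ᗮ x‖ = ‖y‖ := by
        rw [← h2]; rfl
      have h4 : ‖Submodule.orthogonalProjectionOnto (E ⊓ E') x‖ = ‖R x‖ := by rw [hRapp]; rfl
      nlinarith [norm_nonneg y, norm_nonneg x, sq_nonneg ‖R x‖]
    by_cases hy0 : y = 0
    · rw [hSx, hy0, map_zero, map_zero, norm_zero]
      exact norm_pos_iff.mpr hx
    · have hynotin : y ∉ E ⊓ E' := by
        intro hmem
        exact hy0 (inner_self_eq_zero.mp (hyorth y hmem))
      by_cases hyE' : y ∈ E'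
      · have hyE : y ∉ E := fun hyE => hynotin ⟨hyE, hyE'⟩
        rw [hSx, hQfix y hyE', hPapp]
        exact lt_of_lt_of_le (aux_proj_lt E hyE) hyx
      · have h5 : ‖Q y‖ < ‖y‖ := by rw [hQapp]; exact aux_proj_lt E' hyE'
        have h6 : ‖P (Q y)‖ ≤ ‖Q y‖ := by rw [hPapp]; exact aux_proj_le E (Q y)
        rw [hSx]
        exact lt_of_le_of_lt h6 (lt_of_lt_of_le h5 hyx)
  -- operator norm < 1
  have hSnorm : ‖S‖ < 1 := by
    by_cases hns : Nontrivial (EuclideanSpace ℝ (Fin p))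
    · obtain ⟨x₀, hx₀mem, hmax⟩ := (isCompact_sphere (0 : EuclideanSpace ℝ (Fin p)) 1).exists_isMaxOn
        (NormedSpace.sphere_nonempty.mpr zero_le_one)
        ((continuous_norm.comp S.continuous).continuousOn)
      have hx₀ : ‖x₀‖ = 1 := mem_sphere_zero_iff_norm.mp hx₀mem
      have hx₀ne : x₀ ≠ 0 := by
        intro h; rw [h, norm_zero] at hx₀; exact one_ne_zero hx₀.symm
      have hc : ‖S x₀‖ < 1 := by
        have := hSlt x₀ hx₀ne; rwa [hx₀] at this
      have hle : ‖S‖ ≤ ‖S x₀‖ := by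
        apply ContinuousLinearMap.opNorm_le_of_unit_norm (norm_nonneg _)
        intro x hx1
        exact hmax (mem_sphere_zero_iff_norm.mpr hx1)
      exact lt_of_le_of_lt hle hc
    · haveI : Subsingleton (EuclideanSpace ℝ (Fin p)) := not_nontrivial_iff_subsingleton.mp hns
      have hS0 : S = 0 := ContinuousLinearMap.ext fun x => by
        rw [Subsingleton.elim x 0]; simp
      rw [hS0, norm_zero]; exact zero_lt_one
  -- conclude
  have hpow : Tendsto (fun n : ℕ => ‖S‖ ^ n) atTop (nhds 0) :=
    tendsto_pow_atTop_nhds_zero_of_lt_one (norm_nonneg S) hSnorm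
  have hSn : Tendsto (fun n : ℕ => S ^ n) atTop (nhds 0) := by
    refine squeeze_zero_norm' ?_ hpow
    filter_upwards [eventually_ge_atTop 1] with n hn
    exact norm_pow_le' S hn
  have hfinal : Tendsto (fun n : ℕ => S ^ n + R) atTop (nhds R) := by
    have := hSn.add (tendsto_const_nhds (x := R) (f := atTop))
    rwa [zero_add] at this
  apply hfinal.congr'
  filter_upwards [eventually_ge_atTop 1] with n hn
  obtain ⟨m, rfl⟩ := Nat.exists_eq_add_of_le hn
  have : (1 : ℕ) + m = m + 1 := by omega
  rw [this, hSpow m]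
  show (P * Q) ^ (m + 1) - R + R = (P ∘L Q) ^ (m + 1)
  rw [sub_add_cancel]
  rfl
end

section
/- Let Z be an integrable random vector in R^p, Y a random variable, and P_c an orthogonal projection with Q_c = I − P_c. Suppose (i) for every measurable set A, P(Y ∈ A | Z) = P(Y ∈ A | P_c Z) a.s. (existence of the central subspace with projection P_c), and (ii) the linearity condition Q_c E[Z | P_c Z] = 0 a.s. Then for every measurable function ψ : R → R with E|Z ψ(Y)| < ∞, the vector E[Z ψ(Y)] lies in the range of P_c, i.e. Q_c E[Z ψ(Y)] = 0. -/
open MeasureTheory Matrix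

/-- TF1 basic theorem: under existence of the central subspace (conditional independence of `Y`
and `Z` given `P_c Z`, expressed via conditional probabilities of events `{Y ∈ A}`) and the
linearity condition, `E[Z ψ(Y)]` lies in the central subspace, i.e. `Q_c E[Z ψ(Y)] = 0`. -/
theorem tf1_mean_in_central_subspace
    {Ω : Type*} [mΩ : MeasurableSpace Ω] (μ : Measure Ω) [IsProbabilityMeasure μ]
    (p : ℕ) (Z : Ω → (Fin p → ℝ)) (hZmeas : Measurable Z)
    (hZint : ∀ i, Integrable (fun ω => Z ω i) μ)
    (Y : Ω → ℝ) (hYmeas : Measurable Y)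
    (Pc : Matrix (Fin p) (Fin p) ℝ) (hPcsymm : Pc.IsSymm) (hPcidem : Pc * Pc = Pc)
    -- the σ-algebras generated by `Z` and by `P_c Z`
    (mZ : MeasurableSpace Ω) (hmZ : mZ = MeasurableSpace.comap Z inferInstance)
    (m : MeasurableSpace Ω)
    (hm : m = MeasurableSpace.comap (fun ω => Pc.mulVec (Z ω)) inferInstance)
    -- (i) existence of the CS: `P(Y ∈ A | Z) = P(Y ∈ A | P_c Z)` a.s. for all measurable `A`
    (hCS : ∀ A : Set ℝ, MeasurableSet A →
      μ[fun ω => Set.indicator A (fun _ => (1 : ℝ)) (Y ω) | mZ]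
        =ᵐ[μ] μ[fun ω => Set.indicator A (fun _ => (1 : ℝ)) (Y ω) | m])
    -- (ii) linearity condition: `Q_c E[Z | P_c Z] = 0` a.s.
    (hlin : ∀ᵐ ω ∂μ, (1 - Pc).mulVec (fun i => (μ[fun ω' => Z ω' i | m]) ω) = 0) :
    ∀ ψ : ℝ → ℝ, Measurable ψ →
      (∀ i, Integrable (fun ω => Z ω i * ψ (Y ω)) μ) →
      (1 - Pc).mulVec (fun i => ∫ ω, Z ω i * ψ (Y ω) ∂μ) = 0 := by
  intro ψ hψ hψint
  letI : MeasurableSpace Ω := mΩ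
  set Q : Matrix (Fin p) (Fin p) ℝ := 1 - Pc with hQ
  -- the σ-algebras are sub-σ-algebras of the ambient one
  have hmZ_le : mZ ≤ mΩ := hmZ.trans_le hZmeas.comap_le
  have hPcZ_meas : Measurable (fun ω => Pc.mulVec (Z ω)) := by
    apply measurable_pi_lambda
    intro j
    have : (fun ω => Pc.mulVec (Z ω) j) = fun ω => ∑ i, Pc j i * Z ω i := by
      funext ω; simp [Matrix.mulVec, dotProduct]
    rw [this]
    exact Finset.measurable_sum _ fun i _ =>
      (((measurable_pi_apply i).comp hZmeas).const_mul (Pc j i))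
  have hm_le : m ≤ mΩ := hm.trans_le hPcZ_meas.comap_le
  set mY : MeasurableSpace Ω := MeasurableSpace.comap Y inferInstance with hmYdef
  have hmY_le : mY ≤ mΩ := hYmeas.comap_le
  letI : MeasurableSpace Ω := mΩ
  -- the "residual" random variables W j = (Q Z)_j
  set W : Fin p → Ω → ℝ := fun j ω => ∑ i, Q j i * Z ω i with hWdef
  have hW_mZ : ∀ j, StronglyMeasurable[mZ] (W j) := by
    intro j
    have hZmZ : Measurable[mZ] Z := Measurable.of_comap_le hmZ.ge
    exact (Finset.measurable_sum _ fun i _ =>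
      ((((measurable_pi_apply i).comp hZmZ).const_mul (Q j i)) :
        Measurable[mZ] fun ω => Q j i * Z ω i)).stronglyMeasurable
  have hW_int : ∀ j, Integrable (W j) μ := fun j =>
    integrable_finset_sum _ fun i _ => (hZint i).const_mul _
  -- conditional expectation of W j given m is 0 a.e.
  have hcondW : ∀ j, (μ[W j | m]) =ᵐ[μ] 0 := by
    intro j
    have hsum : W j = ∑ i, fun ω => Q j i * Z ω i := by
      funext ω; simp [hWdef]
    have h1 : μ[W j | m] =ᵐ[μ] ∑ i, μ[fun ω => Q j i * Z ω i | m] := by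
      rw [hsum]
      exact condExp_finset_sum (fun i _ => (hZint i).const_mul _) m
    have h2 : ∀ i : Fin p,
        μ[fun ω => Q j i * Z ω i | m] =ᵐ[μ] fun ω => Q j i * (μ[fun ω' => Z ω' i | m]) ω := by
      intro i
      have := condExp_smul (μ := μ) (m := m) (Q j i) (fun ω => Z ω i)
      refine this.trans (ae_of_all _ fun ω => ?_)
      simp
    have h3 : ∀ᵐ ω ∂μ, ∀ i : Fin p,
        (μ[fun ω' => Q j i * Z ω' i | m]) ω = Q j i * (μ[fun ω' => Z ω' i | m]) ω :=
      (ae_all_iff).mpr fun i => h2 i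
    filter_upwards [h1, h3, hlin] with ω hω1 hω3 hωlin
    have : (∑ i, μ[fun ω' => Q j i * Z ω' i | m]) ω
        = ∑ i, Q j i * (μ[fun ω' => Z ω' i | m]) ω := by
      rw [Finset.sum_apply]
      exact Finset.sum_congr rfl fun i _ => hω3 i
    have hvec := congrFun hωlin j
    simp only [Matrix.mulVec, dotProduct, Pi.zero_apply] at hvec
    rw [hω1, this]
    simpa using hvec
  -- key step: set integrals of W j over σ(Y)-measurable sets vanish
  have key : ∀ j, ∀ s : Set Ω, MeasurableSet[mY] s → ∫ ω in s, W j ω ∂μ = 0 := by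
    intro j s hs
    obtain ⟨A, hA, rfl⟩ := hs
    set f : Ω → ℝ := fun ω => Set.indicator A (fun _ => (1 : ℝ)) (Y ω) with hfdef
    have hf_eq : f = (Y ⁻¹' A).indicator (fun _ => (1 : ℝ)) := by
      funext ω; by_cases h : Y ω ∈ A <;> simp [hfdef, Set.indicator, h]
    have hf_int : Integrable f μ := by
      rw [hf_eq]; exact (integrable_const (1 : ℝ)).indicator (hYmeas hA)
    have hf_bound : ∀ᵐ ω ∂μ, ‖f ω‖ ≤ 1 := by
      refine ae_of_all _ fun ω => ?_
      by_cases h : Y ω ∈ A <;> simp [hfdef, Set.indicator, h]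
    have hWf_int : Integrable (W j * f) μ := by
      have : Integrable (fun ω => f ω * W j ω) μ := (hW_int j).bdd_mul hf_int.1 hf_bound
      exact this.congr (ae_of_all _ fun ω => mul_comm _ _)
    -- rewrite the set integral as the integral of W * f
    have e1 : ∫ ω in Y ⁻¹' A, W j ω ∂μ = ∫ ω, (W j * f) ω ∂μ := by
      rw [← integral_indicator (hYmeas hA)]
      congr 1
      funext ω
      by_cases h : Y ω ∈ A <;> simp [hfdef, Set.indicator, h]
    -- tower + pull-out with respect to mZ, then use the CS hypothesis
    have e2 : ∫ ω, (W j * f) ω ∂μ = ∫ ω, W j ω * (μ[f | m]) ω ∂μ := by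
      rw [← integral_condExp hmZ_le]
      refine integral_congr_ae ((condExp_mul_of_stronglyMeasurable_left (hW_mZ j) hWf_int hf_int).trans ?_)
      filter_upwards [hCS A hA] with ω hω
      simp only [Pi.mul_apply]
      rw [hω]
    -- pull-out with respect to m and use the linearity condition
    set h : Ω → ℝ := μ[f | m] with hhdef
    have hh_nonneg : 0 ≤ᵐ[μ] h := condExp_nonneg (ae_of_all _ fun ω => by
      by_cases hmem : Y ω ∈ A <;> simp [hfdef, Set.indicator, hmem])
    have hh_le_one : h ≤ᵐ[μ] fun _ => (1 : ℝ) := by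
      have hmono := condExp_mono (m := m) (μ := μ) hf_int (integrable_const (1 : ℝ))
        (ae_of_all _ fun ω => by
          by_cases hmem : Y ω ∈ A <;> simp [hfdef, Set.indicator, hmem])
      have hconst : μ[fun _ : Ω => (1 : ℝ) | m] = fun _ => (1 : ℝ) := condExp_const hm_le 1
      rw [hconst] at hmono
      exact hmono
    have hh_bound : ∀ᵐ ω ∂μ, ‖h ω‖ ≤ 1 := by
      filter_upwards [hh_nonneg, hh_le_one] with ω h0 h1
      rw [Real.norm_eq_abs, abs_le]
      refine ⟨?_, by simpa using h1⟩; have := h0; simp only [Pi.zero_apply] at this; linarith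
    have hh_meas : AEStronglyMeasurable h μ :=
      (stronglyMeasurable_condExp.mono hm_le).aestronglyMeasurable
    have hhW_int : Integrable (h * W j) μ := (hW_int j).bdd_mul hh_meas hh_bound
    have e3 : ∫ ω, W j ω * h ω ∂μ = 0 := by
      have hcomm : (fun ω => W j ω * h ω) = (h * W j) := by
        funext ω; exact mul_comm _ _
      rw [hcomm, ← integral_condExp hm_le]
      refine integral_eq_zero_of_ae ?_
      refine (condExp_mul_of_stronglyMeasurable_left stronglyMeasurable_condExp hhW_int (hW_int j)).trans ?_
      filter_upwards [hcondW j] with ω hω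
      simp [hω]
    rw [e1, e2, e3]
  -- hence E[W j | σ(Y)] = 0 a.e.
  have hcondWY : ∀ j, (μ[W j | mY]) =ᵐ[μ] 0 := by
    intro j
    refine (ae_eq_condExp_of_forall_setIntegral_eq hmY_le (hW_int j)
      (fun s _ _ => (integrable_zero _ _ _).integrableOn)
      (fun s hs _ => by rw [key j s hs]; simp)
      (stronglyMeasurable_const.aestronglyMeasurable)).symm
  -- conclude
  funext j
  have hY_mY : Measurable[mY] Y := Measurable.of_comap_le hmYdef.ge
  have hψY_mY : StronglyMeasurable[mY] (fun ω => ψ (Y ω)) :=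
    (hψ.comp hY_mY).stronglyMeasurable
  have hprod_eq : ((fun ω => ψ (Y ω)) * W j) = fun ω => ∑ i, Q j i * (Z ω i * ψ (Y ω)) := by
    funext ω
    simp only [Pi.mul_apply, hWdef]
    rw [mul_comm, Finset.sum_mul]
    exact Finset.sum_congr rfl fun i _ => by ring
  have hprod_int : Integrable ((fun ω => ψ (Y ω)) * W j) μ := by
    rw [hprod_eq]
    exact integrable_finset_sum _ fun i _ => (hψint i).const_mul _
  have hzero : ∫ ω, ((fun ω => ψ (Y ω)) * W j) ω ∂μ = 0 := by
    rw [← integral_condExp hmY_le]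
    refine integral_eq_zero_of_ae ?_
    refine (condExp_mul_of_stronglyMeasurable_left hψY_mY hprod_int (hW_int j)).trans ?_
    filter_upwards [hcondWY j] with ω hω
    simp [hω]
  have : Q.mulVec (fun i => ∫ ω, Z ω i * ψ (Y ω) ∂μ) j
      = ∫ ω, ((fun ω => ψ (Y ω)) * W j) ω ∂μ := by
    rw [hprod_eq]
    rw [integral_finset_sum _ fun i _ => (hψint i).const_mul _]
    simp only [Matrix.mulVec, dotProduct]
    exact Finset.sum_congr rfl fun i _ => (integral_const_mul _ _).symm
  rw [hQ] at this
  rw [this, hzero]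
  rfl
end

section
/- Suppose the distribution of a random vector Z in R^p is invariant under the orthogonal reflection through a subspace E_c, i.e. Z has the same distribution as (2P_c − I)Z where P_c is the orthogonal projection onto E_c. Then the linearity condition holds: Q_c E[Z | P_c Z] = 0 almost surely, where Q_c = I − P_c. -/
open MeasureTheory Matrix

/-- If the distribution of `Z` is invariant under the orthogonal reflection `2 P_c - I` through
the subspace `E_c`, then the linearity condition `Q_c E[Z | P_c Z] = 0` a.s. holds. -/
theorem reflection_invariance_implies_linearity_condition
    {Ω : Type*} [mΩ : MeasurableSpace Ω] (μ : Measure Ω) [IsProbabilityMeasure μ]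
    (p : ℕ) (Z : Ω → (Fin p → ℝ)) (hZmeas : Measurable Z)
    (hZint : ∀ i, Integrable (fun ω => Z ω i) μ)
    (Pc : Matrix (Fin p) (Fin p) ℝ) (hPcsymm : Pc.IsSymm) (hPcidem : Pc * Pc = Pc)
    -- distributional invariance `Z =d (2 P_c - I) Z`
    (hsym : Measure.map Z μ = Measure.map (fun ω => ((2 : ℝ) • Pc - 1).mulVec (Z ω)) μ)
    (m : MeasurableSpace Ω)
    (hm : m = MeasurableSpace.comap (fun ω => Pc.mulVec (Z ω)) inferInstance) :
    ∀ᵐ ω ∂μ, (1 - Pc).mulVec (fun i => (μ[fun ω' => Z ω' i | m]) ω) = 0 := by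
  subst hm
  set S : Matrix (Fin p) (Fin p) ℝ := (2 : ℝ) • Pc - 1 with hS
  have hPcS : Pc * S = Pc := by
    rw [hS, Matrix.mul_sub, Matrix.mul_smul, hPcidem, Matrix.mul_one, two_smul,
      add_sub_cancel_right]
  have hQS : (1 - Pc) * S = -(1 - Pc) := by
    rw [Matrix.sub_mul, Matrix.one_mul, hPcS, hS, two_smul]
    abel
  -- measurability of `mulVec`
  have hmv : ∀ M : Matrix (Fin p) (Fin p) ℝ, Measurable fun x : Fin p → ℝ => M.mulVec x := by
    intro M
    refine measurable_pi_iff.mpr fun i => ?_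
    simpa [Matrix.mulVec, dotProduct] using
      Finset.measurable_sum Finset.univ fun j _ => (by fun_prop : Measurable fun x : Fin p → ℝ => M i j * x j)
  have hWmeas : Measurable fun ω => S.mulVec (Z ω) := (hmv S).comp hZmeas
  have hmle : MeasurableSpace.comap (fun ω => Pc.mulVec (Z ω)) inferInstance ≤ mΩ :=
    ((hmv Pc).comp hZmeas).comap_le
  haveI : SigmaFinite (μ.trim hmle) := inferInstance
  -- integrability of components of `S Z`
  have hSZint : ∀ i, Integrable (fun ω => S.mulVec (Z ω) i) μ := by
    intro i
    have : (fun ω => S.mulVec (Z ω) i) = fun ω => ∑ j, S i j * Z ω j := by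
      funext ω; simp [Matrix.mulVec, dotProduct]
    rw [this]
    exact integrable_finset_sum _ fun j _ => (hZint j).const_mul (S i j)
  -- key step : E[Z_i | MeasurableSpace.comap (fun ω => Pc.mulVec (Z ω)) inferInstance] = E[(SZ)_i | MeasurableSpace.comap (fun ω => Pc.mulVec (Z ω)) inferInstance] a.e.
  have key : ∀ i, (μ[fun ω' => Z ω' i | MeasurableSpace.comap (fun ω => Pc.mulVec (Z ω)) inferInstance]) =ᵐ[μ] (μ[fun ω' => S.mulVec (Z ω') i | MeasurableSpace.comap (fun ω => Pc.mulVec (Z ω)) inferInstance]) := by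
    intro i
    refine ae_eq_condExp_of_forall_setIntegral_eq hmle (hSZint i)
      (fun s _ _ => integrable_condExp.integrableOn) (fun s hs hμs => ?_)
      (StronglyMeasurable.aestronglyMeasurable stronglyMeasurable_condExp)
    rw [setIntegral_condExp hmle (hZint i) hs]
    -- now show ∫_s Z_i = ∫_s (SZ)_i using the distributional invariance
    obtain ⟨B, hB, rfl⟩ := hs
    set B' : Set (Fin p → ℝ) := Pc.mulVec ⁻¹' B with hB'def
    have hB' : MeasurableSet B' := hmv Pc hB
    have hsZ : (fun ω => Pc.mulVec (Z ω)) ⁻¹' B = Z ⁻¹' B' := rfl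
    have hsW : (fun ω => Pc.mulVec (Z ω)) ⁻¹' B = (fun ω => S.mulVec (Z ω)) ⁻¹' B' := by
      ext ω
      simp only [Set.mem_preimage, hB'def, Matrix.mulVec_mulVec, hPcS]
    have haesm : AEStronglyMeasurable (fun x : Fin p → ℝ => x i) (Measure.map Z μ) :=
      (measurable_pi_apply i).aestronglyMeasurable
    have haesm' : AEStronglyMeasurable (fun x : Fin p → ℝ => x i)
        (Measure.map (fun ω => S.mulVec (Z ω)) μ) :=
      (measurable_pi_apply i).aestronglyMeasurable
    calc ∫ ω in (fun ω => Pc.mulVec (Z ω)) ⁻¹' B, Z ω i ∂μ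
        = ∫ x in B', x i ∂(Measure.map Z μ) := by
          rw [setIntegral_map hB' haesm hZmeas.aemeasurable, hsZ]
      _ = ∫ x in B', x i ∂(Measure.map (fun ω => S.mulVec (Z ω)) μ) := by rw [hsym]
      _ = ∫ ω in (fun ω => Pc.mulVec (Z ω)) ⁻¹' B, S.mulVec (Z ω) i ∂μ := by
          rw [setIntegral_map hB' haesm' hWmeas.aemeasurable, hsW]
  -- linearity of conditional expectation
  have hlin : ∀ i, (μ[fun ω' => S.mulVec (Z ω') i | MeasurableSpace.comap (fun ω => Pc.mulVec (Z ω)) inferInstance]) =ᵐ[μ]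
      fun ω => ∑ j, S i j * (μ[fun ω' => Z ω' j | MeasurableSpace.comap (fun ω => Pc.mulVec (Z ω)) inferInstance]) ω := by
    intro i
    have h1 : (fun ω' => S.mulVec (Z ω') i)
        = ∑ j, (S i j) • (fun ω' => Z ω' j) := by
      funext ω; simp [Matrix.mulVec, dotProduct, Finset.sum_apply]
    rw [h1]
    refine (condExp_finset_sum (fun j _ => (hZint j).smul (S i j)) _).trans ?_
    have hcomb : ∀ᵐ ω ∂μ, ∀ j,
        (μ[(S i j) • fun ω' => Z ω' j | MeasurableSpace.comap (fun ω => Pc.mulVec (Z ω)) inferInstance]) ω = (S i j) • (μ[fun ω' => Z ω' j | MeasurableSpace.comap (fun ω => Pc.mulVec (Z ω)) inferInstance]) ω :=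
      ae_all_iff.mpr fun j => condExp_smul (S i j) (fun ω' => Z ω' j) _
    filter_upwards [hcomb] with ω hω
    simp [Finset.sum_apply, hω, smul_eq_mul]
  have hall : ∀ᵐ ω ∂μ, ∀ i, (μ[fun ω' => Z ω' i | MeasurableSpace.comap (fun ω => Pc.mulVec (Z ω)) inferInstance]) ω
      = ∑ j, S i j * (μ[fun ω' => Z ω' j | MeasurableSpace.comap (fun ω => Pc.mulVec (Z ω)) inferInstance]) ω :=
    ae_all_iff.mpr fun i => (key i).trans (hlin i)
  filter_upwards [hall] with ω hω
  set v : Fin p → ℝ := fun i => (μ[fun ω' => Z ω' i | MeasurableSpace.comap (fun ω => Pc.mulVec (Z ω)) inferInstance]) ω with hv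
  have hv2 : v = S.mulVec v := by
    funext i
    simpa [Matrix.mulVec, dotProduct] using hω i
  have hneg : (1 - Pc).mulVec v = -((1 - Pc).mulVec v) := by
    conv_lhs => rw [hv2, Matrix.mulVec_mulVec, hQS, Matrix.neg_mulVec]
  funext i
  have h := congrFun hneg i
  simp only [Pi.neg_apply] at h
  have : (1 - Pc).mulVec v i = 0 := by linarith
  simpa using this
end

section
/- If Z is a spherically distributed random vector in R^p with finite second moment (i.e. HZ has the same distribution as Z for every orthogonal matrix H), then for every orthogonal projection P_c onto a subspace E_c, Var(Z | P_c Z) = λ Q_c almost surely for some real random variable λ, where Q_c = I − P_c (the diagonal conditional variance condition). -/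
open MeasureTheory Matrix

section Aux

lemma conj_entry {p : ℕ} (A M : Matrix (Fin p) (Fin p) ℝ) (i j : Fin p) :
    (A * M * Aᵀ) i j = ∑ kl : Fin p × Fin p, A i kl.1 * A j kl.2 * M kl.1 kl.2 := by
  rw [Fintype.sum_prod_type, Matrix.mul_apply]
  simp_rw [Matrix.mul_apply, Matrix.transpose_apply, Finset.sum_mul]
  rw [Finset.sum_comm]
  exact Finset.sum_congr rfl fun a _ => Finset.sum_congr rfl fun b _ => by ring


lemma key_linalg {p : ℕ} (Pc U : Matrix (Fin p) (Fin p) ℝ) (d : Fin p → ℝ)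
    (hU1 : Uᵀ * U = 1) (hU2 : U * Uᵀ = 1)
    (hspec : Pc = U * Matrix.diagonal d * Uᵀ)
    (hd : ∀ k, d k = 0 ∨ d k = 1)
    (M : Matrix (Fin p) (Fin p) ℝ)
    (h1 : M = (1 - Pc) * M * (1 - Pc)ᵀ)
    (h2 : ∀ k : Fin p, d k = 0 →
      M = (1 - (2:ℝ) • vecMulVec (fun i => U i k) (fun i => U i k)) * M *
          (1 - (2:ℝ) • vecMulVec (fun i => U i k) (fun i => U i k))ᵀ)
    (h3 : ∀ k l : Fin p, k ≠ l → d k = 0 → d l = 0 →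
      M = (1 - (2:ℝ) • vecMulVec ((Real.sqrt 2)⁻¹ • (fun i => U i k - U i l))
            ((Real.sqrt 2)⁻¹ • (fun i => U i k - U i l))) * M *
          (1 - (2:ℝ) • vecMulVec ((Real.sqrt 2)⁻¹ • (fun i => U i k - U i l))
            ((Real.sqrt 2)⁻¹ • (fun i => U i k - U i l)))ᵀ) :
    ∃ c : ℝ, M = c • (1 - Pc) := by
  classical
  have hPcsymm : Pcᵀ = Pc := by
    rw [hspec, transpose_mul, transpose_mul, transpose_transpose, diagonal_transpose,
      ← mul_assoc]
  have hvvsym : ∀ x : Fin p → ℝ, (vecMulVec x x)ᵀ = vecMulVec x x := by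
    intro x; ext a b; simp [vecMulVec_apply, transpose_apply, mul_comm]
  have hRsym : ∀ x : Fin p → ℝ,
      (1 - (2:ℝ) • vecMulVec x x)ᵀ = 1 - (2:ℝ) • vecMulVec x x := by
    intro x; rw [transpose_sub, transpose_one, transpose_smul, hvvsym]
  -- conjugation transfer
  have conjN : ∀ A : Matrix (Fin p) (Fin p) ℝ, Aᵀ = A → M = A * M * A →
      Uᵀ * M * U = (Uᵀ * A * U) * (Uᵀ * M * U) * (Uᵀ * A * U) := by
    intro A hAs hA
    have e : (Uᵀ * A * U) * (Uᵀ * M * U) * (Uᵀ * A * U)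
        = Uᵀ * (A * ((U * Uᵀ) * (M * ((U * Uᵀ) * A)))) * U := by noncomm_ring
    rw [e, hU2]
    simp only [one_mul]
    conv_lhs => rw [hA]
    noncomm_ring
  -- diagonal form of 1 - Pc conjugated
  have hPcd : Uᵀ * Pc * U = Matrix.diagonal d := by
    rw [hspec]
    have e2 : Uᵀ * (U * Matrix.diagonal d * Uᵀ) * U
        = (Uᵀ * U) * Matrix.diagonal d * (Uᵀ * U) := by noncomm_ring
    rw [e2, hU1, one_mul, mul_one]
  have hdiag_one_sub : Matrix.diagonal (fun a => 1 - d a) = 1 - Matrix.diagonal d := by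
    ext a b
    by_cases hab : a = b
    · subst hab; simp [Matrix.diagonal_apply, Matrix.one_apply]
    · simp [Matrix.diagonal_apply_ne _ hab, Matrix.one_apply_ne hab]
  have hDform : Uᵀ * (1 - Pc) * U = Matrix.diagonal (fun a => 1 - d a) := by
    have e : Uᵀ * (1 - Pc) * U = Uᵀ * U - Uᵀ * Pc * U := by noncomm_ring
    rw [e, hU1, hPcd, hdiag_one_sub]
  -- conjugated vecMulVec
  have hconjvv : ∀ x : Fin p → ℝ,
      Uᵀ * vecMulVec x x * U = vecMulVec (Uᵀ.mulVec x) (Uᵀ.mulVec x) := by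
    intro x; ext a b
    simp only [Matrix.mul_apply, Matrix.vecMulVec_apply, Matrix.transpose_apply,
      Matrix.mulVec, dotProduct]
    rw [Finset.sum_mul_sum]
    simp_rw [Finset.sum_mul]
    rw [Finset.sum_comm]
    exact Finset.sum_congr rfl fun i _ => Finset.sum_congr rfl fun j _ => by ring
  have hUcol : ∀ k : Fin p, Uᵀ.mulVec (fun i => U i k) = fun a => if a = k then (1:ℝ) else 0 := by
    intro k; funext a
    have e : Uᵀ.mulVec (fun i => U i k) a = (Uᵀ * U) a k := by
      simp [Matrix.mulVec, dotProduct, Matrix.mul_apply, Matrix.transpose_apply]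
    rw [e, hU1, Matrix.one_apply]
  have hconjR : ∀ x : Fin p → ℝ,
      Uᵀ * (1 - (2:ℝ) • vecMulVec x x) * U
        = 1 - (2:ℝ) • vecMulVec (Uᵀ.mulVec x) (Uᵀ.mulVec x) := by
    intro x
    have e : Uᵀ * (1 - (2:ℝ) • vecMulVec x x) * U
        = Uᵀ * U - (2:ℝ) • (Uᵀ * vecMulVec x x * U) := by
      rw [mul_sub, mul_one, sub_mul, Matrix.mul_smul, Matrix.smul_mul]
    rw [e, hU1, hconjvv]
  set N := Uᵀ * M * U with hN
  -- entry conditions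
  have hc1 : ∀ a b, N a b = (1 - d a) * N a b * (1 - d b) := by
    have h := conjN (1 - Pc) (by rw [transpose_sub, transpose_one, hPcsymm]) (by
      conv_lhs => rw [h1]
      rw [transpose_sub, transpose_one, hPcsymm])
    rw [hDform] at h
    intro a b
    conv_lhs => rw [h]
    rw [Matrix.mul_diagonal, Matrix.diagonal_mul]
  have hNf : ∀ k : Fin p, d k = 0 → ∀ a b,
      N a b = (if a = k then (-1:ℝ) else 1) * N a b * (if b = k then (-1:ℝ) else 1) := by
    intro k hk
    have h := conjN _ (hRsym (fun i => U i k)) (by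
      conv_lhs => rw [h2 k hk]
      rw [hRsym])
    rw [hconjR, hUcol] at h
    have hdg : (1 : Matrix (Fin p) (Fin p) ℝ) -
        (2:ℝ) • vecMulVec (fun a => if a = k then (1:ℝ) else 0) (fun a => if a = k then (1:ℝ) else 0)
        = Matrix.diagonal (fun a => if a = k then (-1:ℝ) else 1) := by
      ext a b
      by_cases hab : a = b
      · subst hab
        by_cases hak : a = k <;>
          simp [Matrix.diagonal_apply, Matrix.one_apply, vecMulVec_apply, hak] <;> norm_num
      · rw [Matrix.diagonal_apply_ne _ hab]
        have h1b : (1 : Matrix (Fin p) (Fin p) ℝ) a b = 0 := Matrix.one_apply_ne hab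
        simp only [Matrix.sub_apply, Matrix.smul_apply, vecMulVec_apply, h1b, smul_eq_mul]
        by_cases hak : a = k
        · by_cases hbk : b = k
          · exact absurd (hak.trans hbk.symm) hab
          · simp [hbk]
        · simp [hak]
    rw [hdg] at h
    intro a b
    conv_lhs => rw [h]
    rw [Matrix.mul_diagonal, Matrix.diagonal_mul]
  have hr2 : (Real.sqrt 2)⁻¹ * (Real.sqrt 2)⁻¹ = 1/2 := by
    rw [← mul_inv, Real.mul_self_sqrt (by norm_num : (0:ℝ) ≤ 2)]
    norm_num
  have hNs : ∀ k l : Fin p, k ≠ l → d k = 0 → d l = 0 → N k k = N l l := by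
    intro k l hkl hk hl
    set w : Fin p → ℝ := Uᵀ.mulVec ((Real.sqrt 2)⁻¹ • (fun i => U i k - U i l)) with hw
    have hwval : ∀ a, w a = (Real.sqrt 2)⁻¹ *
        ((if a = k then (1:ℝ) else 0) - (if a = l then (1:ℝ) else 0)) := by
      intro a
      rw [hw]
      have e1 : ((Real.sqrt 2)⁻¹ • (fun i => U i k - U i l) : Fin p → ℝ)
          = fun i => (Real.sqrt 2)⁻¹ * (U i k - U i l) := rfl
      rw [e1]
      have e2 : Uᵀ.mulVec (fun i => (Real.sqrt 2)⁻¹ * (U i k - U i l)) a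
          = (Real.sqrt 2)⁻¹ * (Uᵀ.mulVec (fun i => U i k) a - Uᵀ.mulVec (fun i => U i l) a) := by
        simp only [Matrix.mulVec, dotProduct, Matrix.transpose_apply, mul_sub,
          Finset.mul_sum, ← Finset.sum_sub_distrib]
        exact Finset.sum_congr rfl fun i _ => by ring
      rw [e2, hUcol, hUcol]
    have h := conjN _ (hRsym _) (by
      conv_lhs => rw [h3 k l hkl hk hl]
      rw [hRsym])
    rw [hconjR, ← hw] at h
    set T : Matrix (Fin p) (Fin p) ℝ := 1 - (2:ℝ) • vecMulVec w w with hT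
    have hTapp : ∀ a b, T a b = (1 : Matrix (Fin p) (Fin p) ℝ) a b - 2 * (w a * w b) := by
      intro a b; rw [hT]; simp [vecMulVec_apply]
    have hTrowk : ∀ a, T k a = if a = l then (1:ℝ) else 0 := by
      intro a
      rw [hTapp, hwval, hwval, if_pos rfl, if_neg hkl]
      by_cases hak : a = k
      · rw [hak, Matrix.one_apply_eq, if_pos rfl, if_neg hkl]
        linear_combination (-2 : ℝ) * hr2
      · by_cases hal : a = l
        · rw [hal, Matrix.one_apply_ne hkl, if_neg (fun h => hkl h.symm), if_pos rfl]
          linear_combination (2 : ℝ) * hr2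
        · rw [Matrix.one_apply_ne (fun h : k = a => hak h.symm), if_neg hak, if_neg hal]
          ring
    have hTsymm : Tᵀ = T := hRsym w
    have hTcolk : ∀ b, T b k = if b = l then (1:ℝ) else 0 := by
      intro b
      calc T b k = Tᵀ k b := (Matrix.transpose_apply T k b).symm
        _ = T k b := by rw [hTsymm]
        _ = if b = l then (1:ℝ) else 0 := hTrowk b
    have e : ∀ j, (T * N) k j = N l j := by
      intro j
      rw [Matrix.mul_apply]
      simp_rw [hTrowk]
      simp [ite_mul, Finset.sum_ite_eq']
    conv_lhs => rw [h]
    rw [Matrix.mul_apply]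
    simp_rw [e, hTcolk]
    simp [mul_ite, Finset.sum_ite_eq']
  -- assemble
  have hoff : ∀ a b, a ≠ b → N a b = 0 := by
    intro a b hab
    rcases hd a with ha | ha
    · have h := hNf a ha a b
      rw [if_pos rfl, if_neg (fun h' : b = a => hab h'.symm)] at h
      linarith
    · have h := hc1 a b
      rw [ha] at h
      simpa using h
  have hdiag1 : ∀ a, d a = 1 → N a a = 0 := by
    intro a ha
    have h := hc1 a a
    rw [ha] at h
    simpa using h
  have hdiageq : ∀ a b, d a = 0 → d b = 0 → N a a = N b b := by
    intro a b ha hb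
    by_cases hab : a = b
    · rw [hab]
    · exact hNs a b hab ha hb
  set c : ℝ := if h : ∃ k, d k = 0 then N h.choose h.choose else 0 with hc
  refine ⟨c, ?_⟩
  have hNeq : N = c • Matrix.diagonal (fun a => 1 - d a) := by
    ext a b
    by_cases hab : a = b
    · subst hab
      rw [Matrix.smul_apply, Matrix.diagonal_apply_eq, smul_eq_mul]
      rcases hd a with ha | ha
      · have hex : ∃ k, d k = 0 := ⟨a, ha⟩
        rw [hc, dif_pos hex, ha]
        rw [hdiageq a hex.choose ha hex.choose_spec]
        ring
      · rw [hdiag1 a ha, ha]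
        ring
    · rw [hoff a b hab, Matrix.smul_apply, Matrix.diagonal_apply_ne _ hab, smul_eq_mul, mul_zero]
  have hM : M = U * N * Uᵀ := by
    rw [hN]
    have e : U * (Uᵀ * M * U) * Uᵀ = (U * Uᵀ) * M * (U * Uᵀ) := by noncomm_ring
    rw [e, hU2, one_mul, mul_one]
  rw [hM, hNeq, Matrix.mul_smul, Matrix.smul_mul]
  congr 1
  rw [hdiag_one_sub, mul_sub, mul_one, sub_mul, hU2, hspec]

end Aux

lemma measurable_mulVec_fun {p : ℕ} (A : Matrix (Fin p) (Fin p) ℝ) :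
    Measurable (fun x : Fin p → ℝ => A.mulVec x) := by
  apply measurable_pi_lambda
  intro i
  show Measurable fun x : Fin p → ℝ => ∑ j, A i j * x j
  exact Finset.measurable_sum _ fun j _ => (measurable_pi_apply j).const_mul _

lemma map_pair_transfer {Ω : Type*} [mΩ : MeasurableSpace Ω] (μ : Measure Ω) {p : ℕ}
    (Z : Ω → (Fin p → ℝ)) (hZ : Measurable Z) (Pc H : Matrix (Fin p) (Fin p) ℝ)
    (hPH : Pc * H = Pc)
    (hmap : Measure.map (fun ω => H.mulVec (Z ω)) μ = Measure.map Z μ) :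
    Measure.map (fun ω => (H.mulVec (Z ω), Pc.mulVec (Z ω))) μ
      = Measure.map (fun ω => (Z ω, Pc.mulVec (Z ω))) μ := by
  have hT : Measurable fun x : Fin p → ℝ => (x, Pc.mulVec x) :=
    measurable_id.prodMk (measurable_mulVec_fun Pc)
  have hHZ : Measurable fun ω => H.mulVec (Z ω) := (measurable_mulVec_fun H).comp hZ
  have e1 : (fun ω => (H.mulVec (Z ω), Pc.mulVec (Z ω)))
      = (fun x : Fin p → ℝ => (x, Pc.mulVec x)) ∘ (fun ω => H.mulVec (Z ω)) := by
    funext ω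
    simp only [Function.comp_apply, Matrix.mulVec_mulVec, hPH]
  have e2 : (fun ω => (Z ω, Pc.mulVec (Z ω)))
      = (fun x : Fin p → ℝ => (x, Pc.mulVec x)) ∘ Z := rfl
  rw [e1, e2, ← Measure.map_map hT hHZ, ← Measure.map_map hT hZ, hmap]

lemma setint_transfer {Ω : Type*} [mΩ : MeasurableSpace Ω] (μ : Measure Ω) {p : ℕ}
    (Z W Y : Ω → (Fin p → ℝ)) (hZ : Measurable Z) (hW : Measurable W) (hY : Measurable Y)
    (hjoint : Measure.map (fun ω => (W ω, Y ω)) μ = Measure.map (fun ω => (Z ω, Y ω)) μ)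
    (f : (Fin p → ℝ) → ℝ) (hf : Measurable f)
    {A : Set (Fin p → ℝ)} (hA : MeasurableSet A) :
    ∫ x in Y ⁻¹' A, f (Z x) ∂μ = ∫ x in Y ⁻¹' A, f (W x) ∂μ := by
  classical
  set g2 : (Fin p → ℝ) × (Fin p → ℝ) → ℝ := fun q => if q.2 ∈ A then f q.1 else 0 with hg2
  have hg2m : Measurable g2 :=
    Measurable.ite (measurable_snd hA) (hf.comp measurable_fst) measurable_const
  have key : ∀ V : Ω → (Fin p → ℝ), Measurable V →
      ∫ x in Y ⁻¹' A, f (V x) ∂μ = ∫ x, g2 (V x, Y x) ∂μ := by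
    intro V hV
    rw [← integral_indicator (hY hA)]
    congr 1
  rw [key Z hZ, key W hW,
    ← integral_map (hZ.prodMk hY).aemeasurable hg2m.aestronglyMeasurable,
    ← integral_map (hW.prodMk hY).aemeasurable hg2m.aestronglyMeasurable, hjoint]



/-- The `(i,j)` entry of the conditional covariance matrix of a random vector `W` given the
σ-algebra `m`. -/
noncomputable def condVarEntry {Ω : Type*} (mΩ : MeasurableSpace Ω)
    (μ : @MeasureTheory.Measure Ω mΩ)
    (m : MeasurableSpace Ω) {p : ℕ} (W : Ω → (Fin p → ℝ)) (i j : Fin p) : Ω → ℝ :=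
  μ[fun ω => (W ω i - (μ[fun ω' => W ω' i | m]) ω) *
      (W ω j - (μ[fun ω' => W ω' j | m]) ω) | m]

/-- A spherically distributed square-integrable random vector satisfies the diagonal conditional
variance condition `Var(Z | P_c Z) = λ Q_c` a.s. for every orthogonal projection `P_c`. -/
theorem spherical_implies_dcv
    {Ω : Type*} [mΩ : MeasurableSpace Ω] (μ : Measure Ω) [IsProbabilityMeasure μ]
    (p : ℕ) (Z : Ω → (Fin p → ℝ)) (hZmeas : Measurable Z)
    (hZint2 : ∀ i j, Integrable (fun ω => Z ω i * Z ω j) μ)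
    -- sphericity: `H Z =d Z` for every orthogonal matrix `H`
    (hsph : ∀ Hm : Matrix (Fin p) (Fin p) ℝ, Hmᵀ * Hm = 1 →
      Measure.map (fun ω => Hm.mulVec (Z ω)) μ = Measure.map Z μ)
    (Pc : Matrix (Fin p) (Fin p) ℝ) (hPcsymm : Pc.IsSymm) (hPcidem : Pc * Pc = Pc)
    (m : MeasurableSpace Ω)
    (hm : m = MeasurableSpace.comap (fun ω => Pc.mulVec (Z ω)) inferInstance) :
    ∃ lam : Ω → ℝ, ∀ᵐ ω ∂μ,
      (Matrix.of fun i j => condVarEntry mΩ μ m Z i j ω) = lam ω • (1 - Pc) := by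
  classical
  have hmv : ∀ A : Matrix (Fin p) (Fin p) ℝ, Measurable (fun x : Fin p → ℝ => A.mulVec x) := by
    intro A
    apply measurable_pi_lambda
    intro i
    show Measurable fun x : Fin p → ℝ => ∑ j, A i j * x j
    exact Finset.measurable_sum _ fun j _ => (measurable_pi_apply j).const_mul _
  have hYmeas : Measurable[mΩ] (fun ω => Pc.mulVec (Z ω)) := (hmv Pc).comp hZmeas
  have hm_le : m ≤ mΩ := by rw [hm]; exact hYmeas.comap_le
  haveI hst : SigmaFinite (μ.trim hm_le) := by infer_instance
  have hZi : ∀ i, Integrable (fun ω => Z ω i) μ := by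
    intro i
    have hsq : Integrable (fun ω => (Z ω i) ^ 2) μ := by
      simpa [pow_two] using hZint2 i i
    have hmeas : AEStronglyMeasurable[mΩ] (fun ω => Z ω i) μ :=
      ((measurable_pi_apply i).comp hZmeas).aestronglyMeasurable
    exact ((memLp_two_iff_integrable_sq hmeas).mpr hsq).integrable one_le_two
  have hABint : ∀ (A B : Matrix (Fin p) (Fin p) ℝ) (i j : Fin p),
      Integrable (fun ω => A.mulVec (Z ω) i * B.mulVec (Z ω) j) μ := by
    intro A B i j
    have e : (fun ω => A.mulVec (Z ω) i * B.mulVec (Z ω) j)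
        = fun ω => ∑ kl : Fin p × Fin p, A i kl.1 * B j kl.2 * (Z ω kl.1 * Z ω kl.2) := by
      funext ω
      rw [Fintype.sum_prod_type]
      show (∑ k, A i k * Z ω k) * (∑ l, B j l * Z ω l) = _
      rw [Finset.sum_mul_sum]
      exact Finset.sum_congr rfl fun k _ => Finset.sum_congr rfl fun l _ => by ring
    rw [e]
    exact integrable_finset_sum _ fun kl _ => (hZint2 kl.1 kl.2).const_mul _
  -- master transfer lemma
  have master : ∀ H : Matrix (Fin p) (Fin p) ℝ, Hᵀ * H = 1 → Pc * H = Pc →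
      ∀ f : (Fin p → ℝ) → ℝ, Measurable f → Integrable (fun ω => f (Z ω)) μ →
      μ[fun ω => f (H.mulVec (Z ω))|m] =ᵐ[μ] μ[fun ω => f (Z ω)|m] := by
    intro H hH hPH f hf hfi
    have hHZ : Measurable[mΩ] fun ω => H.mulVec (Z ω) := (hmv H).comp hZmeas
    have hmap := hsph H hH
    have hT : Measurable fun x : Fin p → ℝ => (x, Pc.mulVec x) :=
      measurable_id.prodMk (hmv Pc)
    have hjoint := @map_pair_transfer Ω mΩ μ p Z hZmeas Pc H hPH hmap
    have hfHZ : Integrable (fun ω => f (H.mulVec (Z ω))) μ := by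
      have h1 : Integrable f (@Measure.map Ω _ mΩ _ (fun ω => H.mulVec (Z ω)) μ) := by
        rw [hmap]
        exact (integrable_map_measure hf.aestronglyMeasurable hZmeas.aemeasurable).mpr hfi
      exact (integrable_map_measure hf.aestronglyMeasurable hHZ.aemeasurable).mp h1
    refine (ae_eq_condExp_of_forall_setIntegral_eq hm_le hfHZ
      (fun s _ _ => Integrable.integrableOn (mα := mΩ) (s := s) (μ := μ) integrable_condExp)
      (fun s hs hμs => ?_)
      stronglyMeasurable_condExp.aestronglyMeasurable).symm
    rw [setIntegral_condExp hm_le hfi hs]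
    rw [hm] at hs
    obtain ⟨A, hA, rfl⟩ := MeasurableSpace.measurableSet_comap.mp hs
    exact @setint_transfer Ω mΩ μ p Z (fun ω => H.mulVec (Z ω)) (fun ω => Pc.mulVec (Z ω))
      hZmeas hHZ hYmeas hjoint f hf A hA
    -- Part 2: E[Z_i | m] = (Pc Z)_i
  have hYiInt : ∀ i, Integrable (fun ω => Pc.mulVec (Z ω) i) μ := by
    intro i
    have e : (fun ω => Pc.mulVec (Z ω) i) = fun ω => ∑ j, Pc i j * Z ω j := rfl
    rw [e]
    exact integrable_finset_sum _ fun j _ => (hZi j).const_mul _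
  have hcondZ : ∀ i, μ[fun ω => Z ω i|m] =ᵐ[μ] fun ω => Pc.mulVec (Z ω) i := by
    intro i
    have hH0symm : (Pc + Pc - 1 : Matrix (Fin p) (Fin p) ℝ)ᵀ = Pc + Pc - 1 := by
      rw [transpose_sub, transpose_add, transpose_one, hPcsymm.eq]
    have hH0o : (Pc + Pc - 1 : Matrix (Fin p) (Fin p) ℝ)ᵀ * (Pc + Pc - 1) = 1 := by
      rw [hH0symm]
      have e : (Pc + Pc - 1) * (Pc + Pc - 1)
          = Pc * Pc + Pc * Pc + Pc * Pc + Pc * Pc - (Pc + Pc + Pc + Pc) + 1 := by noncomm_ring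
      rw [e, hPcidem]
      abel
    have hH0P : Pc * (Pc + Pc - 1) = Pc := by
      have e : Pc * (Pc + Pc - 1) = Pc * Pc + Pc * Pc - Pc := by noncomm_ring
      rw [e, hPcidem]
      abel
    have h1 := master (Pc + Pc - 1) hH0o hH0P (fun x => x i) (measurable_pi_apply i) (hZi i)
    have e2 : (fun ω => (fun x : Fin p → ℝ => x i) ((Pc + Pc - 1).mulVec (Z ω)))
        = ((fun ω => Pc.mulVec (Z ω) i) + fun ω => Pc.mulVec (Z ω) i) - fun ω => Z ω i := by
      funext ω
      simp only [Pi.add_apply, Pi.sub_apply]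
      rw [Matrix.sub_mulVec, Matrix.add_mulVec, Matrix.one_mulVec]
      simp
    rw [e2] at h1
    have h2 := condExp_sub (m := m) ((hYiInt i).add (hYiInt i)) (hZi i)
    have h3 := condExp_add (m := m) (hYiInt i) (hYiInt i)
    have hYcond : μ[(fun ω => Pc.mulVec (Z ω) i)|m] = fun ω => Pc.mulVec (Z ω) i := by
      refine condExp_of_stronglyMeasurable hm_le ?_ (hYiInt i)
      apply Measurable.stronglyMeasurable
      have hYm : Measurable[m] (fun ω => Pc.mulVec (Z ω)) := by
        rw [hm]
        exact Measurable.of_comap_le le_rfl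
      exact (measurable_pi_apply i).comp hYm
    have hfin : μ[fun ω => Z ω i|m]
        =ᵐ[μ] ((fun ω => Pc.mulVec (Z ω) i) + fun ω => Pc.mulVec (Z ω) i) - μ[fun ω => Z ω i|m] := by
      refine h1.symm.trans (h2.trans ?_)
      refine (Filter.EventuallyEq.sub h3 (Filter.EventuallyEq.refl _ _)).trans ?_
      rw [hYcond]
    filter_upwards [hfin] with ω hω
    simp only [Pi.add_apply, Pi.sub_apply] at hω
    linarith
  -- Part 3: expansion of conditional second moments under linear images
  have expand : ∀ (A B : Matrix (Fin p) (Fin p) ℝ) (i j : Fin p),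
      μ[fun ω => (A * B).mulVec (Z ω) i * (A * B).mulVec (Z ω) j|m]
        =ᵐ[μ] fun ω => ∑ kl : Fin p × Fin p, A i kl.1 * A j kl.2 *
          (μ[fun ω' => B.mulVec (Z ω') kl.1 * B.mulVec (Z ω') kl.2|m]) ω := by
    intro A B i j
    have e : (fun ω => (A * B).mulVec (Z ω) i * (A * B).mulVec (Z ω) j)
        = ∑ kl : Fin p × Fin p, (A i kl.1 * A j kl.2) •
            (fun ω => B.mulVec (Z ω) kl.1 * B.mulVec (Z ω) kl.2) := by
      funext ω
      rw [Finset.sum_apply]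
      simp only [Pi.smul_apply, smul_eq_mul]
      rw [← Matrix.mulVec_mulVec (v := Z ω) (M := A) (N := B)]
      rw [Fintype.sum_prod_type]
      show (∑ k, A i k * B.mulVec (Z ω) k) * (∑ l, A j l * B.mulVec (Z ω) l) = _
      rw [Finset.sum_mul_sum]
      exact Finset.sum_congr rfl fun k _ => Finset.sum_congr rfl fun l _ => by ring
    rw [e]
    refine (condExp_finsetSum (fun kl _ => (hABint B B kl.1 kl.2).smul _) m).trans ?_
    have h2 : ∀ᵐ ω ∂μ, ∀ kl : Fin p × Fin p,
        (μ[(A i kl.1 * A j kl.2) • (fun ω' => B.mulVec (Z ω') kl.1 * B.mulVec (Z ω') kl.2)|m]) ω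
          = A i kl.1 * A j kl.2 * (μ[fun ω' => B.mulVec (Z ω') kl.1 * B.mulVec (Z ω') kl.2|m]) ω := by
      rw [MeasureTheory.ae_all_iff]
      intro kl
      filter_upwards [condExp_smul (m := m) (μ := μ) (A i kl.1 * A j kl.2)
        (fun ω' => B.mulVec (Z ω') kl.1 * B.mulVec (Z ω') kl.2)] with ω hω
      simpa using hω
    filter_upwards [h2] with ω hω
    rw [Finset.sum_apply]
    exact Finset.sum_congr rfl fun kl _ => hω kl
    -- Part 4: invariance identities for the conditional second moments of Q Z
  set Q : Matrix (Fin p) (Fin p) ℝ := 1 - Pc with hQdef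
  have hQQ : Q * Q = Q := by
    rw [hQdef]
    have e : ((1 : Matrix (Fin p) (Fin p) ℝ) - Pc) * (1 - Pc) = 1 - Pc - Pc + Pc * Pc := by
      noncomm_ring
    rw [e, hPcidem]
    abel
  have hQmv : ∀ (z : Fin p → ℝ) (i : Fin p), Q.mulVec z i = z i - Pc.mulVec z i := by
    intro z i
    rw [hQdef, Matrix.sub_mulVec, Matrix.one_mulVec]
    simp
  have hQid : ∀ i j : Fin p,
      μ[fun ω => Q.mulVec (Z ω) i * Q.mulVec (Z ω) j|m]
        =ᵐ[μ] fun ω => ∑ kl : Fin p × Fin p, Q i kl.1 * Q j kl.2 *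
          (μ[fun ω' => Q.mulVec (Z ω') kl.1 * Q.mulVec (Z ω') kl.2|m]) ω := by
    intro i j
    have h := expand Q Q i j
    rw [hQQ] at h
    exact h
  have hreflV : ∀ u : Fin p → ℝ, u ⬝ᵥ u = 1 → Pc.mulVec u = 0 →
      ∀ i j : Fin p,
      μ[fun ω => Q.mulVec (Z ω) i * Q.mulVec (Z ω) j|m]
        =ᵐ[μ] fun ω => ∑ kl : Fin p × Fin p,
          (1 - (2:ℝ) • vecMulVec u u) i kl.1 * (1 - (2:ℝ) • vecMulVec u u) j kl.2 *
          (μ[fun ω' => Q.mulVec (Z ω') kl.1 * Q.mulVec (Z ω') kl.2|m]) ω := by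
    intro u huu hPu i j
    set R : Matrix (Fin p) (Fin p) ℝ := 1 - (2:ℝ) • vecMulVec u u with hR
    have hvv : (vecMulVec u u)ᵀ = vecMulVec u u := by
      ext a b
      simp [vecMulVec_apply, transpose_apply, mul_comm]
    have hRsymm : Rᵀ = R := by
      rw [hR, transpose_sub, transpose_one, transpose_smul, hvv]
    have hPvv : Pc * vecMulVec u u = 0 := by
      ext a b
      rw [Matrix.mul_apply]
      simp only [vecMulVec_apply]
      have e : ∑ k, Pc a k * (u k * u b) = (∑ k, Pc a k * u k) * u b := by
        rw [Finset.sum_mul]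
        exact Finset.sum_congr rfl fun k _ => by ring
      rw [e]
      have h0 : Pc.mulVec u a = 0 := by rw [hPu]; rfl
      have e2 : (∑ k, Pc a k * u k) = Pc.mulVec u a := rfl
      rw [e2, h0, zero_mul]
      simp
    have hvvP : vecMulVec u u * Pc = 0 := by
      ext a b
      rw [Matrix.mul_apply]
      simp only [vecMulVec_apply]
      have e : ∑ k, u a * u k * Pc k b = u a * ∑ k, Pc b k * u k := by
        rw [Finset.mul_sum]
        refine Finset.sum_congr rfl fun k _ => ?_
        have : Pc b k = Pc k b := congrFun (congrFun hPcsymm.eq k) b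
        rw [this]
        ring
      rw [e]
      have h0 : Pc.mulVec u b = 0 := by rw [hPu]; rfl
      have e2 : (∑ k, Pc b k * u k) = Pc.mulVec u b := rfl
      rw [e2, h0, mul_zero]
      simp
    have hvv2 : vecMulVec u u * vecMulVec u u = vecMulVec u u := by
      ext a b
      rw [Matrix.mul_apply]
      simp only [vecMulVec_apply]
      have e : ∑ k, u a * u k * (u k * u b) = (∑ k, u k * u k) * (u a * u b) := by
        rw [Finset.sum_mul]
        exact Finset.sum_congr rfl fun k _ => by ring
      rw [e]
      have e2 : (∑ k, u k * u k) = u ⬝ᵥ u := rfl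
      rw [e2, huu, one_mul]
    have hR2 : R = 1 - (vecMulVec u u + vecMulVec u u) := by
      rw [hR, two_smul]
    have hRo : Rᵀ * R = 1 := by
      rw [hRsymm, hR2]
      have e : ((1:Matrix (Fin p) (Fin p) ℝ) - (vecMulVec u u + vecMulVec u u))
            * (1 - (vecMulVec u u + vecMulVec u u))
          = 1 - (vecMulVec u u + vecMulVec u u) - (vecMulVec u u + vecMulVec u u)
            + (vecMulVec u u * vecMulVec u u + vecMulVec u u * vecMulVec u u
               + vecMulVec u u * vecMulVec u u + vecMulVec u u * vecMulVec u u) := by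
        noncomm_ring
      rw [e, hvv2]
      abel
    have hPR : Pc * R = Pc := by
      rw [hR, mul_sub, mul_one, Matrix.mul_smul, hPvv, smul_zero, sub_zero]
    have hRP : R * Pc = Pc := by
      rw [hR, sub_mul, one_mul, Matrix.smul_mul, hvvP, smul_zero, sub_zero]
    have hQR : Q * R = R * Q := by
      have ha : Q * R = R - Pc := by rw [hQdef, sub_mul, one_mul, hPR]
      have hb : R * Q = R - Pc := by rw [hQdef, mul_sub, mul_one, hRP]
      rw [ha, hb]
    have hmaster := master R hRo hPR (fun x => Q.mulVec x i * Q.mulVec x j)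
      (((measurable_pi_apply i).comp (hmv Q)).mul ((measurable_pi_apply j).comp (hmv Q)))
      (hABint Q Q i j)
    have e3 : (fun ω => (fun x => Q.mulVec x i * Q.mulVec x j) (R.mulVec (Z ω)))
        = fun ω => (R * Q).mulVec (Z ω) i * (R * Q).mulVec (Z ω) j := by
      funext ω
      show Q.mulVec (R.mulVec (Z ω)) i * Q.mulVec (R.mulVec (Z ω)) j = _
      rw [Matrix.mulVec_mulVec, hQR]
    rw [e3] at hmaster
    exact hmaster.symm.trans (expand R Q i j)
  have hbridge : ∀ i j : Fin p, condVarEntry mΩ μ m Z i j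
      =ᵐ[μ] μ[fun ω => Q.mulVec (Z ω) i * Q.mulVec (Z ω) j|m] := by
    intro i j
    unfold condVarEntry
    apply condExp_congr_ae
    filter_upwards [hcondZ i, hcondZ j] with ω hi hj
    simp only [hQmv, hi, hj]
    -- Part 5: spectral decomposition of Pc
  have hHerm : Pc.IsHermitian := by
    show Pcᴴ = Pc
    rw [Matrix.conjTranspose_eq_transpose_of_trivial]
    exact hPcsymm.eq
  set U : Matrix (Fin p) (Fin p) ℝ :=
    (Matrix.IsHermitian.eigenvectorUnitary hHerm : Matrix (Fin p) (Fin p) ℝ) with hUdef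
  set d : Fin p → ℝ := Matrix.IsHermitian.eigenvalues hHerm with hddef
  have hU1 : Uᵀ * U = 1 := by
    rw [hUdef, ← Matrix.conjTranspose_eq_transpose_of_trivial, ← Matrix.star_eq_conjTranspose]
    exact Unitary.coe_star_mul_self _
  have hU2 : U * Uᵀ = 1 := by
    rw [hUdef, ← Matrix.conjTranspose_eq_transpose_of_trivial, ← Matrix.star_eq_conjTranspose]
    exact Unitary.coe_mul_star_self _
  have hspec : Pc = U * Matrix.diagonal d * Uᵀ := by
    have h := Matrix.IsHermitian.spectral_theorem hHerm
    rw [Unitary.conjStarAlgAut_apply, Matrix.star_eq_conjTranspose, Matrix.conjTranspose_eq_transpose_of_trivial] at h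
    simpa [hUdef, hddef, RCLike.ofReal_real_eq_id] using h
  have hd01 : ∀ k, d k = 0 ∨ d k = 1 := by
    have h1 : Uᵀ * Pc * U = Matrix.diagonal d := by
      rw [hspec]
      have e2 : Uᵀ * (U * Matrix.diagonal d * Uᵀ) * U
          = (Uᵀ * U) * Matrix.diagonal d * (Uᵀ * U) := by noncomm_ring
      rw [e2, hU1, one_mul, mul_one]
    have e3 : (Uᵀ * Pc * U) * (Uᵀ * Pc * U) = Uᵀ * (Pc * ((U * Uᵀ) * Pc)) * U := by noncomm_ring
    rw [h1, hU2, one_mul] at e3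
    have e4 : Uᵀ * (Pc * Pc) * U = Matrix.diagonal d := by
      rw [hPcidem, h1]
    rw [e4] at e3
    intro k
    have e5 : d k * d k = d k := by
      have := congrFun (congrFun e3 k) k
      rw [Matrix.diagonal_mul_diagonal, Matrix.diagonal_apply_eq, Matrix.diagonal_apply_eq]
        at this
      exact this
    have e6 : d k * (d k - 1) = 0 := by linear_combination e5
    rcases mul_eq_zero.mp e6 with h | h
    · exact Or.inl h
    · exact Or.inr (by linarith)
  have hcol : ∀ k l : Fin p,
      (fun i => U i k) ⬝ᵥ (fun i => U i l) = (1 : Matrix (Fin p) (Fin p) ℝ) k l := by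
    intro k l
    rw [← hU1]
    simp [dotProduct, Matrix.mul_apply, Matrix.transpose_apply]
  have hPcU : Pc * U = U * Matrix.diagonal d := by
    rw [hspec, mul_assoc (U * Matrix.diagonal d) Uᵀ U, hU1, mul_one]
  have hPcol : ∀ k : Fin p, Pc.mulVec (fun i => U i k) = d k • (fun i => U i k) := by
    intro k
    funext a
    have e : Pc.mulVec (fun i => U i k) a = (Pc * U) a k := by
      simp [Matrix.mulVec, dotProduct, Matrix.mul_apply]
    rw [e, hPcU, Matrix.mul_diagonal]
    simp [mul_comm]
  have hr2 : (Real.sqrt 2)⁻¹ * (Real.sqrt 2)⁻¹ = 1/2 := by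
    rw [← mul_inv, Real.mul_self_sqrt (by norm_num : (0:ℝ) ≤ 2)]
    norm_num
  -- Part 6: assembly
  refine ⟨fun ω => if h : ∃ c : ℝ,
      (Matrix.of fun i j => condVarEntry mΩ μ m Z i j ω) = c • Q then h.choose else 0, ?_⟩
  have main : ∀ᵐ ω ∂μ, ∃ c : ℝ,
      (Matrix.of fun i j => condVarEntry mΩ μ m Z i j ω) = c • Q := by
    have A1 : ∀ᵐ ω ∂μ, ∀ i j : Fin p, condVarEntry mΩ μ m Z i j ω
        = (μ[fun ω' => Q.mulVec (Z ω') i * Q.mulVec (Z ω') j|m]) ω := by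
      rw [MeasureTheory.ae_all_iff]
      intro i
      rw [MeasureTheory.ae_all_iff]
      intro j
      exact hbridge i j
    have A2 : ∀ᵐ ω ∂μ, ∀ i j : Fin p,
        (μ[fun ω' => Q.mulVec (Z ω') i * Q.mulVec (Z ω') j|m]) ω
          = ∑ kl : Fin p × Fin p, Q i kl.1 * Q j kl.2 *
            (μ[fun ω' => Q.mulVec (Z ω') kl.1 * Q.mulVec (Z ω') kl.2|m]) ω := by
      rw [MeasureTheory.ae_all_iff]
      intro i
      rw [MeasureTheory.ae_all_iff]
      intro j
      exact hQid i j
    have A3 : ∀ᵐ ω ∂μ, ∀ k i j : Fin p, d k = 0 →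
        (μ[fun ω' => Q.mulVec (Z ω') i * Q.mulVec (Z ω') j|m]) ω
          = ∑ kl : Fin p × Fin p,
            (1 - (2:ℝ) • vecMulVec (fun i => U i k) (fun i => U i k)) i kl.1 *
            (1 - (2:ℝ) • vecMulVec (fun i => U i k) (fun i => U i k)) j kl.2 *
            (μ[fun ω' => Q.mulVec (Z ω') kl.1 * Q.mulVec (Z ω') kl.2|m]) ω := by
      rw [MeasureTheory.ae_all_iff]
      intro k
      rw [MeasureTheory.ae_all_iff]
      intro i
      rw [MeasureTheory.ae_all_iff]
      intro j
      by_cases hk : d k = 0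
      · have hunit : (fun i => U i k) ⬝ᵥ (fun i => U i k) = 1 := by
          rw [hcol k k, Matrix.one_apply_eq]
        have hker : Pc.mulVec (fun i => U i k) = 0 := by
          rw [hPcol k, hk, zero_smul]
        filter_upwards [hreflV (fun i => U i k) hunit hker i j] with ω hω
        intro _
        exact hω
      · exact Filter.Eventually.of_forall fun ω h' => absurd h' hk
    have A4 : ∀ᵐ ω ∂μ, ∀ k l i j : Fin p, k ≠ l → d k = 0 → d l = 0 →
        (μ[fun ω' => Q.mulVec (Z ω') i * Q.mulVec (Z ω') j|m]) ω
          = ∑ kl : Fin p × Fin p,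
            (1 - (2:ℝ) • vecMulVec ((Real.sqrt 2)⁻¹ • (fun i => U i k - U i l))
              ((Real.sqrt 2)⁻¹ • (fun i => U i k - U i l))) i kl.1 *
            (1 - (2:ℝ) • vecMulVec ((Real.sqrt 2)⁻¹ • (fun i => U i k - U i l))
              ((Real.sqrt 2)⁻¹ • (fun i => U i k - U i l))) j kl.2 *
            (μ[fun ω' => Q.mulVec (Z ω') kl.1 * Q.mulVec (Z ω') kl.2|m]) ω := by
      rw [MeasureTheory.ae_all_iff]
      intro k
      rw [MeasureTheory.ae_all_iff]
      intro l
      rw [MeasureTheory.ae_all_iff]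
      intro i
      rw [MeasureTheory.ae_all_iff]
      intro j
      by_cases hcond : k ≠ l ∧ d k = 0 ∧ d l = 0
      · obtain ⟨hkl, hk, hl⟩ := hcond
        have s1 : ∑ i, U i k * U i k = (1:ℝ) := by
          have := hcol k k
          rwa [Matrix.one_apply_eq] at this
        have s2 : ∑ i, U i l * U i l = (1:ℝ) := by
          have := hcol l l
          rwa [Matrix.one_apply_eq] at this
        have s3 : ∑ i, U i k * U i l = (0:ℝ) := by
          have := hcol k l
          rwa [Matrix.one_apply_ne hkl] at this
        have hunit : ((Real.sqrt 2)⁻¹ • (fun i => U i k - U i l) : Fin p → ℝ)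
            ⬝ᵥ ((Real.sqrt 2)⁻¹ • (fun i => U i k - U i l)) = 1 := by
          have hsum : ((Real.sqrt 2)⁻¹ • (fun i => U i k - U i l) : Fin p → ℝ)
              ⬝ᵥ ((Real.sqrt 2)⁻¹ • (fun i => U i k - U i l))
              = ∑ i, (((Real.sqrt 2)⁻¹ * (Real.sqrt 2)⁻¹) * (U i k * U i k)
                + ((Real.sqrt 2)⁻¹ * (Real.sqrt 2)⁻¹) * (U i l * U i l)
                - (2 * ((Real.sqrt 2)⁻¹ * (Real.sqrt 2)⁻¹)) * (U i k * U i l)) := by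
            refine Finset.sum_congr rfl fun i _ => ?_
            show ((Real.sqrt 2)⁻¹ * (U i k - U i l)) * ((Real.sqrt 2)⁻¹ * (U i k - U i l)) = _
            ring
          rw [hsum, Finset.sum_sub_distrib, Finset.sum_add_distrib, ← Finset.mul_sum,
            ← Finset.mul_sum, ← Finset.mul_sum, s1, s2, s3]
          linear_combination (2:ℝ) * hr2
        have hk0 : Pc.mulVec (fun i => U i k) = 0 := by
          rw [hPcol k, hk, zero_smul]
        have hl0 : Pc.mulVec (fun i => U i l) = 0 := by
          rw [hPcol l, hl, zero_smul]
        have hker : Pc.mulVec ((Real.sqrt 2)⁻¹ • (fun i => U i k - U i l)) = 0 := by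
          funext a
          simp only [Pi.zero_apply]
          show (∑ j, Pc a j * ((Real.sqrt 2)⁻¹ * (U j k - U j l))) = 0
          rw [show (∑ j, Pc a j * ((Real.sqrt 2)⁻¹ * (U j k - U j l)))
              = ∑ j, ((Real.sqrt 2)⁻¹ * (Pc a j * U j k) - (Real.sqrt 2)⁻¹ * (Pc a j * U j l))
            from Finset.sum_congr rfl fun j _ => by ring]
          rw [Finset.sum_sub_distrib, ← Finset.mul_sum, ← Finset.mul_sum]
          have ek : (∑ j, Pc a j * U j k) = 0 := congrFun hk0 a
          have el : (∑ j, Pc a j * U j l) = 0 := congrFun hl0 a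
          rw [ek, el]
          ring
        filter_upwards [hreflV ((Real.sqrt 2)⁻¹ • (fun i => U i k - U i l)) hunit hker i j]
          with ω hω
        intro _ _ _
        exact hω
      · exact Filter.Eventually.of_forall fun ω hkl hk hl => absurd ⟨hkl, hk, hl⟩ hcond
    filter_upwards [A1, A2, A3, A4] with ω h1 h2 h3 h4
    set M : Matrix (Fin p) (Fin p) ℝ :=
      Matrix.of fun i j => (μ[fun ω' => Q.mulVec (Z ω') i * Q.mulVec (Z ω') j|m]) ω with hMdef
    have hcond1 : M = (1 - Pc) * M * (1 - Pc)ᵀ := by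
      ext i j
      rw [conj_entry]
      exact h2 i j
    have hcond2 : ∀ k : Fin p, d k = 0 →
        M = (1 - (2:ℝ) • vecMulVec (fun i => U i k) (fun i => U i k)) * M *
            (1 - (2:ℝ) • vecMulVec (fun i => U i k) (fun i => U i k))ᵀ := by
      intro k hk
      ext i j
      rw [conj_entry]
      exact h3 k i j hk
    have hcond3 : ∀ k l : Fin p, k ≠ l → d k = 0 → d l = 0 →
        M = (1 - (2:ℝ) • vecMulVec ((Real.sqrt 2)⁻¹ • (fun i => U i k - U i l))
              ((Real.sqrt 2)⁻¹ • (fun i => U i k - U i l))) * M *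
            (1 - (2:ℝ) • vecMulVec ((Real.sqrt 2)⁻¹ • (fun i => U i k - U i l))
              ((Real.sqrt 2)⁻¹ • (fun i => U i k - U i l)))ᵀ := by
      intro k l hkl hk hl
      ext i j
      rw [conj_entry]
      exact h4 k l i j hkl hk hl
    obtain ⟨c, hc⟩ := key_linalg Pc U d hU1 hU2 hspec hd01 M hcond1 hcond2 hcond3
    refine ⟨c, ?_⟩
    have hMeq : (Matrix.of fun i j => condVarEntry mΩ μ m Z i j ω) = M := by
      ext i j
      exact h1 i j
    rw [hMeq]
    exact hc
  filter_upwards [main] with ω hω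
  rw [dif_pos hω]
  exact hω.choose_spec
end

section
/- Let Z be a square-integrable random vector in R^p and Y a random variable. Assume (i) Y ⫫ Z | P_c Z (existence of the central subspace with orthogonal projection P_c onto E_c of dimension d), (ii) the linearity condition Q_c E[Z | P_c Z] = 0 a.s., and (iii) the diagonal conditional variance condition Var(Z | P_c Z) = λ Q_c a.s. Then for every measurable function ψ : R → R with E‖ZZ^T ψ(Y)‖ < ∞, the column space of the matrix M_ψ − λ*_ψ I is contained in E_c, where M_ψ = E[Z Z^T ψ(Y)] and λ*_ψ = E[‖Q_c Z‖² ψ(Y)] / (p − d). Equivalently, every vector of E_c^⊥ is an eigenvector of M_ψ with eigenvalue λ*_ψ. -/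
open MeasureTheory Matrix


lemma memL2_condexp {α : Type*} {m m0 : MeasurableSpace α} (hm : m ≤ m0)
    {μ : Measure α} [IsFiniteMeasure μ] {f : α → ℝ} (hf : MemLp f 2 μ) :
    MemLp (μ[f|m]) 2 μ := by
  have hfi : Integrable f μ := hf.integrable one_le_two
  set g := condExpL2 ℝ ℝ hm (hf.toLp f) with hg
  have hgmeas : AEStronglyMeasurable[m] (g : α → ℝ) μ := lpMeas.aestronglyMeasurable g
  have hgint : Integrable (g : α → ℝ) μ := (Lp.memLp (g : Lp ℝ 2 μ)).integrable one_le_two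
  have heq : (g : α → ℝ) =ᵐ[μ] μ[f|m] := by
    refine ae_eq_condExp_of_forall_setIntegral_eq hm hfi
      (fun s _ _ => hgint.integrableOn) (fun s hs hμs => ?_) hgmeas
    rw [integral_condExpL2_eq hm (hf.toLp f) hs hμs.ne]
    exact setIntegral_congr_ae (hm s hs) ((hf.coeFn_toLp).mono fun x hx _ => hx)
  exact (Lp.memLp (g : Lp ℝ 2 μ)).ae_eq heq

lemma trace_of_idem {p : ℕ} (P : Matrix (Fin p) (Fin p) ℝ) (h : P * P = P) :
    Matrix.trace P = (P.rank : ℝ) := by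
  have hproj : LinearMap.IsProj (LinearMap.range P.mulVecLin) P.mulVecLin := by
    constructor
    · intro x; exact LinearMap.mem_range_self _ x
    · rintro x ⟨y, rfl⟩
      have : P.mulVecLin.comp P.mulVecLin = P.mulVecLin := by
        rw [← Matrix.mulVecLin_mul, h]
      exact LinearMap.congr_fun this y
  have ht := hproj.trace
  rw [LinearMap.trace_eq_matrix_trace ℝ (Pi.basisFun ℝ (Fin p))] at ht
  rw [LinearMap.toMatrix_eq_toMatrix'] at ht
  rw [show P.mulVecLin = Matrix.toLin' P from rfl, LinearMap.toMatrix'_toLin'] at ht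
  rw [ht, Matrix.rank]
  rfl


lemma measurable_mulVec {Ω : Type*} {mΩ : MeasurableSpace Ω} {p : ℕ}
    (P : Matrix (Fin p) (Fin p) ℝ) {Z : Ω → Fin p → ℝ} (hZ : Measurable Z) :
    Measurable fun ω => P.mulVec (Z ω) := by
  refine measurable_pi_lambda _ fun i => ?_
  simp only [Matrix.mulVec, dotProduct]
  exact Finset.measurable_sum _ fun k _ => ((measurable_pi_apply k).comp hZ).const_mul _

lemma ci_transfer {Ω : Type*} {mΩ : MeasurableSpace Ω} {μ : Measure Ω} [IsProbabilityMeasure μ]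
    {mZ m : MeasurableSpace Ω} (hmZle : mZ ≤ mΩ) (hmle : m ≤ mΩ)
    {Y : Ω → ℝ} (hYmeas : Measurable[mΩ] Y)
    (hCS : ∀ A : Set ℝ, MeasurableSet A →
      μ[fun ω => Set.indicator A (fun _ => (1:ℝ)) (Y ω) | mZ]
        =ᵐ[μ] μ[fun ω => Set.indicator A (fun _ => (1:ℝ)) (Y ω) | m])
    {F : Ω → ℝ} (hFmeas : StronglyMeasurable[mZ] F) (hFint : Integrable F μ)
    {h : ℝ → ℝ} (hhmeas : Measurable h) {C : ℝ} (hbd : ∀ x, |h x| ≤ C) :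
    ∫ ω, F ω * h (Y ω) ∂μ = ∫ ω, (μ[F|m]) ω * h (Y ω) ∂μ := by
  have hFmeas0 : AEStronglyMeasurable[mΩ] F μ := (hFmeas.mono hmZle).aestronglyMeasurable
  have hGmeas0 : AEStronglyMeasurable[mΩ] (μ[F|m]) μ :=
    (stronglyMeasurable_condExp.mono hmle).aestronglyMeasurable
  have hGint : Integrable (μ[F|m]) μ := integrable_condExp
  -- bounded multiplication integrability helper
  have hmul_int : ∀ (G : Ω → ℝ), Integrable G μ → AEStronglyMeasurable[mΩ] G μ →
      ∀ (g : Ω → ℝ), AEStronglyMeasurable[mΩ] g μ → ∀ c : ℝ, (∀ᵐ ω ∂μ, |g ω| ≤ c) →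
      Integrable (fun ω => G ω * g ω) μ := by
    intro G hGint hGmeas g hgmeas c hc
    refine Integrable.mono' (hGint.abs.const_mul c) (hGmeas.mul hgmeas) ?_
    filter_upwards [hc] with ω hω
    rw [Real.norm_eq_abs, abs_mul]
    calc |G ω| * |g ω| ≤ |G ω| * c := by
            exact mul_le_mul_of_nonneg_left (hω) (abs_nonneg _)
      _ = c * |G ω| := mul_comm _ _
  -- Step 1: indicator case
  have ind : ∀ A : Set ℝ, MeasurableSet A →
      ∫ ω, F ω * Set.indicator A (fun _ => (1:ℝ)) (Y ω) ∂μ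
        = ∫ ω, (μ[F|m]) ω * Set.indicator A (fun _ => (1:ℝ)) (Y ω) ∂μ := by
    intro A hA
    set IA : Ω → ℝ := fun ω => Set.indicator A (fun _ => (1:ℝ)) (Y ω) with hIA
    have hIAmeas : Measurable[mΩ] IA := (measurable_one.indicator hA).comp hYmeas
    have hIAbd : ∀ ω, |IA ω| ≤ 1 := by
      intro ω
      by_cases hy : Y ω ∈ A <;> simp [IA, Set.indicator, hy]
    have hIAmeas0 : AEStronglyMeasurable[mΩ] IA μ := hIAmeas.aestronglyMeasurable (μ := μ)
    have hIAint : Integrable IA μ := by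
      refine Integrable.mono' (integrable_const 1) hIAmeas0 ?_
      exact ae_of_all μ fun ω => by rw [Real.norm_eq_abs]; exact hIAbd ω
    have hFIAint : Integrable (fun ω => F ω * IA ω) μ :=
      hmul_int F hFint hFmeas0 IA hIAmeas0 1 (ae_of_all μ hIAbd)
    -- pull out at mZ
    have h1 : μ[fun ω => F ω * IA ω | mZ] =ᵐ[μ] fun ω => F ω * (μ[IA|mZ]) ω := by
      have := condExp_mul_of_stronglyMeasurable_left (μ := μ) (m := mZ) hFmeas hFIAint hIAint
      exact this
    have e1 : ∫ ω, F ω * IA ω ∂μ = ∫ ω, F ω * (μ[IA|mZ]) ω ∂μ :=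
      (integral_condExp (μ := μ) (f := fun ω => F ω * IA ω) hmZle).symm.trans
        (integral_congr_ae h1)
    -- swap σ-algebras via hCS
    have e2 : ∫ ω, F ω * (μ[IA|mZ]) ω ∂μ = ∫ ω, F ω * (μ[IA|m]) ω ∂μ := by
      refine integral_congr_ae ?_
      filter_upwards [hCS A hA] with ω hω
      rw [hω]
    -- pull out at m, twice
    have hbd1' : ∀ᵐ ω ∂μ, |(μ[IA|m]) ω| ≤ (1:ℝ) := by
      have := ae_bdd_condExp_of_ae_bdd (m := m) (μ := μ) (R := 1) (f := IA)
        (ae_of_all μ fun ω => by simpa using hIAbd ω)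
      simpa using this
    have hcondIAmeas : AEStronglyMeasurable[mΩ] (μ[IA|m]) μ :=
      (stronglyMeasurable_condExp.mono hmle).aestronglyMeasurable
    have hFcondIAint : Integrable (fun ω => (μ[IA|m]) ω * F ω) μ := by
      have := hmul_int F hFint hFmeas0 (μ[IA|m]) hcondIAmeas 1 hbd1'
      exact this.congr (ae_of_all μ fun ω => mul_comm _ _)
    have h2 : μ[fun ω => (μ[IA|m]) ω * F ω | m] =ᵐ[μ] fun ω => (μ[IA|m]) ω * (μ[F|m]) ω :=
      condExp_mul_of_stronglyMeasurable_left stronglyMeasurable_condExp hFcondIAint hFint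
    have e3 : ∫ ω, F ω * (μ[IA|m]) ω ∂μ = ∫ ω, (μ[IA|m]) ω * (μ[F|m]) ω ∂μ := by
      have h0 : ∫ ω, F ω * (μ[IA|m]) ω ∂μ = ∫ ω, (μ[IA|m]) ω * F ω ∂μ :=
        integral_congr_ae (ae_of_all μ fun ω => mul_comm _ _)
      exact h0.trans ((integral_condExp (μ := μ)
        (f := fun ω => (μ[IA|m]) ω * F ω) hmle).symm.trans (integral_congr_ae h2))
    have hGIAint : Integrable (fun ω => (μ[F|m]) ω * IA ω) μ :=
      hmul_int (μ[F|m]) hGint hGmeas0 IA hIAmeas0 1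
        (ae_of_all μ hIAbd)
    have h3 : μ[fun ω => (μ[F|m]) ω * IA ω | m] =ᵐ[μ] fun ω => (μ[F|m]) ω * (μ[IA|m]) ω :=
      condExp_mul_of_stronglyMeasurable_left stronglyMeasurable_condExp hGIAint hIAint
    have e4 : ∫ ω, (μ[F|m]) ω * IA ω ∂μ = ∫ ω, (μ[F|m]) ω * (μ[IA|m]) ω ∂μ :=
      (integral_condExp (μ := μ) (f := fun ω => (μ[F|m]) ω * IA ω) hmle).symm.trans
        (integral_congr_ae h3)
    rw [e1, e2, e3, e4]
    exact integral_congr_ae (ae_of_all μ fun ω => mul_comm _ _)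
  -- Step 2: simple functions
  have hsimple : ∀ s : SimpleFunc ℝ ℝ,
      ∫ ω, F ω * s (Y ω) ∂μ = ∫ ω, (μ[F|m]) ω * s (Y ω) ∂μ := by
    intro s
    induction s using SimpleFunc.induction with
    | const c hA =>
      rename_i A
      have hre : ∀ G : Ω → ℝ,
          (fun ω => G ω * (SimpleFunc.piecewise A hA (SimpleFunc.const ℝ c)
            (SimpleFunc.const ℝ 0)) (Y ω))
          = fun ω => c * (G ω * Set.indicator A (fun _ => (1:ℝ)) (Y ω)) := by
        intro G; funext ω
        by_cases hy : Y ω ∈ A <;>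
          simp [SimpleFunc.piecewise_apply, Set.indicator, hy] <;> ring
      rw [hre F, hre (μ[F|m]), integral_const_mul, integral_const_mul, ind A hA]
    | @add f g hdisj hf hg =>
      have hint : ∀ (s' : SimpleFunc ℝ ℝ) (G : Ω → ℝ), Integrable G μ →
          AEStronglyMeasurable[mΩ] G μ → Integrable (fun ω => G ω * s' (Y ω)) μ := by
        intro s' G hGi hGm
        obtain ⟨Cs, hCs⟩ := s'.exists_forall_norm_le
        exact hmul_int G hGi hGm _ ((s'.measurable.comp hYmeas).aestronglyMeasurable (μ := μ))
          Cs (ae_of_all μ fun ω => by simpa [Real.norm_eq_abs] using hCs (Y ω))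
      have hfg : ∀ G : Ω → ℝ,
          (fun ω => G ω * (f + g) (Y ω))
            = fun ω => G ω * f (Y ω) + G ω * g (Y ω) := by
        intro G; funext ω; simp [mul_add]
      rw [hfg F, hfg (μ[F|m]),
        integral_add (hint f F hFint hFmeas0) (hint g F hFint hFmeas0),
        integral_add (hint f _ hGint hGmeas0) (hint g _ hGint hGmeas0), hf, hg]
  -- Step 3: bounded measurable h via approximation
  have hC0 : 0 ≤ C := le_trans (abs_nonneg _) (hbd 0)
  set sn : ℕ → SimpleFunc ℝ ℝ :=
    fun n => SimpleFunc.approxOn h hhmeas Set.univ 0 (Set.mem_univ 0) n with hsn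
  have hsnbd : ∀ n x, ‖sn n x‖ ≤ C + C := fun n x =>
    (SimpleFunc.norm_approxOn_zero_le hhmeas (Set.mem_univ 0) x n).trans
      (add_le_add ((Real.norm_eq_abs _).le.trans_eq' rfl |>.trans (hbd x))
        ((Real.norm_eq_abs _).le.trans_eq' rfl |>.trans (hbd x)))
  have hsntend : ∀ x, Filter.Tendsto (fun n => sn n x) Filter.atTop (nhds (h x)) :=
    fun x => SimpleFunc.tendsto_approxOn hhmeas (Set.mem_univ 0) (by simp)
  have hlim : ∀ (G : Ω → ℝ), Integrable G μ → AEStronglyMeasurable[mΩ] G μ →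
      Filter.Tendsto (fun n => ∫ ω, G ω * sn n (Y ω) ∂μ) Filter.atTop
        (nhds (∫ ω, G ω * h (Y ω) ∂μ)) := by
    intro G hGi hGm
    refine tendsto_integral_of_dominated_convergence (fun ω => |G ω| * (C + C))
      (fun n => hGm.mul ((sn n).measurable.comp hYmeas).aestronglyMeasurable)
      (hGi.abs.mul_const _) (fun n => ae_of_all μ fun ω => ?_)
      (ae_of_all μ fun ω => (hsntend (Y ω)).const_mul (G ω))
    rw [Real.norm_eq_abs, abs_mul]
    exact mul_le_mul_of_nonneg_left (by simpa [Real.norm_eq_abs] using hsnbd n (Y ω))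
      (abs_nonneg _)
  exact tendsto_nhds_unique (hlim F hFint hFmeas0)
    (((hlim (μ[F|m]) hGint hGmeas0)).congr fun n => (hsimple (sn n)).symm)

/-- TF2 basic theorem: under the central subspace structure, the linearity condition and the
diagonal conditional variance condition, for every `ψ` the column space of
`M_ψ - λ*_ψ I` lies in `E_c`; equivalently, every vector of `E_c^⊥` is an eigenvector of
`M_ψ = E[Z Zᵀ ψ(Y)]` with eigenvalue `λ*_ψ = E[‖Q_c Z‖² ψ(Y)] / (p - d)`. -/
theorem tf2_psi_space_in_central_subspace
    {Ω : Type*} [mΩ : MeasurableSpace Ω] (μ : Measure Ω) [IsProbabilityMeasure μ]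
    (p d : ℕ) (Z : Ω → (Fin p → ℝ)) (hZmeas : Measurable Z)
    (hZint2 : ∀ i j, Integrable (fun ω => Z ω i * Z ω j) μ)
    (Y : Ω → ℝ) (hYmeas : Measurable Y)
    (Pc : Matrix (Fin p) (Fin p) ℝ) (hPcsymm : Pc.IsSymm) (hPcidem : Pc * Pc = Pc)
    (hPcrank : Pc.rank = d) (hdp : d < p)
    (mZ : MeasurableSpace Ω) (hmZ : mZ = MeasurableSpace.comap Z inferInstance)
    (m : MeasurableSpace Ω)
    (hm : m = MeasurableSpace.comap (fun ω => Pc.mulVec (Z ω)) inferInstance)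
    -- (i) existence of the CS: `Y ⫫ Z | P_c Z`
    (hCS : ∀ A : Set ℝ, MeasurableSet A →
      μ[fun ω => Set.indicator A (fun _ => (1 : ℝ)) (Y ω) | mZ]
        =ᵐ[μ] μ[fun ω => Set.indicator A (fun _ => (1 : ℝ)) (Y ω) | m])
    -- (ii) linearity condition
    (hlin : ∀ᵐ ω ∂μ, (1 - Pc).mulVec (fun i => (μ[fun ω' => Z ω' i | m]) ω) = 0)
    -- (iii) diagonal conditional variance condition
    (hDCV : ∃ lam : Ω → ℝ, ∀ᵐ ω ∂μ,
      (Matrix.of fun i j => condVarEntry mΩ μ m Z i j ω) = lam ω • (1 - Pc)) :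
    ∀ ψ : ℝ → ℝ, Measurable ψ →
      (∀ i j, Integrable (fun ω => Z ω i * Z ω j * ψ (Y ω)) μ) →
      ∀ Mψ : Matrix (Fin p) (Fin p) ℝ,
        Mψ = Matrix.of (fun i j => ∫ ω, Z ω i * Z ω j * ψ (Y ω) ∂μ) →
        ∀ lamψ : ℝ,
          lamψ = (∫ ω, (∑ j, ((1 - Pc).mulVec (Z ω) j) ^ 2) * ψ (Y ω) ∂μ) / ((p : ℝ) - d) →
          LinearMap.range (Mψ - lamψ • 1).mulVecLin ≤ LinearMap.range Pc.mulVecLin ∧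
            ∀ v : Fin p → ℝ, Pc.mulVec v = 0 → Mψ.mulVec v = lamψ • v := by
  classical
  intro ψ hψmeas hψint Mψ hMψ lamψ hlamψ
  obtain ⟨lam, hDCVlam⟩ := hDCV
  set Q : Matrix (Fin p) (Fin p) ℝ := 1 - Pc with hQdef
  -- matrix algebra facts
  have hPcT : Pcᵀ = Pc := hPcsymm
  have hQsymm : Qᵀ = Q := by rw [hQdef, Matrix.transpose_sub, Matrix.transpose_one, hPcT]
  have hQQ : Q * Q = Q := by
    rw [hQdef, sub_mul, mul_sub, mul_sub, one_mul, one_mul, mul_one, hPcidem]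
    abel
  have hQmulQ_entry : ∀ i j, ∑ k, Q i k * Q k j = Q i j := by
    intro i j
    have h := congrFun (congrFun hQQ i) j
    simpa [Matrix.mul_apply] using h
  -- σ-algebras
  have hPcZmeas : Measurable[mΩ] fun ω => Pc.mulVec (Z ω) := measurable_mulVec Pc hZmeas
  have hmle : m ≤ mΩ := hm ▸ measurable_iff_comap_le.mp hPcZmeas
  have hmZle : mZ ≤ mΩ := hmZ ▸ measurable_iff_comap_le.mp hZmeas
  have hZmZ : Measurable[mZ] Z := by rw [hmZ]; exact comap_measurable Z
  have hZkmZ : ∀ k, Measurable[mZ] fun ω => Z ω k := fun k => (measurable_pi_apply k).comp hZmZ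
  -- L² facts
  have hZL2 : ∀ i, MemLp (fun ω => Z ω i) 2 μ := by
    intro i
    refine (memLp_two_iff_integrable_sq
      (((measurable_pi_apply i).comp hZmeas).aestronglyMeasurable (μ := μ))).mpr ?_
    simpa [sq] using hZint2 i i
  have hZi : ∀ i, Integrable (fun ω => Z ω i) μ := fun i => (hZL2 i).integrable one_le_two
  set cz : Fin p → Ω → ℝ := fun i => μ[fun ω => Z ω i | m] with hcz
  have hczL2 : ∀ i, MemLp (cz i) 2 μ := fun i => memL2_condexp hmle (hZL2 i)
  have hczm : ∀ i, StronglyMeasurable[m] (cz i) := fun i => stronglyMeasurable_condExp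
  have hpqr : (1 : ENNReal) / 1 = 1 / 2 + 1 / 2 := by
    rw [ENNReal.add_halves]; norm_num
  have hmul21 : ∀ f g : Ω → ℝ, MemLp f 2 μ → MemLp g 2 μ →
      Integrable (fun ω => f ω * g ω) μ := by
    intro f g hf hg
    have h := (hg.smul hf : MemLp (f • g) 1 μ)
    exact (h.integrable le_rfl).congr (ae_of_all μ fun ω => rfl)
  -- conditional expectation of products
  have hZZcond : ∀ k j, μ[fun ω => Z ω k * Z ω j | m] =ᵐ[μ]
      fun ω => lam ω * Q k j + cz k ω * cz j ω := by
    intro k j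
    have hint1 : Integrable (fun ω => cz j ω * Z ω k) μ := hmul21 _ _ (hczL2 j) (hZL2 k)
    have hint2 : Integrable (fun ω => cz k ω * Z ω j) μ := hmul21 _ _ (hczL2 k) (hZL2 j)
    have hint3 : Integrable (fun ω => cz k ω * cz j ω) μ := hmul21 _ _ (hczL2 k) (hczL2 j)
    have hint23 : Integrable ((fun ω => cz k ω * Z ω j) - fun ω => cz k ω * cz j ω) μ :=
      hint2.sub hint3
    have hint123 : Integrable ((fun ω => cz j ω * Z ω k) +
        ((fun ω => cz k ω * Z ω j) - fun ω => cz k ω * cz j ω)) μ := hint1.add hint23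
    have hWeq : (fun ω => (Z ω k - cz k ω) * (Z ω j - cz j ω))
        = (fun ω => Z ω k * Z ω j) - ((fun ω => cz j ω * Z ω k) +
            ((fun ω => cz k ω * Z ω j) - fun ω => cz k ω * cz j ω)) := by
      funext ω
      simp only [Pi.sub_apply, Pi.add_apply]
      ring
    have hcondW : μ[fun ω => (Z ω k - cz k ω) * (Z ω j - cz j ω) | m] =ᵐ[μ]
        μ[fun ω => Z ω k * Z ω j | m] - (μ[fun ω => cz j ω * Z ω k | m] +
          (μ[fun ω => cz k ω * Z ω j | m] - μ[fun ω => cz k ω * cz j ω | m])) := by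
      rw [hWeq]
      refine (condExp_sub (hZint2 k j) hint123 _).trans ?_
      refine Filter.EventuallyEq.sub (Filter.EventuallyEq.refl _ _) ?_
      refine (condExp_add hint1 hint23 _).trans ?_
      refine Filter.EventuallyEq.add (Filter.EventuallyEq.refl _ _) ?_
      exact condExp_sub hint2 hint3 _
    have hpull1 : μ[fun ω => cz j ω * Z ω k | m] =ᵐ[μ] fun ω => cz j ω * cz k ω :=
      condExp_mul_of_stronglyMeasurable_left (hczm j) hint1 (hZi k)
    have hpull2 : μ[fun ω => cz k ω * Z ω j | m] =ᵐ[μ] fun ω => cz k ω * cz j ω :=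
      condExp_mul_of_stronglyMeasurable_left (hczm k) hint2 (hZi j)
    have hpull3 : μ[fun ω => cz k ω * cz j ω | m] =ᵐ[μ] fun ω => cz k ω * cz j ω := by
      have he : μ[fun ω => cz k ω * cz j ω | m] = fun ω => cz k ω * cz j ω :=
        condExp_of_stronglyMeasurable hmle
          (((hczm k).mul (hczm j)) : StronglyMeasurable[m] fun ω => cz k ω * cz j ω) hint3
      rw [he]
    have hCVE : condVarEntry mΩ μ m Z k j
        = μ[fun ω => (Z ω k - cz k ω) * (Z ω j - cz j ω) | m] := rfl
    have hDCVe : ∀ᵐ ω ∂μ, condVarEntry mΩ μ m Z k j ω = lam ω * Q k j := by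
      filter_upwards [hDCVlam] with ω hω
      have h := congrFun (congrFun hω k) j
      simpa [Matrix.smul_apply, smul_eq_mul] using h
    filter_upwards [hcondW, hpull1, hpull2, hpull3, hDCVe] with ω h1 h2 h3 h4 h5
    have h6 : (μ[fun ω => (Z ω k - cz k ω) * (Z ω j - cz j ω) | m]) ω = lam ω * Q k j := by
      rw [← hCVE] at *; exact h5
    simp only [Pi.sub_apply, Pi.add_apply] at h1
    rw [h2, h3, h4] at h1
    rw [h6] at h1
    linarith [h1]
  -- conditional expectation of Q-weighted products
  have hQZcond : ∀ i j, μ[fun ω => ∑ k, Q i k * (Z ω k * Z ω j) | m] =ᵐ[μ]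
      fun ω => lam ω * Q i j := by
    intro i j
    have hsumEq : (fun ω => ∑ k, Q i k * (Z ω k * Z ω j))
        = ∑ k, fun ω => Q i k * (Z ω k * Z ω j) := by
      funext ω; simp
    have hsum : μ[fun ω => ∑ k, Q i k * (Z ω k * Z ω j) | m] =ᵐ[μ]
        ∑ k, μ[fun ω => Q i k * (Z ω k * Z ω j) | m] := by
      rw [hsumEq]
      exact condExp_finsetSum (fun k _ => (hZint2 k j).const_mul _) _
    have hterm : ∀ k : Fin p, μ[fun ω => Q i k * (Z ω k * Z ω j) | m] =ᵐ[μ]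
        fun ω => Q i k * (lam ω * Q k j + cz k ω * cz j ω) := by
      intro k
      have hs : μ[fun ω => Q i k * (Z ω k * Z ω j) | m] =ᵐ[μ]
          fun ω => Q i k * (μ[fun ω' => Z ω' k * Z ω' j | m]) ω := by
        have h := condExp_smul (μ := μ) (m := m) (Q i k) (fun ω => Z ω k * Z ω j)
        exact h
      refine hs.trans ?_
      filter_upwards [hZZcond k j] with ω hω
      rw [hω]
    have hae : ∀ᵐ ω ∂μ, ∀ k : Fin p, (μ[fun ω' => Q i k * (Z ω' k * Z ω' j) | m]) ω
        = Q i k * (lam ω * Q k j + cz k ω * cz j ω) := ae_all_iff.mpr fun k => hterm k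
    refine hsum.trans ?_
    filter_upwards [hae, hlin] with ω h1 h2
    have h3 : ∑ k, Q i k * cz k ω = 0 := by
      have h4 := congrFun h2 i
      simpa [Matrix.mulVec, dotProduct] using h4
    simp only [Finset.sum_apply]
    rw [Finset.sum_congr rfl fun k _ => h1 k]
    have : ∑ k, Q i k * (lam ω * Q k j + cz k ω * cz j ω)
        = lam ω * (∑ k, Q i k * Q k j) + (∑ k, Q i k * cz k ω) * cz j ω := by
      simp only [mul_add]
      rw [Finset.sum_add_distrib, Finset.mul_sum, Finset.sum_mul]
      congr 1
      · exact Finset.sum_congr rfl fun k _ => by ring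
      · exact Finset.sum_congr rfl fun k _ => by ring
    rw [this, hQmulQ_entry i j, h3]
    ring
  -- algebraic identity for the squared norm
  have hGalg : ∀ z : Fin p → ℝ, ∑ jj, (Q.mulVec z jj)^2 = ∑ k, ∑ l, Q k l * (z l * z k) := by
    intro z
    have h1 : ∑ jj, (Q.mulVec z jj)^2 = Q.mulVec z ⬝ᵥ Q.mulVec z := by
      simp [dotProduct, sq]
    have h2 : Q.mulVec z ⬝ᵥ Q.mulVec z = z ⬝ᵥ Q.mulVec z := by
      calc Q.mulVec z ⬝ᵥ Q.mulVec z = Matrix.vecMul (Q.mulVec z) Q ⬝ᵥ z :=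
            dotProduct_mulVec _ _ _
        _ = Q.mulVec (Q.mulVec z) ⬝ᵥ z := by rw [← Matrix.mulVec_transpose, hQsymm]
        _ = (Q * Q).mulVec z ⬝ᵥ z := by rw [Matrix.mulVec_mulVec]
        _ = Q.mulVec z ⬝ᵥ z := by rw [hQQ]
        _ = z ⬝ᵥ Q.mulVec z := dotProduct_comm _ _
    rw [h1, h2]
    simp only [dotProduct, Matrix.mulVec, Finset.mul_sum]
    refine Finset.sum_congr rfl fun k _ => Finset.sum_congr rfl fun l _ => by ring
  -- trace of Q
  have htrQ : ∑ k, Q k k = (p:ℝ) - d := by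
    have h1 : Matrix.trace Pc = (d:ℝ) := by
      rw [trace_of_idem Pc hPcidem, hPcrank]
    have h2 : Matrix.trace Q = Matrix.trace (1 : Matrix (Fin p) (Fin p) ℝ) - Matrix.trace Pc := by
      rw [hQdef, Matrix.trace_sub]
    have h3 : ∑ k, Q k k = Matrix.trace Q := rfl
    rw [h3, h2, h1, Matrix.trace_one]
    simp
  -- conditional expectation of the squared norm
  set G' : Ω → ℝ := fun ω => ∑ k, ∑ l, Q k l * (Z ω l * Z ω k) with hG'def
  have hG'int : Integrable G' μ :=
    integrable_finset_sum _ fun k _ =>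
      integrable_finset_sum _ fun l _ => (hZint2 l k).const_mul _
  have hGcond : μ[G' | m] =ᵐ[μ] fun ω => lam ω * ((p:ℝ) - d) := by
    have hsplit : G' = ∑ k, fun ω => ∑ l, Q k l * (Z ω l * Z ω k) := by
      funext ω; simp [G']
    have hint : ∀ k : Fin p, Integrable (fun ω => ∑ l, Q k l * (Z ω l * Z ω k)) μ :=
      fun k => integrable_finset_sum _ fun l _ => (hZint2 l k).const_mul _
    have h1 : μ[G' | m] =ᵐ[μ] ∑ k, μ[fun ω => ∑ l, Q k l * (Z ω l * Z ω k) | m] := by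
      rw [hsplit]
      exact condExp_finsetSum (fun k _ => hint k) _
    refine h1.trans ?_
    have h2 : ∀ᵐ ω ∂μ, ∀ k : Fin p,
        (μ[fun ω' => ∑ l, Q k l * (Z ω' l * Z ω' k) | m]) ω = lam ω * Q k k :=
      ae_all_iff.mpr fun k => hQZcond k k
    filter_upwards [h2] with ω hω
    simp only [Finset.sum_apply]
    rw [Finset.sum_congr rfl fun k _ => hω k, ← Finset.mul_sum, htrQ]
  -- the numerator family
  set F : Fin p → Fin p → Ω → ℝ := fun i j ω => ∑ k, Q i k * (Z ω k * Z ω j) with hFdef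
  have hFint : ∀ i j, Integrable (F i j) μ := fun i j =>
    integrable_finset_sum _ fun k _ => (hZint2 k j).const_mul _
  have hFsm : ∀ i j, StronglyMeasurable[mZ] (F i j) := by
    intro i j
    have h : Measurable[mZ] (F i j) :=
      Finset.measurable_sum _ fun k _ => (((hZkmZ k).mul (hZkmZ j)).const_mul _)
    exact h.stronglyMeasurable
  have hG'sm : StronglyMeasurable[mZ] G' := by
    have h : Measurable[mZ] G' :=
      Finset.measurable_sum _ fun k _ =>
        Finset.measurable_sum _ fun l _ => (((hZkmZ l).mul (hZkmZ k)).const_mul _)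
    exact h.stronglyMeasurable
  have hFψint : ∀ i j, Integrable (fun ω => F i j ω * ψ (Y ω)) μ := by
    intro i j
    have he : (fun ω => F i j ω * ψ (Y ω))
        = fun ω => ∑ k, Q i k * (Z ω k * Z ω j * ψ (Y ω)) := by
      funext ω
      rw [hFdef]
      simp only [Finset.sum_mul]
      exact Finset.sum_congr rfl fun k _ => by ring
    rw [he]
    exact integrable_finset_sum _ fun k _ => (hψint k j).const_mul _
  have hG'ψint : Integrable (fun ω => G' ω * ψ (Y ω)) μ := by
    have he : (fun ω => G' ω * ψ (Y ω))
        = fun ω => ∑ k, ∑ l, Q k l * (Z ω l * Z ω k * ψ (Y ω)) := by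
      funext ω
      simp only [hG'def]
      rw [Finset.sum_mul]
      refine Finset.sum_congr rfl fun k _ => ?_
      rw [Finset.sum_mul]
      exact Finset.sum_congr rfl fun l _ => by ring
    rw [he]
    exact integrable_finset_sum _ fun k _ =>
      integrable_finset_sum _ fun l _ => (hψint l k).const_mul _
  -- truncations of ψ
  set ψn : ℕ → ℝ → ℝ := fun n x => max (-(n:ℝ)) (min (n:ℝ) (ψ x)) with hψndef
  have hψnmeas : ∀ n, Measurable (ψn n) := fun n =>
    measurable_const.max (measurable_const.min hψmeas)
  have hψnbd : ∀ n x, |ψn n x| ≤ (n:ℝ) := by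
    intro n x
    rw [abs_le]
    refine ⟨le_max_left _ _, max_le ((neg_nonpos.mpr (Nat.cast_nonneg n)).trans (Nat.cast_nonneg n)) (min_le_left _ _)⟩
  have hψnbd2 : ∀ n x, |ψn n x| ≤ |ψ x| := by
    intro n x
    rw [abs_le]
    constructor
    · refine le_trans (le_min ?_ (neg_abs_le _)) (le_max_right _ _)
      exact le_trans (neg_nonpos.mpr (abs_nonneg _)) (Nat.cast_nonneg n)
    · refine max_le ?_ ((min_le_right _ _).trans (le_abs_self _))
      exact le_trans (neg_nonpos.mpr (Nat.cast_nonneg n)) (abs_nonneg _)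
  have hψntend : ∀ x, Filter.Tendsto (fun n => ψn n x) Filter.atTop (nhds (ψ x)) := by
    intro x
    obtain ⟨N, hN⟩ := exists_nat_ge |ψ x|
    refine tendsto_atTop_of_eventually_const (i₀ := N) fun n hn => ?_
    have h1 : |ψ x| ≤ (n:ℝ) := hN.trans (Nat.cast_le.mpr hn)
    have h2 : min (n:ℝ) (ψ x) = ψ x := min_eq_right ((le_abs_self _).trans h1)
    have h3 : -(n:ℝ) ≤ ψ x := le_trans (neg_le_neg h1) (neg_abs_le _)
    simp only [hψndef]
    rw [h2]
    exact max_eq_right h3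
  -- per-truncation identity
  have hstep : ∀ (n : ℕ) (i j : Fin p),
      ((p:ℝ) - d) * ∫ ω, F i j ω * ψn n (Y ω) ∂μ
        = Q i j * ∫ ω, G' ω * ψn n (Y ω) ∂μ := by
    intro n i j
    rw [ci_transfer hmZle hmle hYmeas hCS (hFsm i j) (hFint i j) (hψnmeas n)
      (fun x => hψnbd n x)]
    rw [ci_transfer hmZle hmle hYmeas hCS hG'sm hG'int (hψnmeas n) (fun x => hψnbd n x)]
    rw [← integral_const_mul, ← integral_const_mul]
    refine integral_congr_ae ?_
    filter_upwards [hQZcond i j, hGcond] with ω h1 h2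
    have h1' : (μ[F i j | m]) ω = lam ω * Q i j := h1
    have h2' : (μ[G' | m]) ω = lam ω * ((p:ℝ) - d) := h2
    rw [h1', h2']
    ring
  -- limit identities
  have hlimF : ∀ i j, Filter.Tendsto (fun n => ∫ ω, F i j ω * ψn n (Y ω) ∂μ)
      Filter.atTop (nhds (∫ ω, F i j ω * ψ (Y ω) ∂μ)) := by
    intro i j
    refine tendsto_integral_of_dominated_convergence
      (fun ω => |F i j ω * ψ (Y ω)|)
      (fun n => (((hFsm i j).mono hmZle).aestronglyMeasurable).mul
        ((hψnmeas n).comp hYmeas).aestronglyMeasurable)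
      ((hFψint i j).abs) (fun n => ae_of_all μ fun ω => ?_)
      (ae_of_all μ fun ω => (hψntend (Y ω)).const_mul (F i j ω))
    simp only [Real.norm_eq_abs, abs_mul]
    exact mul_le_mul_of_nonneg_left (hψnbd2 n (Y ω)) (abs_nonneg _)
  have hlimG : Filter.Tendsto (fun n => ∫ ω, G' ω * ψn n (Y ω) ∂μ)
      Filter.atTop (nhds (∫ ω, G' ω * ψ (Y ω) ∂μ)) := by
    refine tendsto_integral_of_dominated_convergence
      (fun ω => |G' ω * ψ (Y ω)|)
      (fun n => ((hG'sm.mono hmZle).aestronglyMeasurable).mul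
        ((hψnmeas n).comp hYmeas).aestronglyMeasurable)
      (hG'ψint.abs) (fun n => ae_of_all μ fun ω => ?_)
      (ae_of_all μ fun ω => (hψntend (Y ω)).const_mul (G' ω))
    simp only [Real.norm_eq_abs, abs_mul]
    exact mul_le_mul_of_nonneg_left (hψnbd2 n (Y ω)) (abs_nonneg _)
  have hkey : ∀ i j, ((p:ℝ) - d) * ∫ ω, F i j ω * ψ (Y ω) ∂μ
      = Q i j * ∫ ω, G' ω * ψ (Y ω) ∂μ := by
    intro i j
    refine tendsto_nhds_unique ((hlimF i j).const_mul _) ?_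
    exact (hlimG.const_mul _).congr fun n => (hstep n i j).symm
  -- identification of lamψ
  have hpd : ((p:ℝ) - d) ≠ 0 := by
    have : (d:ℝ) < p := by exact_mod_cast hdp
    linarith
  have hGint_eq : ∫ ω, G' ω * ψ (Y ω) ∂μ = ((p:ℝ) - d) * lamψ := by
    have he : (fun ω => (∑ jj, ((Q.mulVec (Z ω)) jj)^2) * ψ (Y ω))
        = fun ω => G' ω * ψ (Y ω) := by
      funext ω
      rw [hGalg (Z ω)]
    rw [hlamψ, ← he]
    field_simp
  have hFinal : ∀ i j, ∫ ω, F i j ω * ψ (Y ω) ∂μ = Q i j * lamψ := by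
    intro i j
    have h := hkey i j
    rw [hGint_eq] at h
    apply mul_left_cancel₀ hpd
    rw [h]; ring
  -- the key matrix identity
  have hQM : Q * Mψ = lamψ • Q := by
    ext i j
    rw [Matrix.mul_apply, Matrix.smul_apply, smul_eq_mul, hMψ]
    have h1 : ∫ ω, F i j ω * ψ (Y ω) ∂μ
        = ∑ k, Q i k * ∫ ω, Z ω k * Z ω j * ψ (Y ω) ∂μ := by
      have he : (fun ω => F i j ω * ψ (Y ω))
          = fun ω => ∑ k, Q i k * (Z ω k * Z ω j * ψ (Y ω)) := by
        funext ω
        simp only [hFdef]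
        rw [Finset.sum_mul]
        exact Finset.sum_congr rfl fun k _ => by ring
      rw [he, integral_finset_sum _ fun k _ => (hψint k j).const_mul _]
      exact Finset.sum_congr rfl fun k _ => integral_const_mul _ _
    have h2 : ∑ k, Q i k * (Matrix.of fun i j => ∫ ω, Z ω i * Z ω j * ψ (Y ω) ∂μ) k j
        = ∑ k, Q i k * ∫ ω, Z ω k * Z ω j * ψ (Y ω) ∂μ := rfl
    rw [h2, ← h1, hFinal i j]
    ring
  -- symmetry of Mψ
  have hMsymm : Mψᵀ = Mψ := by
    ext i j
    rw [Matrix.transpose_apply, hMψ]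
    simp only [Matrix.of_apply]
    exact integral_congr_ae (ae_of_all μ fun ω => by ring)
  have hMQ : Mψ * Q = lamψ • Q := by
    have h := congrArg Matrix.transpose hQM
    rwa [Matrix.transpose_mul, hQsymm, hMsymm, Matrix.transpose_smul, hQsymm] at h
  constructor
  · rintro w ⟨v, rfl⟩
    have hPc1 : Pc * (Mψ - lamψ • (1 : Matrix (Fin p) (Fin p) ℝ)) = Mψ - lamψ • 1 := by
      have hPceq : Pc = 1 - Q := by rw [hQdef]; abel
      have hPcM : Pc * Mψ = Mψ - lamψ • Q := by
        rw [hPceq, sub_mul, one_mul, hQM]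
      rw [mul_sub, hPcM, Matrix.mul_smul, mul_one, hQdef, smul_sub]
      abel
    refine ⟨(Mψ - lamψ • 1).mulVecLin v, ?_⟩
    show Pc.mulVec ((Mψ - lamψ • 1).mulVec v) = (Mψ - lamψ • 1).mulVec v
    rw [Matrix.mulVec_mulVec, hPc1]
  · intro v hv
    have hQv : Q.mulVec v = v := by
      rw [hQdef, Matrix.sub_mulVec, hv, Matrix.one_mulVec, sub_zero]
    calc Mψ.mulVec v = Mψ.mulVec (Q.mulVec v) := by rw [hQv]
      _ = (Mψ * Q).mulVec v := by rw [Matrix.mulVec_mulVec]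
      _ = (lamψ • Q).mulVec v := by rw [hMQ]
      _ = lamψ • (Q.mulVec v) := by rw [Matrix.smul_mulVec]
      _ = lamψ • v := by rw [hQv]
end

section
/- Let Z be a square-integrable random vector in R^p and Y a random variable satisfying the linearity condition Q_c E[Z|P_cZ] = 0 a.s., where P_c is the orthogonal projection onto the central subspace E_c. Then the column space of M_SIR = E[Z E[Z|Y]^T] equals E_c if and only if for every nonzero vector η ∈ E_c, the random variable E[η^T Z | Y] has nonzero variance. -/
open MeasureTheory Matrix

lemma sir_memLp_two_condExp {Ω : Type*} {m mΩ : MeasurableSpace Ω} (hm : m ≤ mΩ)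
    {μ : Measure Ω} [IsProbabilityMeasure μ] {f : Ω → ℝ} (hf : MemLp f 2 μ) :
    MemLp (μ[f|m]) 2 μ := by
  have hfint : Integrable f μ := hf.integrable one_le_two
  set F : Lp ℝ 2 μ := hf.toLp f with hF
  have hcongr : (condExpL2 ℝ ℝ hm F : Ω → ℝ) =ᵐ[μ] μ[f|m] := by
    refine ae_eq_condExp_of_forall_setIntegral_eq hm hfint ?_ ?_ ?_
    · intro s _ hμs
      exact integrableOn_condExpL2_of_measure_ne_top hm hμs.ne F
    · intro s hs hμs
      rw [integral_condExpL2_eq hm F hs hμs.ne]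
      exact setIntegral_congr_ae (hm s hs) ((MemLp.coeFn_toLp hf).mono fun x hx _ => hx)
    · exact aestronglyMeasurable_condExpL2 hm F
  exact (Lp.memLp (condExpL2 ℝ ℝ hm F : Lp ℝ 2 μ)).ae_eq hcongr

lemma sir_integrable_mul {Ω : Type*} {mΩ : MeasurableSpace Ω} {μ : Measure Ω}
    {f g : Ω → ℝ} (hf : MemLp f 2 μ) (hg : MemLp g 2 μ) :
    Integrable (fun ω => f ω * g ω) μ := by
  have h : MemLp (g • f) 1 μ := hf.smul (φ := g) hg
  rw [memLp_one_iff_integrable] at h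
  simpa [Pi.smul_apply, smul_eq_mul, mul_comm] using (show Integrable (fun ω => g ω * f ω) μ from h)

lemma sir_la_key {p : ℕ} (M Pc : Matrix (Fin p) (Fin p) ℝ)
    (hMsymm : Mᵀ = M) (hPcsymm : Pcᵀ = Pc) (hPcidem : Pc * Pc = Pc)
    (hPM : Pc * M = M) (hpsd : ∀ x, 0 ≤ x ⬝ᵥ M *ᵥ x) :
    LinearMap.range M.mulVecLin = LinearMap.range Pc.mulVecLin ↔
      ∀ η : Fin p → ℝ, η ≠ 0 → Pc *ᵥ η = η → η ⬝ᵥ M *ᵥ η ≠ 0 := by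
  have hMP : M * Pc = M := by
    have : (M * Pc)ᵀ = M := by rw [Matrix.transpose_mul, hPcsymm, hMsymm, hPM]
    calc M * Pc = (M * Pc)ᵀᵀ := (Matrix.transpose_transpose _).symm
    _ = Mᵀ := by rw [this]
    _ = M := hMsymm
  have hpsdM : M.PosSemidef := by
    refine Matrix.PosSemidef.of_dotProduct_mulVec_nonneg ?_ (fun x => by simpa using hpsd x)
    rw [Matrix.IsHermitian, Matrix.conjTranspose_eq_transpose_of_trivial, hMsymm]
  have hzero : ∀ x : Fin p → ℝ, x ⬝ᵥ M *ᵥ x = 0 → M *ᵥ x = 0 := by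
    intro x hx
    exact (hpsdM.dotProduct_mulVec_zero_iff x).mp (by simpa using hx)
  constructor
  · intro hrange η hη hPcη hq
    have hMη : M *ᵥ η = 0 := hzero η hq
    have hmem : η ∈ LinearMap.range M.mulVecLin := by
      rw [hrange]; exact ⟨η, by simpa [Matrix.mulVecLin_apply] using hPcη⟩
    obtain ⟨x, hx⟩ := hmem
    rw [Matrix.mulVecLin_apply] at hx
    have : η ⬝ᵥ η = 0 := by
      calc η ⬝ᵥ η = (M *ᵥ x) ⬝ᵥ η := by rw [hx]
      _ = x ⬝ᵥ (Mᵀ *ᵥ η) := by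
          rw [Matrix.mulVec_transpose]
          rw [dotProduct_comm (M *ᵥ x) η, dotProduct_mulVec,
            dotProduct_comm]
      _ = 0 := by rw [hMsymm, hMη, dotProduct_zero]
    exact hη (by simpa [dotProduct_self_eq_zero] using this)
  · intro hpos
    have hsub : LinearMap.range M.mulVecLin ≤ LinearMap.range Pc.mulVecLin := by
      rintro _ ⟨x, rfl⟩
      exact ⟨M *ᵥ x, by rw [Matrix.mulVecLin_apply, Matrix.mulVecLin_apply,
        Matrix.mulVec_mulVec, hPM]⟩
    have hker : LinearMap.ker M.mulVecLin = LinearMap.ker Pc.mulVecLin := by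
      ext η
      simp only [LinearMap.mem_ker, Matrix.mulVecLin_apply]
      constructor
      · intro hMη
        by_contra hb
        have hb' : Pc *ᵥ η ≠ 0 := hb
        have h1 : Pc *ᵥ (Pc *ᵥ η) = Pc *ᵥ η := by rw [Matrix.mulVec_mulVec, hPcidem]
        have h2 : M *ᵥ (Pc *ᵥ η) = 0 := by rw [Matrix.mulVec_mulVec, hMP, hMη]
        exact hpos _ hb' h1 (by rw [h2, dotProduct_zero])
      · intro hPcη
        calc M *ᵥ η = (M * Pc) *ᵥ η := by rw [hMP]
        _ = M *ᵥ (Pc *ᵥ η) := by rw [Matrix.mulVec_mulVec]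
        _ = 0 := by rw [hPcη, Matrix.mulVec_zero]
    have hfr : Module.finrank ℝ (LinearMap.range M.mulVecLin)
        = Module.finrank ℝ (LinearMap.range Pc.mulVecLin) := by
      have h1 := LinearMap.finrank_range_add_finrank_ker M.mulVecLin
      have h2 := LinearMap.finrank_range_add_finrank_ker Pc.mulVecLin
      rw [hker] at h1
      omega
    exact Submodule.eq_of_le_of_finrank_eq hsub hfr

/-- SIR exhaustivity: under the linearity condition, the column space of
`M_SIR = E[Z E[Z|Y]ᵀ]` equals the central subspace `E_c` iff for every nonzero `η ∈ E_c`
the conditional expectation `E[ηᵀ Z | Y]` has nonzero variance. -/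
theorem sir_exhaustive_iff
    {Ω : Type*} [mΩ : MeasurableSpace Ω] (μ : Measure Ω) [IsProbabilityMeasure μ]
    (p : ℕ) (Z : Ω → (Fin p → ℝ)) (hZmeas : Measurable Z)
    (hZint2 : ∀ i j, Integrable (fun ω => Z ω i * Z ω j) μ)
    (hZcent : ∀ i, ∫ ω, Z ω i ∂μ = 0)
    (Y : Ω → ℝ) (hYmeas : Measurable Y)
    (Pc : Matrix (Fin p) (Fin p) ℝ) (hPcsymm : Pc.IsSymm) (hPcidem : Pc * Pc = Pc)
    (mZ : MeasurableSpace Ω) (hmZ : mZ = MeasurableSpace.comap Z inferInstance)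
    (m : MeasurableSpace Ω)
    (hm : m = MeasurableSpace.comap (fun ω => Pc.mulVec (Z ω)) inferInstance)
    (mY : MeasurableSpace Ω) (hmY : mY = MeasurableSpace.comap Y inferInstance)
    -- existence of the CS: `Y ⫫ Z | P_c Z`
    (hCS : ∀ A : Set ℝ, MeasurableSet A →
      μ[fun ω => Set.indicator A (fun _ => (1 : ℝ)) (Y ω) | mZ]
        =ᵐ[μ] μ[fun ω => Set.indicator A (fun _ => (1 : ℝ)) (Y ω) | m])
    -- linearity condition
    (hlin : ∀ᵐ ω ∂μ, (1 - Pc).mulVec (fun i => (μ[fun ω' => Z ω' i | m]) ω) = 0)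
    (MSIR : Matrix (Fin p) (Fin p) ℝ)
    (hMSIR : MSIR = Matrix.of (fun i j => ∫ ω, Z ω i * (μ[fun ω' => Z ω' j | mY]) ω ∂μ)) :
    LinearMap.range MSIR.mulVecLin = LinearMap.range Pc.mulVecLin ↔
      ∀ η : Fin p → ℝ, η ≠ 0 → Pc.mulVec η = η →
        ProbabilityTheory.variance (μ[fun ω => ∑ i, η i * Z ω i | mY]) μ ≠ 0 := by
  -- measurability of coordinates and sub-σ-algebras
  have hZi : ∀ i, Measurable[mΩ] (fun ω => Z ω i) := fun i => (measurable_pi_apply i).comp hZmeas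
  have hmZle : mZ ≤ mΩ := hmZ ▸ hZmeas.comap_le
  have hmvmeas : Measurable (Pc.mulVec : (Fin p → ℝ) → (Fin p → ℝ)) := by
    apply measurable_pi_lambda
    intro i
    simp only [Matrix.mulVec, dotProduct]
    exact Finset.measurable_sum _ fun k _ => (measurable_pi_apply k).const_mul _
  have hPcZmeas : Measurable[mΩ] (fun ω => Pc.mulVec (Z ω)) := hmvmeas.comp hZmeas
  have hmle : m ≤ mΩ := hm ▸ hPcZmeas.comap_le
  have hmYle : mY ≤ mΩ := hmY ▸ hYmeas.comap_le
  haveI hsf1 : SigmaFinite (μ.trim hmZle) := inferInstance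
  haveI hsf2 : SigmaFinite (μ.trim hmle) := inferInstance
  haveI hsf3 : SigmaFinite (μ.trim hmYle) := inferInstance
  -- L² facts
  have hZ2 : ∀ i, MemLp (fun ω => Z ω i) 2 μ := fun i =>
    (memLp_two_iff_integrable_sq (hZi i).aestronglyMeasurable).mpr
      (by simpa [sq] using hZint2 i i)
  have hZ1 : ∀ i, Integrable (fun ω => Z ω i) μ := fun i => (hZ2 i).integrable one_le_two
  set g : Fin p → Ω → ℝ := fun j => μ[fun ω' => Z ω' j | mY] with hgdef
  have hg2 : ∀ j, MemLp (g j) 2 μ := fun j => sir_memLp_two_condExp hmYle (hZ2 j)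
  have hgsm : ∀ j, StronglyMeasurable[mY] (g j) := fun j => stronglyMeasurable_condExp
  -- conditional expectation of linear combinations
  have hcelin : ∀ (m' : MeasurableSpace Ω), m' ≤ mΩ → ∀ (c : Fin p → ℝ),
      μ[fun ω => ∑ k, c k * Z ω k | m']
        =ᵐ[μ] fun ω => ∑ k, c k * ((μ[fun ω' => Z ω' k | m']) ω) := by
    intro m' hm' c
    have h1 : (fun ω => ∑ k, c k * Z ω k) = ∑ k : Fin p, (fun ω => c k * Z ω k) := by
      ext ω; simp
    rw [h1]
    refine (condExp_finsetSum (fun k _ => (hZ1 k).const_mul _) _).trans ?_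
    have h3 : ∀ᵐ ω ∂μ, ∀ k : Fin p,
        (μ[fun ω' => c k * Z ω' k|m']) ω = c k * (μ[fun ω' => Z ω' k|m']) ω := by
      rw [ae_all_iff]
      intro k
      have h4 := condExp_smul (μ := μ) (m := m') (c k) (fun ω' => Z ω' k)
      have h5 : (fun ω' => c k * Z ω' k) = (c k) • (fun ω' => Z ω' k) := by
        ext ω'; simp [smul_eq_mul]
      rw [h5]
      filter_upwards [h4] with ω hω
      simp [hω, smul_eq_mul]
    filter_upwards [h3] with ω hω
    simp only [Finset.sum_apply]
    exact Finset.sum_congr rfl fun k _ => hω k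
  -- the "deviation" variables W i
  set W : Fin p → Ω → ℝ := fun i ω => ∑ k, (1 - Pc) i k * Z ω k with hWdef
  have hWint : ∀ i, Integrable (W i) μ := fun i =>
    integrable_finset_sum _ (fun k _ => (hZ1 k).const_mul _)
  have hW2 : ∀ i, MemLp (W i) 2 μ := by
    intro i
    have h := memLp_finset_sum' (μ := μ) Finset.univ
      (f := fun k (ω : Ω) => (1 - Pc) i k * Z ω k) (p := 2) (fun k _ => (hZ2 k).const_mul _)
    have he : (∑ k : Fin p, fun (ω : Ω) => (1 - Pc) i k * Z ω k) = W i := by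
      ext ω; simp [hWdef]
    rwa [he] at h
  -- conditional expectation of W i given m vanishes (linearity condition)
  have hWm0 : ∀ i, μ[W i|m] =ᵐ[μ] 0 := by
    intro i
    refine (condExp_congr_ae (Filter.EventuallyEq.refl _ _)).trans ?_
    refine (hcelin m hmle ((1 - Pc) i)).trans ?_
    filter_upwards [hlin] with ω hω
    have := congrFun hω i
    simpa [Matrix.mulVec, dotProduct] using this
  -- conditional expectation of W i given Y vanishes
  have hWY0 : ∀ i, μ[W i|mY] =ᵐ[μ] 0 := by
    intro i
    have hWsmZ : StronglyMeasurable[mZ] (W i) := by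
      have hZmZ : Measurable[mZ] Z := by
        rw [hmZ]; exact measurable_iff_comap_le.mpr le_rfl
      have : Measurable[mZ] (W i) := by
        apply Finset.measurable_sum
        intro k _
        exact measurable_const.mul ((measurable_pi_apply k).comp hZmZ)
      exact this.stronglyMeasurable
    have key : ∀ s, MeasurableSet[mY] s → ∫ ω in s, W i ω ∂μ = 0 := by
      intro s hs
      rw [hmY] at hs
      obtain ⟨B, hB, rfl⟩ := hs
      set h : Ω → ℝ := fun ω => Set.indicator B (fun _ => (1 : ℝ)) (Y ω) with hhdef
      have hind : h = Set.indicator (Y ⁻¹' B) (fun _ => (1 : ℝ)) := by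
        ext ω
        by_cases hω : Y ω ∈ B <;>
          simp [hhdef, Set.indicator_apply, Set.mem_preimage, hω]
      have hhmeas : Measurable[mΩ] h := (measurable_const.indicator hB).comp hYmeas
      have hh2 : MemLp h 2 μ := by
        rw [hind]
        exact (memLp_const (1 : ℝ)).indicator (hYmeas hB)
      have hh1 : Integrable h μ := hh2.integrable one_le_two
      -- rewrite the set integral as ∫ W·h
      have hset : ∫ ω in Y ⁻¹' B, W i ω ∂μ = ∫ ω, W i ω * h ω ∂μ := by
        rw [← @MeasureTheory.integral_indicator Ω ℝ mΩ _ _ (W i) (Y ⁻¹' B) μ (hYmeas hB)]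
        congr 1
        ext ω
        rw [hind]
        by_cases hω : ω ∈ Y ⁻¹' B <;>
          simp [Set.indicator_apply, hω]
      rw [hset]
      -- chain of conditional expectations
      have hgz2 : MemLp (μ[h|mZ]) 2 μ := sir_memLp_two_condExp hmZle hh2
      have hgm2 : MemLp (μ[h|m]) 2 μ := sir_memLp_two_condExp hmle hh2
      have c1 : μ[fun ω => W i ω * h ω|mZ] =ᵐ[μ] fun ω => W i ω * (μ[h|mZ]) ω := by
        have := condExp_mul_of_stronglyMeasurable_left (μ := μ) hWsmZ
          (f := W i) (g := h)
          (by exact sir_integrable_mul (hW2 i) hh2) hh1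
        filter_upwards [this] with ω hω
        exact hω
      have e1 : ∫ ω, W i ω * h ω ∂μ = ∫ ω, W i ω * (μ[h|mZ]) ω ∂μ := by
        rw [← integral_condExp hmZle]
        exact integral_congr_ae c1
      have e2 : ∫ ω, W i ω * (μ[h|mZ]) ω ∂μ = ∫ ω, W i ω * (μ[h|m]) ω ∂μ := by
        refine integral_congr_ae ?_
        filter_upwards [hCS B hB] with ω hω
        rw [hhdef]
        rw [show (μ[h|mZ]) ω = (μ[h|m]) ω from hω]
      have c2 : μ[fun ω => (μ[h|m]) ω * W i ω|m]
          =ᵐ[μ] fun ω => (μ[h|m]) ω * (μ[W i|m]) ω := by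
        have := condExp_mul_of_stronglyMeasurable_left (μ := μ)
          (stronglyMeasurable_condExp (f := h))
          (f := μ[h|m]) (g := W i)
          (by exact sir_integrable_mul hgm2 (hW2 i)) (hWint i)
        filter_upwards [this] with ω hω
        exact hω
      have e3 : ∫ ω, W i ω * (μ[h|m]) ω ∂μ = 0 := by
        have comm : ∫ ω, W i ω * (μ[h|m]) ω ∂μ = ∫ ω, (μ[h|m]) ω * W i ω ∂μ := by
          congr 1; ext ω; ring
        rw [comm, ← integral_condExp hmle]
        rw [integral_congr_ae c2]
        have : ∫ ω, (μ[h|m]) ω * (μ[W i|m]) ω ∂μ = ∫ ω, (0 : ℝ) ∂μ := by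
          refine integral_congr_ae ?_
          filter_upwards [hWm0 i] with ω hω
          simp [hω]
        rw [this, integral_zero]
      rw [e1, e2, e3]
    -- uniqueness of conditional expectation
    refine (ae_eq_condExp_of_forall_setIntegral_eq (g := fun _ => (0:ℝ)) hmYle (hWint i)
      (fun s _ _ => integrable_const (0:ℝ))
      (fun s hs _ => by rw [key s hs]; simp) ?_).symm
    exact (stronglyMeasurable_const (b := (0:ℝ))).aestronglyMeasurable
  -- generic: ∫ F · g j = 0 when E[F|Y] = 0
  have hint0 : ∀ (F : Ω → ℝ), MemLp F 2 μ → Integrable F μ → (μ[F|mY] =ᵐ[μ] 0) →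
      ∀ j, ∫ ω, F ω * g j ω ∂μ = 0 := by
    intro F hF2 hF1 hF0 j
    have c1 : μ[fun ω => g j ω * F ω|mY] =ᵐ[μ] fun ω => g j ω * (μ[F|mY]) ω := by
      have := condExp_mul_of_stronglyMeasurable_left (μ := μ) (hgsm j)
        (f := g j) (g := F)
        (by exact sir_integrable_mul (hg2 j) hF2) hF1
      filter_upwards [this] with ω hω
      exact hω
    have comm : ∫ ω, F ω * g j ω ∂μ = ∫ ω, g j ω * F ω ∂μ := by
      congr 1; ext ω; ring
    rw [comm, ← integral_condExp hmYle, integral_congr_ae c1]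
    have : ∫ ω, g j ω * (μ[F|mY]) ω ∂μ = ∫ ω, (0 : ℝ) ∂μ := by
      refine integral_congr_ae ?_
      filter_upwards [hF0] with ω hω
      simp [hω]
    rw [this, integral_zero]
  -- symmetric representation of MSIR
  have hrep : ∀ i j, MSIR i j = ∫ ω, g i ω * g j ω ∂μ := by
    intro i j
    rw [hMSIR]
    show (∫ ω, Z ω i * g j ω ∂μ) = ∫ ω, g i ω * g j ω ∂μ
    have c1 : μ[fun ω => g j ω * Z ω i|mY] =ᵐ[μ] fun ω => g j ω * g i ω := by
      have := condExp_mul_of_stronglyMeasurable_left (μ := μ) (hgsm j)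
        (f := g j) (g := fun ω => Z ω i)
        (by exact sir_integrable_mul (hg2 j) (hZ2 i)) (hZ1 i)
      filter_upwards [this] with ω hω
      exact hω
    have comm : ∫ ω, Z ω i * g j ω ∂μ = ∫ ω, g j ω * Z ω i ∂μ := by
      congr 1; ext ω; ring
    rw [comm, ← integral_condExp hmYle, integral_congr_ae c1]
    congr 1; ext ω; ring
  have hMsymm : MSIRᵀ = MSIR := by
    ext i j
    rw [Matrix.transpose_apply, hrep, hrep]
    congr 1; ext ω; ring
  -- quadratic form identity
  have hginti : ∀ i j, Integrable (fun ω => g i ω * g j ω) μ := fun i j =>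
    sir_integrable_mul (hg2 i) (hg2 j)
  have hq : ∀ η : Fin p → ℝ,
      η ⬝ᵥ MSIR *ᵥ η = ∫ ω, (∑ i, η i * g i ω) ^ 2 ∂μ := by
    intro η
    have step1 : η ⬝ᵥ MSIR *ᵥ η
        = ∑ i, ∑ j, η i * η j * ∫ ω, g i ω * g j ω ∂μ := by
      simp only [dotProduct, Matrix.mulVec, Finset.mul_sum]
      refine Finset.sum_congr rfl fun i _ => Finset.sum_congr rfl fun j _ => ?_
      rw [hrep i j]; ring
    rw [step1]
    have step2 : ∀ i j : Fin p, η i * η j * ∫ ω, g i ω * g j ω ∂μ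
        = ∫ ω, (η i * g i ω) * (η j * g j ω) ∂μ := by
      intro i j
      rw [← integral_const_mul]
      congr 1; ext ω; ring
    calc ∑ i, ∑ j, η i * η j * ∫ ω, g i ω * g j ω ∂μ
        = ∑ i, ∑ j, ∫ ω, (η i * g i ω) * (η j * g j ω) ∂μ := by
          exact Finset.sum_congr rfl fun i _ => Finset.sum_congr rfl fun j _ => step2 i j
      _ = ∑ i, ∫ ω, ∑ j, (η i * g i ω) * (η j * g j ω) ∂μ := by
          refine Finset.sum_congr rfl fun i _ => ?_
          rw [integral_finset_sum]
          intro j _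
          have : Integrable (fun ω => (η i * η j) * (g i ω * g j ω)) μ :=
            (hginti i j).const_mul _
          refine this.congr (Filter.Eventually.of_forall fun ω => by ring)
      _ = ∫ ω, ∑ i, ∑ j, (η i * g i ω) * (η j * g j ω) ∂μ := by
          rw [integral_finset_sum]
          intro i _
          apply integrable_finset_sum
          intro j _
          have : Integrable (fun ω => (η i * η j) * (g i ω * g j ω)) μ :=
            (hginti i j).const_mul _
          refine this.congr (Filter.Eventually.of_forall fun ω => by ring)
      _ = ∫ ω, (∑ i, η i * g i ω) ^ 2 ∂μ := by
          congr 1; ext ω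
          rw [sq, Finset.sum_mul_sum]
  -- variance identity
  have hvar : ∀ η : Fin p → ℝ,
      ProbabilityTheory.variance (μ[fun ω => ∑ i, η i * Z ω i | mY]) μ
        = η ⬝ᵥ MSIR *ᵥ η := by
    intro η
    set cg : Ω → ℝ := μ[fun ω => ∑ i, η i * Z ω i | mY] with hcgdef
    have hce : cg =ᵐ[μ] fun ω => ∑ i, η i * g i ω := hcelin mY hmYle η
    have hG2 : MemLp (fun ω => ∑ i, η i * g i ω) 2 μ := by
      have h := memLp_finset_sum' (μ := μ) Finset.univ
        (f := fun k (ω : Ω) => η k * g k ω) (p := 2) (fun k _ => (hg2 k).const_mul _)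
      have he : (∑ k : Fin p, fun (ω : Ω) => η k * g k ω) = fun ω => ∑ i, η i * g i ω := by
        ext ω; simp
      rwa [he] at h
    have hcg2 : MemLp cg 2 μ := hG2.ae_eq hce.symm
    rw [ProbabilityTheory.variance_eq_sub hcg2]
    have hmean : ∫ ω, cg ω ∂μ = 0 := by
      rw [hcgdef, integral_condExp hmYle]
      rw [integral_finset_sum _ (fun k _ => (hZ1 k).const_mul _)]
      simp [integral_const_mul, hZcent]
    have hsq : ∫ ω, cg ω ^ 2 ∂μ = ∫ ω, (∑ i, η i * g i ω) ^ 2 ∂μ := by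
      refine integral_congr_ae ?_
      filter_upwards [hce] with ω hω
      rw [hω]
    simp only [Pi.pow_apply]
    rw [hsq, hmean, hq η]
    ring
  -- positive semidefiniteness
  have hpsd : ∀ x : Fin p → ℝ, 0 ≤ x ⬝ᵥ MSIR *ᵥ x := by
    intro x
    rw [← hvar x]
    exact ProbabilityTheory.variance_nonneg _ _
  -- Pc * MSIR = MSIR
  have hPM : Pc * MSIR = MSIR := by
    have hQM : (1 - Pc) * MSIR = 0 := by
      ext i j
      show ∑ k, (1 - Pc) i k * MSIR k j = 0
      have e1 : ∀ k : Fin p, (1 - Pc) i k * MSIR k j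
          = ∫ ω, (1 - Pc) i k * (Z ω k * g j ω) ∂μ := by
        intro k
        rw [integral_const_mul, hMSIR]
        rfl
      have e2 : ∑ k, (1 - Pc) i k * MSIR k j = ∫ ω, W i ω * g j ω ∂μ := by
        rw [Finset.sum_congr rfl fun k _ => e1 k]
        rw [← integral_finset_sum]
        · congr 1; ext ω
          rw [hWdef]
          simp only [Finset.sum_mul]
          refine Finset.sum_congr rfl fun k _ => by ring
        · intro k _
          exact (sir_integrable_mul (hZ2 k) (hg2 j)).const_mul _
      rw [e2, hint0 (W i) (hW2 i) (hWint i) (hWY0 i) j]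
    rw [sub_mul, one_mul, sub_eq_zero] at hQM
    exact hQM.symm
  -- conclude via the linear algebra lemma
  rw [sir_la_key MSIR Pc hMsymm hPcsymm hPcidem hPM hpsd]
  constructor
  · intro hpos η hη hPcη
    rw [hvar η]
    exact hpos η hη hPcη
  · intro hpos η hη hPcη
    rw [← hvar η]
    exact hpos η hη hPcη
end

section
/- Let M and N be d×d real matrices and α₀ > 0. If rank(N + αM) ≤ rank(N) for all α ∈ (0, α₀], then M(ker N) ⊆ im(N), i.e. M maps the kernel of N into the image of N. -/
open Matrix Module Submodule

/-- If `rank (N + α M) ≤ rank N` for all small positive `α`, then `M` maps the kernel of `N`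
into the image of `N`. -/
theorem rank_perturbation_map_ker_le_range
    (d : ℕ) (M N : Matrix (Fin d) (Fin d) ℝ) (α₀ : ℝ) (hα₀ : 0 < α₀)
    (hrank : ∀ α : ℝ, α ∈ Set.Ioc 0 α₀ → (N + α • M).rank ≤ N.rank) :
    Submodule.map M.mulVecLin (LinearMap.ker N.mulVecLin) ≤ LinearMap.range N.mulVecLin := by
  classical
  rintro y ⟨x, hxker, rfl⟩
  by_contra hy
  rw [Matrix.mulVecLin_apply] at hy
  have hxker' : N *ᵥ x = 0 := hxker
  set r := N.rank with hrdef
  have hfr : Module.finrank ℝ ↥(LinearMap.range N.mulVecLin) = r := rfl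
  let bb : Basis (Fin r) ℝ ↥(LinearMap.range N.mulVecLin) :=
    Module.finBasisOfFinrankEq ℝ _ hfr
  set b : Fin r → (Fin d → ℝ) := fun i => (bb i : Fin d → ℝ) with hbdef
  have hu : ∀ i, ∃ u : Fin d → ℝ, N *ᵥ u = b i := fun i => (bb i).2
  choose u hu using hu
  have hbli : LinearIndependent ℝ b :=
    bb.linearIndependent.map' (Submodule.subtype _) (Submodule.ker_subtype _)
  have hspan : Submodule.span ℝ (Set.range b) = LinearMap.range N.mulVecLin := by
    have hrange : Set.range b = Subtype.val '' Set.range bb := by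
      rw [← Set.range_comp]; rfl
    rw [hrange,
      show (Subtype.val '' Set.range ⇑bb)
          = ⇑(Submodule.subtype (LinearMap.range N.mulVecLin)) '' Set.range ⇑bb from rfl,
      ← Submodule.map_span, bb.span_eq, Submodule.map_subtype_top]
  have hw0 : LinearIndependent ℝ (Fin.snoc b (M *ᵥ x) : Fin (r + 1) → Fin d → ℝ) :=
    linearIndependent_fin_snoc.mpr ⟨hbli, by rw [hspan]; exact hy⟩
  -- the perturbed column matrix
  set B : ℝ → Matrix (Fin d) (Fin (r + 1)) ℝ := fun α =>
    (Matrix.of (Fin.snoc (fun k => N *ᵥ u k + α • (M *ᵥ u k)) (M *ᵥ x)))ᵀ with hBdef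
  have hB0 : B 0 = (Matrix.of (Fin.snoc b (M *ᵥ x) : Fin (r + 1) → Fin d → ℝ))ᵀ := by
    have hf0 : (fun k => N *ᵥ u k + (0 : ℝ) • (M *ᵥ u k)) = b := by
      funext k; simp [hu k]
    simp only [hBdef, hf0]
  -- continuity of the Gram determinant
  have hBcont : Continuous B := by
    apply continuous_matrix
    intro i j
    refine Fin.lastCases ?_ ?_ j
    · simpa only [hBdef, Matrix.transpose_apply, Matrix.of_apply, Fin.snoc_last] using
        (continuous_const : Continuous fun _ : ℝ => (M *ᵥ x) i)
    · intro k
      simp only [hBdef, Matrix.transpose_apply, Matrix.of_apply, Fin.snoc_castSucc,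
        Pi.add_apply, Pi.smul_apply, smul_eq_mul]
      exact continuous_const.add (continuous_id.mul continuous_const)
  have hgcont : Continuous fun α => ((B α)ᵀ * B α).det :=
    Continuous.matrix_det ((hBcont.matrix_transpose).matrix_mul hBcont)
  -- the Gram determinant is nonzero at 0
  have hg0 : ((B 0)ᵀ * B 0).det ≠ 0 := by
    intro h0
    obtain ⟨v, hv0, hv⟩ := (Matrix.exists_mulVec_eq_zero_iff).mpr h0
    have hker : B 0 *ᵥ v = 0 := by
      have hmem : v ∈ LinearMap.ker ((B 0)ᵀ * B 0).mulVecLin := by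
        rw [LinearMap.mem_ker, Matrix.mulVecLin_apply]; exact hv
      rw [Matrix.ker_mulVecLin_transpose_mul_self] at hmem
      rwa [LinearMap.mem_ker, Matrix.mulVecLin_apply] at hmem
    have hsum : ∑ j, v j • (Fin.snoc b (M *ᵥ x) : Fin (r + 1) → Fin d → ℝ) j = 0 := by
      funext i
      have := congr_fun hker i
      simpa [hB0, Matrix.mulVec, dotProduct, mul_comm] using this
    have := Fintype.linearIndependent_iff.mp hw0 v hsum
    exact hv0 (funext this)
  -- pick a small positive α where the Gram determinant is still nonzero
  have hev : ∀ᶠ α in nhds (0 : ℝ), ((B α)ᵀ * B α).det ≠ 0 :=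
    hgcont.continuousAt.eventually_ne hg0
  obtain ⟨ε, hε, hball⟩ := Metric.eventually_nhds_iff.mp hev
  set α : ℝ := min (ε / 2) α₀ with hαdef
  have hαpos : 0 < α := lt_min (by linarith) hα₀
  have hαle : α ≤ α₀ := min_le_right _ _
  have hαdist : dist α 0 < ε := by
    rw [Real.dist_eq, sub_zero, abs_of_pos hαpos]
    calc α ≤ ε / 2 := min_le_left _ _
      _ < ε := by linarith
  have hgα : ((B α)ᵀ * B α).det ≠ 0 := hball hαdist
  -- the factorization B α = (N + α • M) * C
  set C : Matrix (Fin d) (Fin (r + 1)) ℝ :=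
    (Matrix.of (Fin.snoc u (α⁻¹ • x) : Fin (r + 1) → Fin d → ℝ))ᵀ with hCdef
  have hfact : B α = (N + α • M) * C := by
    ext i j
    induction j using Fin.lastCases with
    | last =>
      have hNx : ∑ k, N i k * x k = 0 := congr_fun hxker' i
      simp only [hBdef, hCdef, Matrix.transpose_apply, Matrix.of_apply, Fin.snoc_last,
        Matrix.mul_apply, Matrix.add_apply, Matrix.smul_apply, Pi.smul_apply, smul_eq_mul,
        Matrix.mulVec, dotProduct]
      have hαne : α ≠ 0 := ne_of_gt hαpos
      have : ∀ k, (N i k + α * M i k) * (α⁻¹ * x k)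
          = α⁻¹ * (N i k * x k) + M i k * x k := by
        intro k; field_simp
      rw [Finset.sum_congr rfl fun k _ => this k, Finset.sum_add_distrib,
        ← Finset.mul_sum, hNx, mul_zero, zero_add]
    | cast k =>
      simp only [hBdef, hCdef, Matrix.transpose_apply, Matrix.of_apply, Fin.snoc_castSucc,
        Pi.add_apply, Pi.smul_apply, smul_eq_mul, Matrix.mul_apply, Matrix.add_apply,
        Matrix.smul_apply, Matrix.mulVec, dotProduct]
      rw [Finset.sum_congr rfl fun j _ => (add_mul _ _ _), Finset.sum_add_distrib,
        Finset.mul_sum]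
      simp [mul_assoc]
  -- derive the rank contradiction
  have hunit : IsUnit ((B α)ᵀ * B α) :=
    (Matrix.isUnit_iff_isUnit_det _).mpr (isUnit_iff_ne_zero.mpr hgα)
  have h1 : (B α).rank = r + 1 := by
    rw [← Matrix.rank_transpose_mul_self, Matrix.rank_of_isUnit _ hunit, Fintype.card_fin]
  have h2 : (B α).rank ≤ (N + α • M).rank := by
    rw [hfact]; exact Matrix.rank_mul_le_left _ _
  have h3 : (N + α • M).rank ≤ r := hrank α ⟨hαpos, hαle⟩
  omega
end

section
/- Let M ⊆ R^{d×d} be a linear subspace consisting entirely of non-invertible symmetric matrices. Then there exists a nonzero vector u ∈ R^d such that u^T M u = 0 for every M ∈ M. -/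
open Matrix


lemma core_isotropic {d : ℕ} (lam : Fin d → ℝ) (A : Matrix (Fin d) (Fin d) ℝ) (i₀ : Fin d)
    (h0 : lam i₀ = 0)
    (hr : ∀ t : ℝ, (Matrix.diagonal lam + t • A).rank ≤ (Matrix.diagonal lam).rank) :
    A i₀ i₀ = 0 := by
  classical
  set s : Finset (Fin d) := Finset.univ.filter (fun i => lam i ≠ 0) with hs
  have hi₀s : i₀ ∉ s := by simp [hs, h0]
  let ι := {x // x ∈ insert i₀ s}
  let e : ι → Fin d := fun i => i.1
  have he : Function.Injective e := Subtype.val_injective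
  have hcard : Fintype.card ι = s.card + 1 := by
    rw [show Fintype.card ι = (insert i₀ s).card from Fintype.card_coe _,
      Finset.card_insert_of_notMem hi₀s]
  have hrankdiag : (Matrix.diagonal lam).rank = s.card := by
    rw [Matrix.rank_diagonal, Fintype.card_subtype]
  set B : ℝ → Matrix (Fin d) (Fin d) ℝ := fun t => Matrix.diagonal lam + t • A with hB
  set S : ℝ → Matrix ι ι ℝ := fun t => (B t).submatrix e e with hS
  -- rank bound for submatrices
  have hranksub : ∀ t, (S t).rank ≤ s.card := by
    intro t
    have h1 : (1 : Matrix (Fin d) (Fin d) ℝ).submatrix e (Equiv.refl (Fin d))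
        * (B t).submatrix (Equiv.refl (Fin d)) e = S t := by
      rw [Matrix.submatrix_mul_equiv, Matrix.one_mul, hS]
    have h2 : (B t).submatrix (_root_.id) (Equiv.refl (Fin d))
        * (1 : Matrix (Fin d) (Fin d) ℝ).submatrix (Equiv.refl (Fin d)) e
        = (B t).submatrix _root_.id e := by
      rw [Matrix.submatrix_mul_equiv, Matrix.mul_one]
    have h3 : (S t).rank ≤ ((B t).submatrix (Equiv.refl (Fin d)) e).rank := by
      rw [← h1]; exact Matrix.rank_mul_le_right _ _
    have h4 : ((B t).submatrix (Equiv.refl (Fin d)) e).rank ≤ (B t).rank := by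
      have : (B t).submatrix (Equiv.refl (Fin d)) e = (B t).submatrix _root_.id e := rfl
      rw [this, ← h2]
      have h5 := Matrix.rank_mul_le_left ((B t).submatrix (_root_.id) (Equiv.refl (Fin d)))
        ((1 : Matrix (Fin d) (Fin d) ℝ).submatrix (Equiv.refl (Fin d)) e)
      have h6 : (B t).submatrix (_root_.id) (Equiv.refl (Fin d)) = B t := rfl
      rwa [h6] at h5
    calc (S t).rank ≤ (B t).rank := h3.trans h4
      _ ≤ (Matrix.diagonal lam).rank := hr t
      _ = s.card := hrankdiag
  let i₀' : ι := ⟨i₀, Finset.mem_insert_self _ _⟩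
  have hei : e i₀' = i₀ := rfl
  -- determinants vanish
  have hdetS : ∀ t, (S t).det = 0 := by
    intro t
    by_contra hne
    have hunit : IsUnit (S t) := (Matrix.isUnit_iff_isUnit_det _).2 (isUnit_iff_ne_zero.2 hne)
    have h7 := Matrix.rank_of_isUnit (S t) hunit
    rw [hcard] at h7
    have := hranksub t
    omega
  set f : ι → ℝ := fun j => A i₀ (e j) with hf
  have hrowS : ∀ t : ℝ, (S t) i₀' = t • f := by
    intro t
    funext j
    have hz : Matrix.diagonal lam i₀ (e j) = 0 := by
      rcases eq_or_ne i₀ (e j) with h | h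
      · rw [← h, Matrix.diagonal_apply_eq, h0]
      · rw [Matrix.diagonal_apply_ne _ h]
    show (B t) (e i₀') (e j) = (t • f) j
    rw [hei, hB]
    simp only [Matrix.add_apply, Matrix.smul_apply, smul_eq_mul, hz, zero_add,
      Pi.smul_apply, hf]
  set C : ℝ → Matrix ι ι ℝ := fun t => (S t).updateRow i₀' f with hC
  have hStC : ∀ t, S t = (C t).updateRow i₀' (t • f) := by
    intro t
    ext i j
    simp only [hC]
    rcases eq_or_ne i i₀' with h | h
    · subst h
      rw [Matrix.updateRow_self]
      exact congrFun (hrowS t) j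
    · rw [Matrix.updateRow_apply, if_neg h, Matrix.updateRow_apply, if_neg h]
  have hCfix : ∀ t, (C t).updateRow i₀' f = C t := by
    intro t
    simp only [hC]
    ext i j
    rcases eq_or_ne i i₀' with h | h
    · subst h; rw [Matrix.updateRow_self, Matrix.updateRow_self]
    · rw [Matrix.updateRow_apply, if_neg h]
  have hdetC : ∀ t : ℝ, t ≠ 0 → (C t).det = 0 := by
    intro t ht
    have h1 : (S t).det = t * (C t).det := by
      rw [hStC t, Matrix.det_updateRow_smul, hCfix t]
    have h2 := hdetS t
    rw [h1] at h2
    exact (mul_eq_zero.1 h2).resolve_left ht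
  have hcont : Continuous fun t : ℝ => (C t).det := by
    apply Continuous.matrix_det
    apply continuous_matrix
    intro i j
    rcases eq_or_ne i i₀' with h | h
    · have : (fun t : ℝ => C t i j) = fun _ => f j := by
        funext t
        simp only [hC, h, Matrix.updateRow_self]
      rw [this]; exact continuous_const
    · have : (fun t : ℝ => C t i j) =
          fun t => Matrix.diagonal lam (e i) (e j) + t * A (e i) (e j) := by
        funext t
        simp only [hC, Matrix.updateRow_apply, if_neg h, hS, Matrix.submatrix_apply, hB,
          Matrix.add_apply, Matrix.smul_apply, smul_eq_mul]
      rw [this]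
      exact continuous_const.add (continuous_id.mul continuous_const)
  have hdetC0 : (C 0).det = 0 := by
    have h1 : Filter.Tendsto (fun t : ℝ => (C t).det) (nhdsWithin 0 {(0:ℝ)}ᶜ) (nhds ((C 0).det)) :=
      (hcont.tendsto 0).mono_left nhdsWithin_le_nhds
    have h2 : Filter.Tendsto (fun t : ℝ => (C t).det) (nhdsWithin 0 {(0:ℝ)}ᶜ) (nhds 0) := by
      apply Filter.Tendsto.congr' _ tendsto_const_nhds
      filter_upwards [eventually_mem_nhdsWithin] with t ht
      exact (hdetC t ht).symm
    exact tendsto_nhds_unique h1 h2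
  -- compute det (C 0)
  set E : Matrix ι ι ℝ := Matrix.diagonal (Function.update (lam ∘ e) i₀' 1) with hE
  have hlamne : ∀ k : ι, k ≠ i₀' → lam (e k) ≠ 0 := by
    intro k hk
    have hk1 : (k : Fin d) ∈ insert i₀ s := k.2
    rcases Finset.mem_insert.1 hk1 with h | h
    · exact absurd (Subtype.ext h) hk
    · exact (Finset.mem_filter.1 h).2
  have hfsum : f = ∑ k : ι, (if k = i₀' then A i₀ i₀ else A i₀ (e k) / lam (e k)) • E k := by
    funext j
    rw [Finset.sum_apply, Finset.sum_eq_single j]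
    · rcases eq_or_ne j i₀' with h | h
      · subst h
        rw [if_pos rfl]
        simp only [hE, Pi.smul_apply, smul_eq_mul,
          Matrix.diagonal_apply_eq, Function.update_self, mul_one]
        simp [hf, hei]
      · simp only [if_neg h, hE, Pi.smul_apply, smul_eq_mul, Matrix.diagonal_apply_eq]
        rw [Function.update_of_ne h, show (lam ∘ e) j = lam (e j) from rfl,
          div_mul_cancel₀ _ (hlamne j h)]
    · intro k _ hkj
      simp [hE, Matrix.diagonal_apply_ne _ hkj]
    · intro h; exact absurd (Finset.mem_univ j) h
  have hCE : C 0 = E.updateRow i₀' f := by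
    simp only [hC]
    ext i j
    rcases eq_or_ne i i₀' with h | h
    · subst h; rw [Matrix.updateRow_self, Matrix.updateRow_self]
    · rw [Matrix.updateRow_apply, if_neg h, Matrix.updateRow_apply, if_neg h]
      simp only [hS, Matrix.submatrix_apply, hB, Matrix.add_apply, Matrix.smul_apply,
        zero_smul, Matrix.zero_apply, add_zero, smul_eq_mul, zero_mul, hE,
        Function.comp_apply]
      rcases eq_or_ne i j with hij | hij
      · subst hij
        rw [Matrix.diagonal_apply_eq, Matrix.diagonal_apply_eq, Function.update_of_ne h]
        rfl
      · rw [Matrix.diagonal_apply_ne _ (fun hh => hij (he hh)), Matrix.diagonal_apply_ne _ hij]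
  have hdetE : E.det ≠ 0 := by
    rw [hE, Matrix.det_diagonal, Finset.prod_ne_zero_iff]
    intro k _
    rcases eq_or_ne k i₀' with h | h
    · subst h; simp
    · rw [Function.update_of_ne h]
      exact hlamne k h
  have hfinal : (C 0).det = A i₀ i₀ * E.det := by
    rw [hCE, hfsum, Matrix.det_updateRow_sum]
    simp
  rw [hfinal] at hdetC0
  exact (mul_eq_zero.1 hdetC0).resolve_right hdetE

/-- A linear subspace of real symmetric `d × d` matrices consisting entirely of singular
matrices admits a common isotropic vector. -/
theorem singular_symmetric_subspace_common_isotropic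
    (d : ℕ) (M : Submodule ℝ (Matrix (Fin d) (Fin d) ℝ))
    (hsym : ∀ A ∈ M, A.IsSymm) (hsing : ∀ A ∈ M, A.det = 0) :
    ∃ u : Fin d → ℝ, u ≠ 0 ∧ ∀ A ∈ M, u ⬝ᵥ A.mulVec u = 0 := by
  classical
  rcases Nat.eq_zero_or_pos d with hd | hd
  · subst hd
    have h1 := hsing 0 M.zero_mem
    rw [Matrix.det_fin_zero] at h1
    exact absurd h1 one_ne_zero
  -- maximal rank element
  set T : Set ℕ := {r | ∃ A ∈ M, A.rank = r} with hT
  have hTne : T.Nonempty := ⟨(0 : Matrix (Fin d) (Fin d) ℝ).rank, 0, M.zero_mem, rfl⟩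
  have hTbdd : BddAbove T := by
    refine ⟨d, fun r hr => ?_⟩
    obtain ⟨A, _, rfl⟩ := hr
    exact A.rank_le_card_width.trans (by simp)
  obtain ⟨N, hNM, hNrank⟩ := Nat.sSup_mem hTne hTbdd
  have hmax : ∀ A ∈ M, A.rank ≤ N.rank := by
    intro A hA
    rw [hNrank]
    exact le_csSup hTbdd ⟨A, hA, rfl⟩
  -- spectral theorem
  have hH : N.IsHermitian := by
    have := hsym N hNM
    rwa [Matrix.IsHermitian, Matrix.conjTranspose_eq_transpose_of_trivial]
  set lam : Fin d → ℝ := hH.eigenvalues with hlam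
  set U : Matrix (Fin d) (Fin d) ℝ := (Matrix.IsHermitian.eigenvectorUnitary hH : Matrix (Fin d) (Fin d) ℝ) with hU
  have hU1 : star U * U = 1 := Unitary.coe_star_mul_self _
  have hU2 : U * star U = 1 := Unitary.coe_mul_star_self _
  have hUdet : IsUnit U.det := by
    apply IsUnit.of_mul_eq_one (star U).det
    rw [← Matrix.det_mul, hU2, Matrix.det_one]
  have hUsdet : IsUnit (star U).det := by
    apply IsUnit.of_mul_eq_one U.det
    rw [← Matrix.det_mul, hU1, Matrix.det_one]
  have hkey : star U * N * U = Matrix.diagonal lam := by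
    have := hH.conjStarAlgAut_star_eigenvectorUnitary
    rw [Unitary.conjStarAlgAut_star_apply] at this
    rwa [show (RCLike.ofReal ∘ hH.eigenvalues : Fin d → ℝ) = lam by
      funext i; simp [hlam]] at this
  -- a zero eigenvalue
  obtain ⟨i₀, hi₀⟩ : ∃ i, lam i = 0 := by
    have h1 := hsing N hNM
    rw [hH.det_eq_prod_eigenvalues] at h1
    obtain ⟨i, _, hi⟩ := Finset.prod_eq_zero_iff.1 h1
    exact ⟨i, by simpa using hi⟩
  refine ⟨fun j => U j i₀, ?_, ?_⟩
  · intro hu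
    have : U.det = 0 := Matrix.det_eq_zero_of_column_eq_zero i₀ (fun i => congrFun hu i)
    rw [this] at hUdet
    exact (isUnit_iff_ne_zero.1 hUdet) rfl
  · intro A hA
    set A' := star U * A * U with hA'
    have hr : ∀ t : ℝ, (Matrix.diagonal lam + t • A').rank ≤ (Matrix.diagonal lam).rank := by
      intro t
      have he : Matrix.diagonal lam + t • A' = star U * (N + t • A) * U := by
        rw [← hkey, hA']
        rw [Matrix.mul_add, Matrix.add_mul, Matrix.mul_smul, Matrix.smul_mul]
      rw [he, ← hkey]
      rw [Matrix.mul_assoc, Matrix.mul_assoc]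
      rw [Matrix.rank_mul_eq_right_of_isUnit_det _ _ hUsdet,
        Matrix.rank_mul_eq_right_of_isUnit_det _ _ hUsdet,
        Matrix.rank_mul_eq_left_of_isUnit_det U _ hUdet,
        Matrix.rank_mul_eq_left_of_isUnit_det U _ hUdet]
      exact hmax _ (M.add_mem hNM (M.smul_mem t hA))
    have h0 := core_isotropic lam A' i₀ hi₀ hr
    rw [hA'] at h0
    -- translate (star U * A * U) i₀ i₀ = uᵀ A u
    rw [← h0]
    simp only [Matrix.mul_apply, dotProduct, Matrix.mulVec, Matrix.star_apply,
      star_trivial, Finset.mul_sum, Finset.sum_mul]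
    rw [Finset.sum_comm]
    apply Finset.sum_congr rfl
    intro k _
    apply Finset.sum_congr rfl
    intro j _
    ring
end

section
/- Let M ⊆ R^{d×d} be a linear subspace of symmetric matrices such that for every nonzero η ∈ R^d there exists N ∈ M with η^T N η ≠ 0. Then M contains an invertible matrix. -/
open Matrix

/-- Symmetry of the bilinear form of a symmetric matrix. -/
lemma aux_dot_symm {d : ℕ} {S : Matrix (Fin d) (Fin d) ℝ} (hS : S.IsSymm)
    (x y : Fin d → ℝ) : x ⬝ᵥ S *ᵥ y = y ⬝ᵥ S *ᵥ x := by
  rw [dotProduct_mulVec, ← mulVec_transpose, hS, dotProduct_comm]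

/-- Entries of a conjugated matrix. -/
lemma aux_conj_apply {m : Type*} [Fintype m] {d : ℕ} (S : Matrix (Fin d) (Fin d) ℝ)
    (v : m → (Fin d → ℝ)) (i j : m) :
    ((Matrix.of fun x k => v k x)ᵀ * S * (Matrix.of fun x k => v k x)) i j
      = v i ⬝ᵥ S *ᵥ v j := by
  simp only [mul_apply, transpose_apply, of_apply, dotProduct, mulVec,
    Finset.sum_mul, Finset.mul_sum]
  rw [Finset.sum_comm]
  apply Finset.sum_congr rfl
  intro k _
  apply Finset.sum_congr rfl
  intro l _
  ring

lemma aux_dot_sum {d : ℕ} {n : Type*} [Fintype n] (u : Fin d → ℝ) (f : n → Fin d → ℝ) :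
    u ⬝ᵥ (∑ j, f j) = ∑ j, u ⬝ᵥ f j := by
  simp only [dotProduct, Finset.sum_apply, Finset.mul_sum]
  exact Finset.sum_comm

lemma aux_sum_dot {d : ℕ} {n : Type*} [Fintype n] (u : Fin d → ℝ) (f : n → Fin d → ℝ) :
    (∑ j, f j) ⬝ᵥ u = ∑ j, f j ⬝ᵥ u := by
  simp only [dotProduct, Finset.sum_apply, Finset.sum_mul]
  exact Finset.sum_comm

/-- Lower bound on rank from an invertible conjugation. -/
lemma aux_rank_ge {m : Type*} [Fintype m] [DecidableEq m] {d : ℕ}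
    (S : Matrix (Fin d) (Fin d) ℝ) (P : Matrix (Fin d) m ℝ)
    (hdet : (Pᵀ * S * P).det ≠ 0) : Fintype.card m ≤ S.rank := by
  have h1 : (Pᵀ * S * P).rank = Fintype.card m :=
    Matrix.rank_of_isUnit _ ((Matrix.isUnit_iff_isUnit_det _).2 (isUnit_iff_ne_zero.2 hdet))
  calc Fintype.card m = (Pᵀ * S * P).rank := h1.symm
    _ = (Pᵀ * (S * P)).rank := by rw [Matrix.mul_assoc]
    _ ≤ (S * P).rank := Matrix.rank_mul_le_right _ _
    _ ≤ S.rank := Matrix.rank_mul_le_left _ _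

/-- A linear subspace of real symmetric `d × d` matrices with no common isotropic vector
contains an invertible matrix. -/
theorem symmetric_subspace_no_common_isotropic_contains_invertible
    (d : ℕ) (M : Submodule ℝ (Matrix (Fin d) (Fin d) ℝ))
    (hsym : ∀ A ∈ M, A.IsSymm)
    (h : ∀ η : Fin d → ℝ, η ≠ 0 → ∃ N ∈ M, η ⬝ᵥ N.mulVec η ≠ 0) :
    ∃ N ∈ M, N.det ≠ 0 := by
  by_contra hcon
  push_neg at hcon
  -- choose N ∈ M of maximal rank
  have hbdd : BddAbove (Matrix.rank '' (M : Set (Matrix (Fin d) (Fin d) ℝ))) := by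
    refine ⟨d, ?_⟩
    rintro n ⟨A, -, rfl⟩
    simpa using A.rank_le_card_width
  have hne : (Matrix.rank '' (M : Set (Matrix (Fin d) (Fin d) ℝ))).Nonempty :=
    ⟨(0 : Matrix (Fin d) (Fin d) ℝ).rank, 0, M.zero_mem, rfl⟩
  obtain ⟨N, hNM, hNr⟩ := Nat.sSup_mem hne hbdd
  have hmax : ∀ A ∈ M, A.rank ≤ N.rank := by
    intro A hA
    rw [hNr]
    exact le_csSup hbdd ⟨A, hA, rfl⟩
  have hsN : N.IsSymm := hsym N hNM
  -- N is singular, get a kernel vector η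
  have hdetN : N.det = 0 := hcon N hNM
  obtain ⟨η, hη0, hNη⟩ := Matrix.exists_mulVec_eq_zero_iff.2 hdetN
  obtain ⟨A, hAM, ha⟩ := h η hη0
  -- basis of the range of N
  set U := LinearMap.range N.mulVecLin with hU
  have hrankN : N.rank = Module.finrank ℝ U := rfl
  let b : Module.Basis (Fin (Module.finrank ℝ U)) ℝ U := Module.finBasis ℝ U
  -- the family of vectors : basis of U together with η
  set ι := Fin (Module.finrank ℝ U) ⊕ Unit with hι
  let v : ι → (Fin d → ℝ) := Sum.elim (fun i => (b i : Fin d → ℝ)) (fun _ => η)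
  let P : Matrix (Fin d) ι ℝ := Matrix.of fun x k => v k x
  let G0 : Matrix ι ι ℝ := Pᵀ * N * P
  let G1 : Matrix ι ι ℝ := Pᵀ * A * P
  have hG0 : ∀ i j, G0 i j = v i ⬝ᵥ N *ᵥ v j := fun i j => aux_conj_apply N v i j
  have hG1 : ∀ i j, G1 i j = v i ⬝ᵥ A *ᵥ v j := fun i j => aux_conj_apply A v i j
  -- the last row and column of G0 vanish
  have hG0row : ∀ j, G0 (Sum.inr ()) j = 0 := by
    intro j
    rw [hG0, aux_dot_symm hsN]
    simp [v, hNη]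
  have hG0col : ∀ i, G0 i (Sum.inr ()) = 0 := by
    intro i
    rw [hG0]
    simp [v, hNη]
  have hG1a : G1 (Sum.inr ()) (Sum.inr ()) = η ⬝ᵥ A *ᵥ η := by
    rw [hG1]; rfl
  -- the top-left block of G0 is invertible
  set B0 : Matrix (Fin (Module.finrank ℝ U)) (Fin (Module.finrank ℝ U)) ℝ :=
    fun i j => G0 (Sum.inl i) (Sum.inl j) with hB0
  have hB0det : B0.det ≠ 0 := by
    intro hdet
    obtain ⟨x, hx0, hx⟩ := Matrix.exists_mulVec_eq_zero_iff.2 hdet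
    set w : Fin d → ℝ := ∑ j, x j • (b j : Fin d → ℝ) with hw
    have hbw : ∀ i, (b i : Fin d → ℝ) ⬝ᵥ N *ᵥ w = 0 := by
      intro i
      have : (b i : Fin d → ℝ) ⬝ᵥ N *ᵥ w = ∑ j, B0 i j * x j := by
        rw [hw]
        have hmv : N *ᵥ (∑ j, x j • (b j : Fin d → ℝ))
            = ∑ j, x j • (N *ᵥ (b j : Fin d → ℝ)) := by
          simp_rw [← Matrix.mulVecLin_apply, map_sum, LinearMap.map_smul]
        rw [hmv, aux_dot_sum]
        apply Finset.sum_congr rfl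
        intro j _
        rw [dotProduct_smul, smul_eq_mul, mul_comm]
        congr 1
        exact (hG0 (Sum.inl i) (Sum.inl j)).symm
      rw [this]
      have := congrFun hx i
      simpa [Matrix.mulVec, dotProduct] using this
    have hall : ∀ z : U, (z : Fin d → ℝ) ⬝ᵥ N *ᵥ w = 0 := by
      intro z
      have hz : (z : Fin d → ℝ) = ∑ i, b.repr z i • (b i : Fin d → ℝ) := by
        conv_lhs => rw [← b.sum_repr z]
        push_cast
        rfl
      rw [hz, aux_sum_dot]
      simp only [smul_dotProduct, smul_eq_mul]
      rw [Finset.sum_eq_zero]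
      intro i _
      rw [hbw i, mul_zero]
    have hNwU : N *ᵥ w ∈ U := ⟨w, rfl⟩
    have hNw : N *ᵥ w = 0 := by
      have := hall ⟨N *ᵥ w, hNwU⟩
      exact dotProduct_self_eq_zero.1 this
    have hwU : w ∈ U := by
      rw [hw]
      exact Submodule.sum_mem _ fun j _ => Submodule.smul_mem _ _ (Subtype.coe_prop (b j))
    obtain ⟨y, hy⟩ := hwU
    have hww : w ⬝ᵥ w = 0 := by
      calc w ⬝ᵥ w = w ⬝ᵥ N *ᵥ y := by rw [← hy]; rfl
        _ = y ⬝ᵥ N *ᵥ w := aux_dot_symm hsN w y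
        _ = 0 := by rw [hNw, dotProduct_zero]
    have hw0 : w = 0 := dotProduct_self_eq_zero.1 hww
    have : ∀ i, x i = 0 := by
      have hsum : (∑ j, x j • b j : U) = 0 := by
        apply Subtype.coe_injective
        push_cast
        rw [← hw0, hw]
      exact Fintype.linearIndependent_iff.1 b.linearIndependent x hsum
    exact hx0 (funext this)
  -- the perturbation argument
  set q : ℝ → ℝ :=
    fun t => ((G0 + t • G1).updateRow (Sum.inr ()) (G1 (Sum.inr ()))).det with hq
  have hq_cont : Continuous q := by
    apply Continuous.matrix_det
    apply Continuous.matrix_updateRow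
    · exact continuous_const.add (continuous_id.smul continuous_const)
    · exact continuous_const
  have hq0 : q 0 ≠ 0 := by
    have h0 : (G0 + (0 : ℝ) • G1) = G0 := by simp
    have hblock : G0.updateRow (Sum.inr ()) (G1 (Sum.inr ()))
        = Matrix.fromBlocks B0 0 (Matrix.of fun _ j => G1 (Sum.inr ()) (Sum.inl j))
            (Matrix.of fun _ _ => G1 (Sum.inr ()) (Sum.inr ())) := by
      ext i j
      rcases i with i | i <;> rcases j with j | j
      · simp [Matrix.updateRow_apply, Matrix.fromBlocks, hB0]
      · simp [Matrix.updateRow_apply, Matrix.fromBlocks, hG0col]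
      · simp [Matrix.updateRow_apply, Matrix.fromBlocks]
      · simp [Matrix.updateRow_apply, Matrix.fromBlocks]
    have hq0' : q 0 = (G0.updateRow (Sum.inr ()) (G1 (Sum.inr ()))).det := by
      show ((G0 + (0 : ℝ) • G1).updateRow (Sum.inr ()) (G1 (Sum.inr ()))).det = _
      rw [h0]
    rw [hq0', hblock, Matrix.det_fromBlocks_zero₁₂,
      Matrix.det_unique (Matrix.of fun _ _ => G1 (Sum.inr ()) (Sum.inr ()))]
    simp only [of_apply, hG1a]
    exact mul_ne_zero hB0det ha
  -- find t ≠ 0 with q t ≠ 0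
  obtain ⟨t, hqt, ht0⟩ : ∃ t : ℝ, q t ≠ 0 ∧ t ≠ 0 := by
    have h1 : ∀ᶠ t in nhdsWithin (0 : ℝ) {(0 : ℝ)}ᶜ, q t ≠ 0 :=
      (hq_cont.continuousAt.eventually_ne hq0).filter_mono nhdsWithin_le_nhds
    have h2 : ∀ᶠ t in nhdsWithin (0 : ℝ) {(0 : ℝ)}ᶜ, t ≠ 0 := self_mem_nhdsWithin
    exact (h1.and h2).exists
  -- the perturbed matrix has too large a rank
  have hGsplit : Pᵀ * (N + t • A) * P = G0 + t • G1 := by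
    simp [G0, G1, Matrix.mul_add, Matrix.add_mul, Matrix.mul_smul, Matrix.smul_mul]
  have hrowG : (G0 + t • G1) (Sum.inr ()) = t • G1 (Sum.inr ()) := by
    funext j
    simp [hG0row j]
  have hdetG : (G0 + t • G1).det ≠ 0 := by
    have : (G0 + t • G1).det = t * q t := by
      conv_lhs => rw [← Matrix.updateRow_eq_self (G0 + t • G1) (Sum.inr ())]
      rw [hrowG, Matrix.det_updateRow_smul]
    rw [this]
    exact mul_ne_zero ht0 hqt
  have hrank : Fintype.card ι ≤ (N + t • A).rank := by
    apply aux_rank_ge (N + t • A) P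
    rw [hGsplit]
    exact hdetG
  have hmem : N + t • A ∈ M := M.add_mem hNM (M.smul_mem t hAM)
  have hle : (N + t • A).rank ≤ N.rank := hmax _ hmem
  have hcard : Fintype.card ι = Module.finrank ℝ U + 1 := by
    simp [hι]
  rw [hcard] at hrank
  rw [hrankN] at hle
  omega
end

section
/- Let E and E' be subspaces of R^p with orthogonal projections P and P', let R be the orthogonal projection onto E ∩ E', and let g, h : R^p → R be measurable functions with g(Px) = h(P'x) for Lebesgue-almost every x in a ball B(0, r). Then there exists a measurable function f such that g(Px) = f(Rx) for almost every x ∈ B(0, r). -/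
open MeasureTheory RealInnerProductSpace Filter
open scoped ENNReal NNReal

section AuxProj

variable {V : Type*} [NormedAddCommGroup V] [InnerProductSpace ℝ V]

lemma aux_proj_fix {T : V →L[ℝ] V} (hidem : T ∘L T = T) {y : V}
    (hy : y ∈ LinearMap.range (T : V →ₗ[ℝ] V)) : T y = y := by
  obtain ⟨z, rfl⟩ := hy
  have := DFunLike.congr_fun hidem z
  simpa using this

lemma aux_ker_orth {T : V →L[ℝ] V} (hsa : ∀ x y, ⟪T x, y⟫ = ⟪x, T y⟫)
    (hidem : T ∘L T = T) :
    LinearMap.ker (T : V →ₗ[ℝ] V) = (LinearMap.range (T : V →ₗ[ℝ] V))ᗮ := by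
  ext x
  simp only [LinearMap.mem_ker, Submodule.mem_orthogonal, LinearMap.mem_range,
    ContinuousLinearMap.coe_coe]
  constructor
  · rintro hx u ⟨z, rfl⟩
    rw [hsa, hx, inner_zero_right]
  · intro hx
    have h2 : ⟪T x, x⟫ = 0 := hx (T x) ⟨x, rfl⟩
    have h3 : ⟪T x, T x⟫ = 0 := by
      rw [hsa]
      have := DFunLike.congr_fun hidem x
      simp only [ContinuousLinearMap.comp_apply] at this
      rw [this, real_inner_comm, h2]
    exact inner_self_eq_zero.mp h3

lemma aux_decomp [FiniteDimensional ℝ V] (P P' R : V →L[ℝ] V)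
    (hPsa : ∀ x y, ⟪P x, y⟫ = ⟪x, P y⟫) (hPidem : P ∘L P = P)
    (hP'sa : ∀ x y, ⟪P' x, y⟫ = ⟪x, P' y⟫) (hP'idem : P' ∘L P' = P')
    (hRsa : ∀ x y, ⟪R x, y⟫ = ⟪x, R y⟫) (hRidem : R ∘L R = R)
    (hR : LinearMap.range (R : V →ₗ[ℝ] V) =
      LinearMap.range (P : V →ₗ[ℝ] V) ⊓ LinearMap.range (P' : V →ₗ[ℝ] V))
    {w : V} (hw : R w = 0) :
    ∃ w1 w2, P w1 = 0 ∧ P' w2 = 0 ∧ w = w1 + w2 := by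
  set K := LinearMap.range (P : V →ₗ[ℝ] V)
  set K' := LinearMap.range (P' : V →ₗ[ℝ] V)
  have e1 : LinearMap.ker (R : V →ₗ[ℝ] V) =
      LinearMap.ker (P : V →ₗ[ℝ] V) ⊔ LinearMap.ker (P' : V →ₗ[ℝ] V) := by
    rw [aux_ker_orth hRsa hRidem, aux_ker_orth hPsa hPidem, aux_ker_orth hP'sa hP'idem, hR]
    have h1 : Kᗮᗮ ⊓ K'ᗮᗮ = (Kᗮ ⊔ K'ᗮ)ᗮ := Submodule.inf_orthogonal _ _
    rw [Submodule.orthogonal_orthogonal, Submodule.orthogonal_orthogonal] at h1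
    rw [h1, Submodule.orthogonal_orthogonal]
  have hmem : w ∈ LinearMap.ker (P : V →ₗ[ℝ] V) ⊔ LinearMap.ker (P' : V →ₗ[ℝ] V) := by
    rw [← e1]; exact LinearMap.mem_ker.mpr hw
  obtain ⟨w1, hw1, w2, hw2, hsum⟩ := Submodule.mem_sup.mp hmem
  exact ⟨w1, w2, hw1, hw2, hsum.symm⟩

end AuxProj

theorem aux_measurable_tan : Measurable Real.tan := by
  have : Real.tan = fun x => Real.sin x / Real.cos x := funext Real.tan_eq_sin_div_cos
  rw [this]
  exact Real.measurable_sin.div Real.measurable_cos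


set_option maxHeartbeats 1000000 in
/-- If `g(Px) = h(P'x)` for Lebesgue-a.e. `x` in a ball `B(0,r)`, where `P`, `P'` are orthogonal
projections and `R` is the orthogonal projection onto the intersection of their ranges, then
`g(Px) = f(Rx)` a.e. on `B(0,r)` for some measurable `f`. -/
theorem factorization_through_intersection_projection
    (p : ℕ) (P P' R : EuclideanSpace ℝ (Fin p) →L[ℝ] EuclideanSpace ℝ (Fin p))
    (hPsa : ∀ x y, ⟪P x, y⟫ = ⟪x, P y⟫) (hPidem : P ∘L P = P)
    (hP'sa : ∀ x y, ⟪P' x, y⟫ = ⟪x, P' y⟫) (hP'idem : P' ∘L P' = P')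
    (hRsa : ∀ x y, ⟪R x, y⟫ = ⟪x, R y⟫) (hRidem : R ∘L R = R)
    (hR : LinearMap.range (R : EuclideanSpace ℝ (Fin p) →ₗ[ℝ] EuclideanSpace ℝ (Fin p)) =
      LinearMap.range (P : EuclideanSpace ℝ (Fin p) →ₗ[ℝ] EuclideanSpace ℝ (Fin p)) ⊓
        LinearMap.range (P' : EuclideanSpace ℝ (Fin p) →ₗ[ℝ] EuclideanSpace ℝ (Fin p)))
    (g h : EuclideanSpace ℝ (Fin p) → ℝ) (hg : Measurable g) (hh : Measurable h)
    (r : ℝ) (hr : 0 < r)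
    (hgh : ∀ᵐ x ∂(volume.restrict (Metric.ball (0 : EuclideanSpace ℝ (Fin p)) r)),
      g (P x) = h (P' x)) :
    ∃ f : EuclideanSpace ℝ (Fin p) → ℝ, Measurable f ∧
      ∀ᵐ x ∂(volume.restrict (Metric.ball (0 : EuclideanSpace ℝ (Fin p)) r)),
        g (P x) = f (R x) := by
  set u : EuclideanSpace ℝ (Fin p) → ℝ := fun x => g (P x) with hu_def
  set v : EuclideanSpace ℝ (Fin p) → ℝ := fun x => h (P' x) with hv_def
  have hu : Measurable u := by rw [hu_def]; exact hg.comp P.continuous.measurable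
  set Q : EuclideanSpace ℝ (Fin p) →L[ℝ] EuclideanSpace ℝ (Fin p) := ContinuousLinearMap.id ℝ (EuclideanSpace ℝ (Fin p)) - R with hQ_def
  have hQapp : ∀ y : EuclideanSpace ℝ (Fin p), Q y = y - R y := fun y => rfl
  have hRR : ∀ z : EuclideanSpace ℝ (Fin p), R (R z) = R z := by
    intro z
    have := DFunLike.congr_fun hRidem z
    simpa using this
  have hQ0 : ∀ y : EuclideanSpace ℝ (Fin p), R (Q y) = 0 := by
    intro y; rw [hQapp, map_sub, hRR, sub_self]
  have hRnorm : ∀ z : EuclideanSpace ℝ (Fin p), ‖R z‖ ≤ ‖z‖ := by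
    intro z
    by_cases hz : R z = 0
    · simp [hz]
    · have h1 : ⟪R z, R z⟫ = ⟪z, R (R z)⟫ := hRsa z (R z) ▸ (hRsa (R z) z ▸ rfl)
      have h1 : (‖R z‖ : ℝ) ^ 2 = ⟪z, R z⟫ := by
        rw [← real_inner_self_eq_norm_sq]
        rw [hRsa, hRR]
      have h2 : ⟪z, R z⟫ ≤ ‖z‖ * ‖R z‖ := real_inner_le_norm z (R z)
      have h3 : 0 < ‖R z‖ := norm_pos_iff.mpr hz
      nlinarith
  have H : ∀ᵐ x ∂(volume : Measure (EuclideanSpace ℝ (Fin p))), x ∈ Metric.ball (0 : EuclideanSpace ℝ (Fin p)) r → u x = v x := by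
    have h0 := (ae_restrict_iff' measurableSet_ball).mp hgh
    filter_upwards [h0] with x hx hmem
    rw [hu_def, hv_def]
    exact hx hmem
  -- Step A: translation invariance along ker R, in slightly smaller balls
  have stepA : ∀ w : EuclideanSpace ℝ (Fin p), R w = 0 → ∀ s : ℝ, s < r →
      ∀ᵐ x ∂(volume : Measure (EuclideanSpace ℝ (Fin p))),
        (x ∈ Metric.ball (0 : EuclideanSpace ℝ (Fin p)) s ∧ x + w ∈ Metric.ball (0 : EuclideanSpace ℝ (Fin p)) s) → u (x + w) = u x := by
    intro w hw s hs
    obtain ⟨w1, w2, hw1, hw2, rfl⟩ :=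
      aux_decomp P P' R hPsa hPidem hP'sa hP'idem hRsa hRidem hR hw
    have hrs : 0 < r - s := sub_pos.mpr hs
    obtain ⟨n, hn⟩ := exists_nat_gt (‖w2‖ / (r - s))
    have hn0 : 0 < (n : ℝ) := lt_of_le_of_lt (div_nonneg (norm_nonneg _) hrs.le) hn
    have hn2 : ‖w2‖ / n < r - s := by
      rw [div_lt_iff₀ hn0]
      have := mul_lt_mul_of_pos_right hn hrs
      calc ‖w2‖ = ‖w2‖ / (r - s) * (r - s) := by field_simp
        _ < n * (r - s) := this
        _ = (r - s) * n := mul_comm _ _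
    have Hae : ∀ᵐ x ∂(volume : Measure (EuclideanSpace ℝ (Fin p))), ∀ k : ℕ,
        ((x + ((k : ℝ) / n) • (w1 + w2) ∈ Metric.ball (0 : EuclideanSpace ℝ (Fin p)) r →
            u (x + ((k : ℝ) / n) • (w1 + w2)) = v (x + ((k : ℝ) / n) • (w1 + w2))) ∧
         (x + ((k : ℝ) / n) • (w1 + w2) + (n : ℝ)⁻¹ • w2 ∈ Metric.ball (0 : EuclideanSpace ℝ (Fin p)) r →
            u (x + ((k : ℝ) / n) • (w1 + w2) + (n : ℝ)⁻¹ • w2) =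
              v (x + ((k : ℝ) / n) • (w1 + w2) + (n : ℝ)⁻¹ • w2))) := by
      rw [ae_all_iff]
      intro k
      have h1 : ∀ᵐ x ∂(volume : Measure (EuclideanSpace ℝ (Fin p))),
          x + ((k : ℝ) / n) • (w1 + w2) ∈ Metric.ball (0 : EuclideanSpace ℝ (Fin p)) r →
            u (x + ((k : ℝ) / n) • (w1 + w2)) = v (x + ((k : ℝ) / n) • (w1 + w2)) :=
        (measurePreserving_add_right (volume : Measure (EuclideanSpace ℝ (Fin p)))
          (((k : ℝ) / n) • (w1 + w2))).quasiMeasurePreserving.ae H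
      have h2 : ∀ᵐ x ∂(volume : Measure (EuclideanSpace ℝ (Fin p))),
          (x + (((k : ℝ) / n) • (w1 + w2) + (n : ℝ)⁻¹ • w2)) ∈ Metric.ball (0 : EuclideanSpace ℝ (Fin p)) r →
            u (x + (((k : ℝ) / n) • (w1 + w2) + (n : ℝ)⁻¹ • w2)) =
              v (x + (((k : ℝ) / n) • (w1 + w2) + (n : ℝ)⁻¹ • w2)) :=
        (measurePreserving_add_right (volume : Measure (EuclideanSpace ℝ (Fin p)))
          (((k : ℝ) / n) • (w1 + w2) + (n : ℝ)⁻¹ • w2)).quasiMeasurePreserving.ae H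
      filter_upwards [h1, h2] with x hx1 hx2
      refine ⟨hx1, ?_⟩
      intro hmem
      have e : x + ((k : ℝ) / n) • (w1 + w2) + (n : ℝ)⁻¹ • w2 =
          x + (((k : ℝ) / n) • (w1 + w2) + (n : ℝ)⁻¹ • w2) := by abel
      rw [e] at hmem ⊢
      exact hx2 hmem
    filter_upwards [Hae] with x hx hmem
    obtain ⟨hxs, hxws⟩ := hmem
    have hx1 : ‖x‖ < s := mem_ball_zero_iff.mp hxs
    have hx2 : ‖x + (w1 + w2)‖ < s := mem_ball_zero_iff.mp hxws
    have key : ∀ k : ℕ, k ≤ n → u (x + ((k : ℝ) / n) • (w1 + w2)) = u x := by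
      intro k
      induction k with
      | zero => intro _; norm_num
      | succ k ih =>
        intro hk1
        have hk : k ≤ n := Nat.le_of_succ_le hk1
        have ihk := ih hk
        have hc0 : (0 : ℝ) ≤ (k : ℝ) / n := by positivity
        have hc1 : (k : ℝ) / n ≤ 1 := by
          rw [div_le_one hn0]; exact_mod_cast hk
        set c : ℝ := (k : ℝ) / n with hc
        set y : EuclideanSpace ℝ (Fin p) := x + c • (w1 + w2) with hy
        have hyball : ‖y‖ < s := by
          have hid : y = (1 - c) • x + c • (x + (w1 + w2)) := by
            rw [hy]; module
          have h1 : ‖y‖ ≤ (1 - c) * ‖x‖ + c * ‖x + (w1 + w2)‖ := by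
            rw [hid]
            refine (norm_add_le _ _).trans ?_
            rw [norm_smul, norm_smul, Real.norm_eq_abs, Real.norm_eq_abs,
              abs_of_nonneg (by linarith), abs_of_nonneg hc0]
          have hpos : 0 < (1 - c) * (s - ‖x‖) + c * (s - ‖x + (w1 + w2)‖) := by
            rcases eq_or_lt_of_le hc0 with hceq | hclt
            · rw [← hceq]; simp; linarith
            · have t1 : 0 < c * (s - ‖x + (w1 + w2)‖) := mul_pos hclt (by linarith)
              have t2 : 0 ≤ (1 - c) * (s - ‖x‖) :=
                mul_nonneg (by linarith) (by linarith)
              linarith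
          have expand : (1 - c) * (s - ‖x‖) + c * (s - ‖x + (w1 + w2)‖) =
              s - ((1 - c) * ‖x‖ + c * ‖x + (w1 + w2)‖) := by ring
          linarith [hpos, h1]
        have hyr : y ∈ Metric.ball (0 : EuclideanSpace ℝ (Fin p)) r := by
          rw [mem_ball_zero_iff]; linarith
        have hy2r : y + (n : ℝ)⁻¹ • w2 ∈ Metric.ball (0 : EuclideanSpace ℝ (Fin p)) r := by
          rw [mem_ball_zero_iff]
          have t1 : ‖y + (n : ℝ)⁻¹ • w2‖ ≤ ‖y‖ + ‖(n : ℝ)⁻¹ • w2‖ := norm_add_le _ _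
          have t2 : ‖(n : ℝ)⁻¹ • w2‖ = ‖w2‖ / n := by
            rw [norm_smul, Real.norm_eq_abs, abs_of_nonneg (by positivity)]
            ring
          rw [t2] at t1
          linarith
        obtain ⟨G1, G2⟩ := hx k
        have ptEq : x + ((((k : ℕ) + 1 : ℕ) : ℝ) / (n : ℝ)) • (w1 + w2) =
            y + (n : ℝ)⁻¹ • (w1 + w2) := by
          rw [hy, hc]
          have harith : (((k : ℕ) + 1 : ℕ) : ℝ) / n = (k : ℝ) / n + (n : ℝ)⁻¹ := by
            push_cast
            field_simp
          rw [harith, add_smul]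
          abel
        have e1 : u (y + (n : ℝ)⁻¹ • (w1 + w2)) = u (y + (n : ℝ)⁻¹ • w2) := by
          simp only [hu_def]
          congr 1
          simp [map_add, _root_.map_smul, smul_add, hw1]
        have e2 : u (y + (n : ℝ)⁻¹ • w2) = v (y + (n : ℝ)⁻¹ • w2) := G2 hy2r
        have e3 : v (y + (n : ℝ)⁻¹ • w2) = v y := by
          simp only [hv_def]
          congr 1
          simp [map_add, _root_.map_smul, hw2]
        have e4 : v y = u y := (G1 hyr).symm
        calc u (x + ((((k : ℕ) + 1 : ℕ) : ℝ) / (n : ℝ)) • (w1 + w2))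
            = u (y + (n : ℝ)⁻¹ • (w1 + w2)) := by rw [ptEq]
          _ = u (y + (n : ℝ)⁻¹ • w2) := e1
          _ = v (y + (n : ℝ)⁻¹ • w2) := e2
          _ = v y := e3
          _ = u y := e4
          _ = u x := ihk
    have := key n le_rfl
    rwa [div_self hn0.ne', one_smul] at this
  -- Step B: Fubini swap
  have stepB : ∀ s : ℝ, s < r →
      ∀ᵐ x ∂(volume : Measure (EuclideanSpace ℝ (Fin p))),
        ∀ᵐ v' ∂(volume : Measure (EuclideanSpace ℝ (Fin p))),
          (x ∈ Metric.ball (0 : EuclideanSpace ℝ (Fin p)) s ∧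
            x + Q v' ∈ Metric.ball (0 : EuclideanSpace ℝ (Fin p)) s) → u (x + Q v') = u x := by
    intro s hs
    set T : Set (EuclideanSpace ℝ (Fin p) × EuclideanSpace ℝ (Fin p)) :=
      {q | (q.2 ∈ Metric.ball (0 : EuclideanSpace ℝ (Fin p)) s ∧
        q.2 + Q q.1 ∈ Metric.ball (0 : EuclideanSpace ℝ (Fin p)) s) ∧
        u (q.2 + Q q.1) ≠ u q.2} with hT_def
    have mQ : Measurable fun q : EuclideanSpace ℝ (Fin p) × EuclideanSpace ℝ (Fin p) =>
        q.2 + Q q.1 := measurable_snd.add (Q.continuous.measurable.comp measurable_fst)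
    have hT : MeasurableSet T := by
      have h1 : MeasurableSet {q : EuclideanSpace ℝ (Fin p) × EuclideanSpace ℝ (Fin p) |
          q.2 ∈ Metric.ball (0 : EuclideanSpace ℝ (Fin p)) s} :=
        measurable_snd measurableSet_ball
      have h2 : MeasurableSet {q : EuclideanSpace ℝ (Fin p) × EuclideanSpace ℝ (Fin p) |
          q.2 + Q q.1 ∈ Metric.ball (0 : EuclideanSpace ℝ (Fin p)) s} := mQ measurableSet_ball
      have h3 : MeasurableSet {q : EuclideanSpace ℝ (Fin p) × EuclideanSpace ℝ (Fin p) |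
          u (q.2 + Q q.1) = u q.2} :=
        measurableSet_eq_fun (hu.comp mQ) (hu.comp measurable_snd)
      exact (h1.inter h2).inter h3.compl
    have hslice : ∀ a : EuclideanSpace ℝ (Fin p),
        (volume : Measure (EuclideanSpace ℝ (Fin p))) (Prod.mk a ⁻¹' T) = 0 := by
      intro a
      have hA := stepA (Q a) (hQ0 a) s hs
      rw [ae_iff] at hA
      refine measure_mono_null ?_ hA
      intro x hx
      simp only [hT_def, Set.mem_preimage, Set.mem_setOf_eq] at hx
      simp only [Set.mem_setOf_eq]
      intro himp
      exact hx.2 (himp hx.1)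
    have hprod : ((volume : Measure (EuclideanSpace ℝ (Fin p))).prod volume) T = 0 :=
      (MeasureTheory.Measure.measure_prod_null hT).mpr (Filter.Eventually.of_forall hslice)
    set T' : Set (EuclideanSpace ℝ (Fin p) × EuclideanSpace ℝ (Fin p)) := Prod.swap ⁻¹' T
      with hT'_def
    have hT' : MeasurableSet T' := hT.preimage measurable_swap
    have hprod' : ((volume : Measure (EuclideanSpace ℝ (Fin p))).prod volume) T' = 0 := by
      have : ((volume : Measure (EuclideanSpace ℝ (Fin p))).prod volume) T' =
          (Measure.map Prod.swap ((volume : Measure (EuclideanSpace ℝ (Fin p))).prod volume)) T := by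
        rw [Measure.map_apply measurable_swap hT]
      rw [this, Measure.prod_swap, hprod]
    have hae := (MeasureTheory.Measure.measure_prod_null hT').mp hprod'
    filter_upwards [hae] with x hx
    rw [ae_iff]
    refine measure_mono_null ?_ hx
    intro w hw
    simp only [Set.mem_setOf_eq] at hw
    simp only [hT'_def, hT_def, Set.mem_preimage, Prod.swap_prod_mk, Set.mem_setOf_eq]
    push_neg at hw
    exact ⟨hw.1, hw.2⟩
  -- Step C: construction of the averaged function for each radius s < r
  have key : ∀ s : ℝ, 0 < s → s < r →
      ∃ φ : EuclideanSpace ℝ (Fin p) → ℝ, Measurable φ ∧ (∀ z, φ (R z) = φ z) ∧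
        ∀ᵐ x ∂(volume : Measure (EuclideanSpace ℝ (Fin p))),
          x ∈ Metric.ball (0 : EuclideanSpace ℝ (Fin p)) s → φ x = Real.arctan (u x) := by
    intro s hs0 hsr
    classical
    set S : Set (EuclideanSpace ℝ (Fin p) × EuclideanSpace ℝ (Fin p)) :=
      {q | ‖R q.1 + Q q.2‖ < s ∧ ‖R q.2 - R q.1‖ < 1} with hS_def
    have hSopen : IsOpen S := by
      have c1 : Continuous fun q : EuclideanSpace ℝ (Fin p) × EuclideanSpace ℝ (Fin p) =>
          ‖R q.1 + Q q.2‖ :=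
        ((R.continuous.comp continuous_fst).add (Q.continuous.comp continuous_snd)).norm
      have c2 : Continuous fun q : EuclideanSpace ℝ (Fin p) × EuclideanSpace ℝ (Fin p) =>
          ‖R q.2 - R q.1‖ :=
        ((R.continuous.comp continuous_snd).sub (R.continuous.comp continuous_fst)).norm
      exact (isOpen_lt c1 continuous_const).inter (isOpen_lt c2 continuous_const)
    have hSmeas : MeasurableSet S := hSopen.measurableSet
    set Ψ : EuclideanSpace ℝ (Fin p) × EuclideanSpace ℝ (Fin p) → ℝ :=
      S.indicator (fun q => Real.arctan (u (R q.1 + Q q.2))) with hPsi_def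
    have hΨm : Measurable Ψ := by
      refine Measurable.indicator ?_ hSmeas
      exact Real.measurable_arctan.comp (hu.comp
        ((R.continuous.comp continuous_fst).add (Q.continuous.comp continuous_snd)).measurable)
    set I : EuclideanSpace ℝ (Fin p) → ℝ := fun z => ∫ v', Ψ (z, v') with hI_def
    have hImeas : Measurable I := hΨm.stronglyMeasurable.integral_prod_right'.measurable
    set Vol : EuclideanSpace ℝ (Fin p) → ℝ≥0∞ :=
      fun z => volume {v' : EuclideanSpace ℝ (Fin p) | (z, v') ∈ S} with hVol_def
    have hVolmeas : Measurable Vol := by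
      have h1 : ∀ z, Vol z = ∫⁻ v', S.indicator (fun _ => (1 : ℝ≥0∞)) (z, v') := by
        intro z
        have hsl : MeasurableSet {v' : EuclideanSpace ℝ (Fin p) | (z, v') ∈ S} :=
          hSmeas.preimage measurable_prodMk_left
        have h2 : ∀ v' : EuclideanSpace ℝ (Fin p),
            S.indicator (fun _ => (1 : ℝ≥0∞)) (z, v') =
            Set.indicator {v' : EuclideanSpace ℝ (Fin p) | (z, v') ∈ S}
              (fun _ => (1 : ℝ≥0∞)) v' := by
          intro v'
          simp only [Set.indicator_apply, Set.mem_setOf_eq]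
        simp_rw [h2]
        rw [lintegral_indicator hsl, setLIntegral_one]
      have h2 : Measurable fun q : EuclideanSpace ℝ (Fin p) × EuclideanSpace ℝ (Fin p) =>
          S.indicator (fun _ => (1 : ℝ≥0∞)) q := measurable_const.indicator hSmeas
      have h3 := Measurable.lintegral_prod_right'
        (ν := (volume : Measure (EuclideanSpace ℝ (Fin p)))) h2
      simpa [← h1] using h3
    refine ⟨fun z => I z / (Vol z).toReal, hImeas.div hVolmeas.ennreal_toReal, ?_, ?_⟩
    · intro z
      have hSRz : ∀ v', ((R z, v') ∈ S) ↔ ((z, v') ∈ S) := by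
        intro v'
        simp only [hS_def, Set.mem_setOf_eq, hRR z]
    
      have hΨRz : ∀ v', Ψ (R z, v') = Ψ (z, v') := by
        intro v'
        simp only [hPsi_def, Set.indicator_apply, hS_def, Set.mem_setOf_eq, hRR z]
      have hIRz : I (R z) = I z := by
        simp only [hI_def]
        exact integral_congr_ae (Filter.Eventually.of_forall hΨRz)
      have hVolRz : Vol (R z) = Vol z := by
        simp only [hVol_def]
        congr 1
        ext v'
        exact hSRz v'
      simp only [hIRz, hVolRz]
    · filter_upwards [stepB s hsr] with x haex hxball
      have hxnorm : ‖x‖ < s := mem_ball_zero_iff.mp hxball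
      set A' : Set (EuclideanSpace ℝ (Fin p)) := {t | ‖x + Q t‖ < s ∧ ‖R t‖ < 1} with hA'_def
      have hA'open : IsOpen A' := by
        have c1 : Continuous fun t : EuclideanSpace ℝ (Fin p) => ‖x + Q t‖ :=
          (continuous_const.add Q.continuous).norm
        have c2 : Continuous fun t : EuclideanSpace ℝ (Fin p) => ‖R t‖ := R.continuous.norm
        exact (isOpen_lt c1 continuous_const).inter (isOpen_lt c2 continuous_const)
      have hA'meas : MeasurableSet A' := hA'open.measurableSet
      have hA'ne : (0 : EuclideanSpace ℝ (Fin p)) ∈ A' := by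
        simp only [hA'_def, Set.mem_setOf_eq, map_zero, add_zero, norm_zero]
        exact ⟨hxnorm, one_pos⟩
      have hA'pos : 0 < volume A' := hA'open.measure_pos volume ⟨0, hA'ne⟩
      have hA'fin : volume A' < ⊤ := by
        refine lt_of_le_of_lt (measure_mono ?_)
          (measure_ball_lt_top (x := (0 : EuclideanSpace ℝ (Fin p))) (r := 2 * s + 1))
        intro t ht
        obtain ⟨h1, h2⟩ := ht
        have hdec : R t + Q t = t := by rw [hQapp]; abel
        have hQt : ‖Q t‖ ≤ ‖x + Q t‖ + ‖x‖ := by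
          have h0 := norm_sub_le (x + Q t) x
          rwa [add_sub_cancel_left] at h0
        have htt : ‖t‖ ≤ ‖R t‖ + ‖Q t‖ := by
          conv_lhs => rw [← hdec]
          exact norm_add_le _ _
        rw [mem_ball_zero_iff]
        linarith
      have veq : ∀ v' : EuclideanSpace ℝ (Fin p), x + Q (v' - x) = R x + Q v' := by
        intro v'
        simp only [hQapp, map_sub]
        abel
      have hmem_iff : ∀ v' : EuclideanSpace ℝ (Fin p), ((x, v') ∈ S) ↔ (v' - x ∈ A') := by
        intro v'
        simp only [hS_def, hA'_def, Set.mem_setOf_eq]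
        rw [veq v', map_sub]
      have htrans : ∀ v' : EuclideanSpace ℝ (Fin p), Ψ (x, v') =
          A'.indicator (fun t => Real.arctan (u (x + Q t))) (v' - x) := by
        intro v'
        by_cases hcase : (x, v') ∈ S
        · rw [hPsi_def, Set.indicator_of_mem hcase,
            Set.indicator_of_mem ((hmem_iff v').mp hcase)]
          rw [veq v']
        · rw [hPsi_def, Set.indicator_of_notMem hcase,
            Set.indicator_of_notMem (fun hc => hcase ((hmem_iff v').mpr hc))]
      have hI1 : I x = ∫ t in A', Real.arctan (u (x + Q t)) ∂volume := by
        calc I x = ∫ v', A'.indicator (fun t => Real.arctan (u (x + Q t))) (v' - x) := by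
              simp only [hI_def]
              exact integral_congr_ae (Filter.Eventually.of_forall htrans)
          _ = ∫ t, A'.indicator (fun t => Real.arctan (u (x + Q t))) t :=
              integral_sub_right_eq_self _ x
          _ = ∫ t in A', Real.arctan (u (x + Q t)) ∂volume := integral_indicator hA'meas
      have hI2 : ∫ t in A', Real.arctan (u (x + Q t)) ∂volume =
          (volume A').toReal • Real.arctan (u x) := by
        rw [setIntegral_congr_ae hA'meas ?_, setIntegral_const]
        · rfl
        filter_upwards [haex] with t ht hmem
        rw [ht ⟨hxball, mem_ball_zero_iff.mpr hmem.1⟩]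
      have hVolx : Vol x = volume A' := by
        have hset : {v' : EuclideanSpace ℝ (Fin p) | (x, v') ∈ S} =
            (fun v' => v' - x) ⁻¹' A' := by
          ext v'
          simp only [Set.mem_setOf_eq, Set.mem_preimage]
          exact hmem_iff v'
        rw [hVol_def]
        simp only [hset]
        exact (measurePreserving_sub_right volume x).measure_preimage
          hA'meas.nullMeasurableSet
      have hne : (volume A').toReal ≠ 0 :=
        (ENNReal.toReal_pos hA'pos.ne' hA'fin.ne).ne'
      show I x / (Vol x).toReal = Real.arctan (u x)
      rw [hI1, hI2, hVolx, smul_eq_mul, mul_comm, mul_div_assoc, div_self hne, mul_one]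
  -- Assembly
  set sn : ℕ → ℝ := fun n => r - r / (n + 2) with hsn_def
  have hsn0 : ∀ n, 0 < sn n := by
    intro n
    have h1 : r / ((n : ℝ) + 2) < r := by
      apply div_lt_self hr
      have : (0 : ℝ) ≤ (n : ℝ) := Nat.cast_nonneg n
      linarith
    simp only [hsn_def]
    linarith
  have hsnr : ∀ n, sn n < r := by
    intro n
    have : 0 < r / ((n : ℝ) + 2) := by positivity
    simp only [hsn_def]
    linarith
  choose Φ hΦm hΦR hΦae using fun n => key (sn n) (hsn0 n) (hsnr n)
  refine ⟨fun z => Real.tan ((Filter.limsup (fun n => ((Φ n z : ℝ) : EReal))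
    Filter.atTop).toReal), ?_, ?_⟩
  · have m1 : Measurable fun z => Filter.limsup
        (fun n => ((Φ n z : ℝ) : EReal)) Filter.atTop :=
      Measurable.limsup (fun n => measurable_coe_real_ereal.comp (hΦm n))
    exact aux_measurable_tan.comp m1.ereal_toReal
  · rw [ae_restrict_iff' measurableSet_ball]
    have hall : ∀ᵐ x ∂(volume : Measure (EuclideanSpace ℝ (Fin p))), ∀ n : ℕ,
        x ∈ Metric.ball (0 : EuclideanSpace ℝ (Fin p)) (sn n) → Φ n x = Real.arctan (u x) :=
      ae_all_iff.mpr hΦae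
    filter_upwards [hall] with x hx hxr
    have hxr' : ‖x‖ < r := mem_ball_zero_iff.mp hxr
    have hrx : 0 < r - ‖x‖ := by linarith
    obtain ⟨N, hN⟩ := exists_nat_gt (r / (r - ‖x‖))
    have hev : ∀ n, N ≤ n → Φ n x = Real.arctan (u x) := by
      intro n hn
      apply hx n
      rw [mem_ball_zero_iff]
      have hcast : r / (r - ‖x‖) < (n : ℝ) + 2 := by
        have : (N : ℝ) ≤ (n : ℝ) := Nat.cast_le.mpr hn
        linarith
      have h2 : r / ((n : ℝ) + 2) < r - ‖x‖ := by
        rw [div_lt_iff₀ (by positivity)]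
        calc r = r / (r - ‖x‖) * (r - ‖x‖) := by field_simp
          _ < ((n : ℝ) + 2) * (r - ‖x‖) := mul_lt_mul_of_pos_right hcast hrx
          _ = (r - ‖x‖) * ((n : ℝ) + 2) := mul_comm _ _
      simp only [hsn_def]
      linarith
    have heq : (fun n => ((Φ n x : ℝ) : EReal)) =ᶠ[Filter.atTop]
        (fun _ => ((Real.arctan (u x) : ℝ) : EReal)) := by
      rw [Filter.eventuallyEq_iff_exists_mem]
      refine ⟨{n | N ≤ n}, Filter.mem_atTop N, fun n hn => ?_⟩
      show ((Φ n x : ℝ) : EReal) = ((Real.arctan (u x) : ℝ) : EReal)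
      rw [hev n hn]
    have hlim : Filter.limsup (fun n => ((Φ n x : ℝ) : EReal)) Filter.atTop =
        ((Real.arctan (u x) : ℝ) : EReal) := by
      rw [Filter.limsup_congr heq, Filter.limsup_const]
    have hΦRx : (fun n => ((Φ n (R x) : ℝ) : EReal)) = fun n => ((Φ n x : ℝ) : EReal) := by
      funext n
      rw [hΦR n x]
    show u x = Real.tan ((Filter.limsup (fun n => ((Φ n (R x) : ℝ) : EReal))
      Filter.atTop).toReal)
    rw [hΦRx, hlim]
    rw [EReal.toReal_coe, Real.tan_arctan]
end

section
/- Let X be a random vector in R^p whose distribution has a density (with respect to Lebesgue measure) whose support F satisfies: the boundary of F has Lebesgue measure zero. Suppose also that for any two subspaces E, E' with orthogonal projections P, P' satisfying E[Y|X] = E[Y|PX] = E[Y|P'X] a.s., the restriction argument of Lemma 1 applies on every ball in the interior of F. Then the intersection of all mean dimension reduction subspaces is itself a mean dimension reduction subspace; consequently there is a unique MDRS of minimal dimension (the central mean subspace exists). -/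
open MeasureTheory

/-- The orthogonal projection of the ambient space onto a subspace `E`, as a map of the whole
space. -/
noncomputable def projCLM (p : ℕ) (E : Submodule ℝ (EuclideanSpace ℝ (Fin p))) :
    EuclideanSpace ℝ (Fin p) →L[ℝ] EuclideanSpace ℝ (Fin p) :=
  E.subtypeL ∘L E.orthogonalProjectionOnto

/-- `E` is a mean dimension reduction subspace: `E[Y|X] = E[Y|P_E X]` a.s. -/
def IsMDRS {Ω : Type*} (mΩ : MeasurableSpace Ω) (μ : @MeasureTheory.Measure Ω mΩ)
    {p : ℕ} (X : Ω → EuclideanSpace ℝ (Fin p)) (Y : Ω → ℝ)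
    (E : Submodule ℝ (EuclideanSpace ℝ (Fin p))) : Prop :=
  μ[Y | MeasurableSpace.comap X inferInstance]
    =ᵐ[μ] μ[Y | MeasurableSpace.comap (fun ω => projCLM p E (X ω)) inferInstance]

lemma projCLM_top (p : ℕ) (x : EuclideanSpace ℝ (Fin p)) :
    projCLM p ⊤ x = x := by
  exact Submodule.starProjection_eq_self_iff.2 (Submodule.mem_top (x := x))

lemma isMDRS_top {Ω : Type*} (mΩ : MeasurableSpace Ω) (μ : @MeasureTheory.Measure Ω mΩ)
    {p : ℕ} (X : Ω → EuclideanSpace ℝ (Fin p)) (Y : Ω → ℝ) :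
    IsMDRS mΩ μ X Y ⊤ := by
  unfold IsMDRS
  have h : (fun ω => projCLM p ⊤ (X ω)) = X := funext fun ω => projCLM_top p (X ω)
  rw [h]

/-- Existence of the central mean subspace: if `X` has a density whose support has
Lebesgue-null boundary, and the restriction argument of Lemma 1 is available on every ball of
the interior of the support, then the intersection of all mean dimension reduction subspaces is
itself an MDRS, and there is a unique MDRS of minimal dimension. -/
theorem central_mean_subspace_exists
    {Ω : Type*} [mΩ : MeasurableSpace Ω] (μ : Measure Ω) [IsProbabilityMeasure μ]
    (p : ℕ) (X : Ω → EuclideanSpace ℝ (Fin p)) (hXmeas : Measurable X)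
    (Y : Ω → ℝ) (hYint : Integrable Y μ)
    -- `X` has density `f` with respect to Lebesgue measure
    (f : EuclideanSpace ℝ (Fin p) → ℝ) (hfmeas : Measurable f) (hfnn : ∀ x, 0 ≤ f x)
    (hf : Measure.map X μ = volume.withDensity fun x => ENNReal.ofReal (f x))
    -- the boundary of the support `F` of the density is Lebesgue-null
    (hbd : volume (frontier (closure (Function.support f))) = 0)
    -- Lemma 1 applies on every ball contained in the interior of `F`
    (hlem : ∀ E E' : Submodule ℝ (EuclideanSpace ℝ (Fin p)),
      IsMDRS mΩ μ X Y E → IsMDRS mΩ μ X Y E' →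
      ∀ (x₀ : EuclideanSpace ℝ (Fin p)) (r : ℝ), 0 < r →
        Metric.ball x₀ r ⊆ interior (closure (Function.support f)) →
        ∀ᵐ ω ∂μ, X ω ∈ Metric.ball x₀ r →
          (μ[Y | MeasurableSpace.comap X inferInstance]) ω =
            (μ[Y | MeasurableSpace.comap
                (fun ω' => projCLM p (E ⊓ E') (X ω')) inferInstance]) ω) :
    IsMDRS mΩ μ X Y (sInf {E | IsMDRS mΩ μ X Y E}) ∧
      ∃! E : Submodule ℝ (EuclideanSpace ℝ (Fin p)),
        IsMDRS mΩ μ X Y E ∧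
          ∀ E' : Submodule ℝ (EuclideanSpace ℝ (Fin p)),
            IsMDRS mΩ μ X Y E' → Module.finrank ℝ E ≤ Module.finrank ℝ E' := by
  classical
  set F : Set (EuclideanSpace ℝ (Fin p)) := closure (Function.support f) with hFdef
  set U : Set (EuclideanSpace ℝ (Fin p)) := interior F with hUdef
  have hUopen : IsOpen U := isOpen_interior
  -- `X ∈ U` almost surely
  have hXU : ∀ᵐ ω ∂μ, X ω ∈ U := by
    rw [ae_iff]
    have hset : {ω | ¬ X ω ∈ U} = X ⁻¹' Uᶜ := rfl
    have hmeasU : MeasurableSet Uᶜ := hUopen.measurableSet.compl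
    rw [hset, ← Measure.map_apply hXmeas hmeasU, hf]
    have hsub : Uᶜ ⊆ Fᶜ ∪ frontier F := by
      intro x hx
      by_cases hxF : x ∈ F
      · exact Or.inr ⟨subset_closure hxF, hx⟩
      · exact Or.inl hxF
    refine le_antisymm (le_trans (measure_mono hsub) ?_) (zero_le)
    refine le_trans (measure_union_le _ _) ?_
    have hFc : MeasurableSet Fᶜ := isClosed_closure.measurableSet.compl
    have h1 : (volume.withDensity fun x => ENNReal.ofReal (f x)) Fᶜ = 0 := by
      rw [withDensity_apply _ hFc]
      rw [lintegral_eq_zero_iff hfmeas.ennreal_ofReal]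
      refine (ae_restrict_iff' hFc).2 (Filter.Eventually.of_forall fun x hx => ?_)
      have hfx : f x = 0 := by
        by_contra hne
        exact hx (subset_closure (Function.mem_support.2 hne))
      simp [hfx]
    have h2 : (volume.withDensity fun x => ENNReal.ofReal (f x)) (frontier F) = 0 :=
      (withDensity_absolutelyContinuous volume _) hbd
    rw [h1, h2]
    simp
  -- key: the intersection of two MDRS is an MDRS
  have key : ∀ E E' : Submodule ℝ (EuclideanSpace ℝ (Fin p)),
      IsMDRS mΩ μ X Y E → IsMDRS mΩ μ X Y E' → IsMDRS mΩ μ X Y (E ⊓ E') := by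
    intro E E' hE hE'
    have hball : ∀ x : U, ∃ r : ℝ, 0 < r ∧ Metric.ball (x : EuclideanSpace ℝ (Fin p)) r ⊆ U :=
      fun x => Metric.isOpen_iff.1 hUopen x x.2
    choose r hr hrU using hball
    obtain ⟨T, hTc, hTU⟩ := TopologicalSpace.isOpen_iUnion_countable
      (fun x : U => Metric.ball (x : EuclideanSpace ℝ (Fin p)) (r x))
      (fun x => Metric.isOpen_ball)
    have hUeq : (⋃ x : U, Metric.ball (x : EuclideanSpace ℝ (Fin p)) (r x)) = U := by
      refine Set.Subset.antisymm (Set.iUnion_subset fun x => hrU x) fun y hy => ?_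
      exact Set.mem_iUnion.2 ⟨⟨y, hy⟩, Metric.mem_ball_self (hr _)⟩
    have hae : ∀ i ∈ T, ∀ᵐ ω ∂μ,
        X ω ∈ Metric.ball (i : EuclideanSpace ℝ (Fin p)) (r i) →
          (μ[Y | MeasurableSpace.comap X inferInstance]) ω =
            (μ[Y | MeasurableSpace.comap
                (fun ω' => projCLM p (E ⊓ E') (X ω')) inferInstance]) ω :=
      fun i _ => hlem E E' hE hE' i (r i) (hr i) (hrU i)
    have hae' := (ae_ball_iff hTc).2 hae
    filter_upwards [hae', hXU] with ω h1 h2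
    have hmem : X ω ∈ ⋃ i ∈ T, Metric.ball (i : EuclideanSpace ℝ (Fin p)) (r i) := by
      rw [hTU, hUeq]; exact h2
    obtain ⟨i, hiT, hballmem⟩ := Set.mem_iUnion₂.1 hmem
    exact h1 i hiT hballmem
  -- the set of MDRS's
  set S : Set (Submodule ℝ (EuclideanSpace ℝ (Fin p))) := {E | IsMDRS mΩ μ X Y E} with hSdef
  have htopS : (⊤ : Submodule ℝ (EuclideanSpace ℝ (Fin p))) ∈ S := isMDRS_top mΩ μ X Y
  -- pick an MDRS of minimal finrank
  have hne : {n | ∃ E ∈ S, Module.finrank ℝ E = n}.Nonempty :=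
    ⟨Module.finrank ℝ (⊤ : Submodule ℝ (EuclideanSpace ℝ (Fin p))), ⊤, htopS, rfl⟩
  obtain ⟨E₀, hE₀S, hE₀rk⟩ := Nat.sInf_mem hne
  have hminrk : ∀ E ∈ S, Module.finrank ℝ E₀ ≤ Module.finrank ℝ E := by
    intro E hES
    rw [hE₀rk]
    exact Nat.sInf_le ⟨E, hES, rfl⟩
  have hE₀le : ∀ E ∈ S, E₀ ≤ E := by
    intro E hES
    have hinf : E₀ ⊓ E ∈ S := key E₀ E hE₀S hES
    have h1 : Module.finrank ℝ E₀ ≤ Module.finrank ℝ ↥(E₀ ⊓ E) := hminrk _ hinf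
    have h2 : E₀ ⊓ E = E₀ := Submodule.eq_of_le_of_finrank_le inf_le_left h1
    exact inf_eq_left.1 h2
  have hsInf : sInf S = E₀ :=
    le_antisymm (sInf_le hE₀S) (le_sInf hE₀le)
  constructor
  · rw [hsInf]; exact hE₀S
  · refine ⟨E₀, ⟨hE₀S, fun E' hE' => hminrk E' hE'⟩, ?_⟩
    rintro E ⟨hES, hEmin⟩
    have h1 : E₀ ≤ E := hE₀le E hES
    have h2 : Module.finrank ℝ E ≤ Module.finrank ℝ E₀ := hEmin E₀ hE₀S
    exact (Submodule.eq_of_le_of_finrank_le h1 h2).symm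
end
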